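/- arXiv:2001.03252 — 5 statements merged into one kernel-verified Lean document; each statement's English description precedes it below -/
import Mathlib

section
/- Let P be a set of 2n distinct points in the Euclidean plane in general position. For distinct v, w ∈ P, the edge {v,w} is infeasible (i.e., contained in no perfect non-crossing matching of P) if and only if (1) both v and w are vertices of the convex hull of P, and (2) the number of points of P lying strictly on each of the two open sides of the line through v and w is odd. -/
noncomputable section

/-- The Euclidean plane. -/
abbrev Pt : Type := EuclideanSpace ℝ (Fin 2)

/-- The determinant of two plane vectors (twice the signed area). -/
def det2 (u v : Pt) : ℝ := u 0 * v 1 - u 1 * v 0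

/-- `P` is in general position: no three (distinct) points of `P` are collinear. -/
def GenPos (P : Finset Pt) : Prop :=
  ∀ a ∈ P, ∀ b ∈ P, ∀ c ∈ P, a ≠ b → a ≠ c → b ≠ c → ¬ Collinear ℝ ({a, b, c} : Set Pt)

/-- `m` encodes a perfect non-crossing matching of the point set `P`: it is a fixed-point free
involution of `P`, and the closed segments induced by two distinct edges are disjoint. -/
def IsNCMatching (P : Finset Pt) (m : Pt → Pt) : Prop :=
  (∀ p ∈ P, m p ∈ P) ∧ (∀ p ∈ P, m (m p) = p) ∧ (∀ p ∈ P, m p ≠ p) ∧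
  (∀ p ∈ P, ∀ q ∈ P, q ≠ p → q ≠ m p →
    segment ℝ p (m p) ∩ segment ℝ q (m q) = ∅)

/-- The edge `{v, w}` is feasible: some perfect non-crossing matching of `P` contains it. -/
def Feasible (P : Finset Pt) (v w : Pt) : Prop :=
  ∃ m : Pt → Pt, IsNCMatching P m ∧ m v = w

open Classical

/- ### helper lemmas -/

lemma ssymm (x y : Pt) : segment ℝ x y = segment ℝ y x := segment_symm ℝ x y

lemma exists_smul_of_det2 (u x : Pt) (hu : u ≠ 0) (h : det2 u x = 0) : ∃ t : ℝ, x = t • u := by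
  have h01 : u 0 ≠ 0 ∨ u 1 ≠ 0 := by
    by_contra hc
    push_neg at hc
    apply hu
    ext i; fin_cases i <;> simp [hc.1, hc.2]
  rcases h01 with h0 | h1
  · refine ⟨x 0 / u 0, ?_⟩
    ext i; fin_cases i
    · simp; field_simp
    · simp [det2] at h ⊢; field_simp; nlinarith [h]
  · refine ⟨x 1 / u 1, ?_⟩
    ext i; fin_cases i
    · simp [det2] at h ⊢; field_simp; nlinarith [h]
    · simp; field_simp

lemma collinear_of_det2_zero (a b c : Pt) (h : det2 (b - a) (c - a) = 0) :
    Collinear ℝ ({a, b, c} : Set Pt) := by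
  by_cases hab : b = a
  · exact Collinear.subset (by rw [hab]; intro x hx; simp at hx ⊢; tauto) (collinear_pair ℝ a c)
  · obtain ⟨t, ht⟩ := exists_smul_of_det2 (b - a) (c - a) (sub_ne_zero.mpr hab) h
    rw [collinear_iff_of_mem (Set.mem_insert a {b, c})]
    refine ⟨b - a, fun p hp => ?_⟩
    rcases hp with rfl | rfl | rfl
    · exact ⟨0, by simp⟩
    · exact ⟨1, by simp⟩
    · exact ⟨t, by rw [vadd_eq_add, ← ht, sub_add_cancel]⟩

lemma det2_seg (u vv p q z : Pt) (c d : ℝ) (hcd : c + d = 1) (hz : c • p + d • q = z) :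
    det2 u (z - vv) = c * det2 u (p - vv) + d * det2 u (q - vv) := by
  have hd : d = 1 - c := by linarith
  subst hd; subst hz; simp [det2]; ring

lemma mem_seg {p q z : Pt} (h : z ∈ segment ℝ p q) :
    ∃ c d : ℝ, 0 ≤ c ∧ 0 ≤ d ∧ c + d = 1 ∧ c • p + d • q = z := h

lemma seg_disj (u vv p q r s : Pt) (h1 : det2 u (p - vv) ≤ 0) (h2 : det2 u (q - vv) ≤ 0)
    (h3 : 0 < det2 u (r - vv)) (h4 : 0 < det2 u (s - vv)) :
    segment ℝ p q ∩ segment ℝ r s = ∅ := by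
  ext z
  simp only [Set.mem_inter_iff, Set.mem_empty_iff_false, iff_false, not_and]
  intro hz1 hz2
  obtain ⟨c, d, hc, hd, hcd, hzc⟩ := mem_seg hz1
  obtain ⟨c', d', hc', hd', hcd', hzc'⟩ := mem_seg hz2
  have e1 := det2_seg u vv p q z c d hcd hzc
  have e2 := det2_seg u vv r s z c' d' hcd' hzc'
  have hle : det2 u (z - vv) ≤ 0 := by nlinarith
  have hlt : 0 < det2 u (z - vv) := by
    rcases eq_or_lt_of_le hc' with h | h
    · have : d' = 1 := by linarith
      nlinarith
    · nlinarith
  linarith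

lemma seg_vw_disj_cross (v w a b : Pt)
    (hb : det2 (w - v) (b - v) < 0)
    (hcross : 0 < det2 (a - v) (b - v)) :
    segment ℝ v w ∩ segment ℝ a b = ∅ := by
  ext z
  simp only [Set.mem_inter_iff, Set.mem_empty_iff_false, iff_false, not_and]
  intro hz1 hz2
  obtain ⟨c, d, hc, hd, hcd, hzc⟩ := mem_seg hz1
  obtain ⟨α, β, hα, hβ, hαβ, hzα⟩ := mem_seg hz2
  have eg : det2 (w - v) (z - v) = 0 := by
    have hd' : d = 1 - c := by linarith
    subst hd'; subst hzc; simp [det2]; ring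
  have eg2 : α * det2 (w - v) (a - v) + β * det2 (w - v) (b - v) = 0 := by
    rw [← det2_seg (w - v) v a b z α β hαβ hzα]; exact eg
  have f1 : det2 (b - v) (z - v) = c * det2 (b - v) (v - v) + d * det2 (b - v) (w - v) :=
    det2_seg (b - v) v v w z c d hcd hzc
  have f2 : det2 (b - v) (z - v) = α * det2 (b - v) (a - v) + β * det2 (b - v) (b - v) :=
    det2_seg (b - v) v a b z α β hαβ hzα
  have f3 : det2 (b - v) (v - v) = 0 := by simp [det2]
  have f4 : det2 (b - v) (b - v) = 0 := by simp [det2]; ring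
  have f5 : det2 (b - v) (w - v) = - det2 (w - v) (b - v) := by simp [det2]; ring
  have f6 : det2 (b - v) (a - v) = - det2 (a - v) (b - v) := by simp [det2]; ring
  have key : α * det2 (a - v) (b - v) = d * det2 (w - v) (b - v) := by
    have := f1.symm.trans f2
    rw [f3, f4, f5, f6] at this
    nlinarith [this]
  have hα0 : α = 0 := by nlinarith
  have hβ1 : β = 1 := by linarith
  rw [hα0, hβ1] at eg2
  nlinarith

lemma even_card_invol : ∀ (k : ℕ) (S : Finset Pt) (m : Pt → Pt), S.card = k →
    (∀ p ∈ S, m p ∈ S) → (∀ p ∈ S, m (m p) = p) → (∀ p ∈ S, m p ≠ p) → Even S.card := by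
  intro k
  induction k using Nat.strong_induction_on with
  | _ k ih =>
    intro S m hk h1 h2 h3
    rcases S.eq_empty_or_nonempty with rfl | ⟨p, hp⟩
    · simp
    · have hmp : m p ∈ S := h1 p hp
      have hne : m p ≠ p := h3 p hp
      set S' := (S.erase p).erase (m p) with hS'
      have hcard : S'.card = k - 2 := by
        rw [hS', Finset.card_erase_of_mem (Finset.mem_erase.mpr ⟨hne, hmp⟩),
          Finset.card_erase_of_mem hp, hk]
        omega
      have hmem : ∀ q, q ∈ S' ↔ q ∈ S ∧ q ≠ p ∧ q ≠ m p := by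
        intro q
        simp [hS', Finset.mem_erase]
        tauto
      have hsub : ∀ q ∈ S', m q ∈ S' := by
        intro q hq
        rw [hmem] at hq ⊢
        obtain ⟨hqS, hqp, hqmp⟩ := hq
        refine ⟨h1 q hqS, ?_, ?_⟩
        · intro h; exact hqmp ((h2 q hqS).symm.trans (congrArg m h))
        · intro h; exact hqp (((h2 q hqS).symm.trans (congrArg m h)).trans (h2 p hp))
      have h2' : ∀ q ∈ S', m (m q) = q := fun q hq => h2 q ((hmem q).mp hq).1
      have h3' : ∀ q ∈ S', m q ≠ q := fun q hq => h3 q ((hmem q).mp hq).1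
      have hk2 : k - 2 < k := by
        have : 1 ≤ k := by
          rw [← hk]; exact Finset.card_pos.mpr ⟨p, hp⟩
        omega
      have he := ih (k - 2) hk2 S' m hcard hsub h2' h3'
      rw [hcard] at he
      have hk2' : 2 ≤ k := by
        have h1' : (S.erase p).card = k - 1 := by rw [Finset.card_erase_of_mem hp, hk]
        have h2'' : 1 ≤ (S.erase p).card :=
          Finset.card_pos.mpr ⟨m p, Finset.mem_erase.mpr ⟨hne, hmp⟩⟩
        omega
      rw [hk]
      obtain ⟨j, hj⟩ := he
      exact ⟨j + 1, by omega⟩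


/-- Partial non-crossing matching data. -/
def PartialNC (S : Finset Pt) (m : Pt → Pt) : Prop :=
  (∀ p ∈ S, m p ∈ S) ∧ (∀ p ∈ S, m (m p) = p) ∧ (∀ p ∈ S, m p ≠ p) ∧
  (∀ p, p ∉ S → m p = p) ∧
  (∀ p ∈ S, ∀ q ∈ S, q ≠ p → q ≠ m p →
    segment ℝ p (m p) ∩ segment ℝ q (m q) = ∅)



lemma exists_matching_of_key (κ : Pt → ℝ) : ∀ (k : ℕ) (S : Finset Pt), S.card = k → Even k →
    (∀ p ∈ S, ∀ q ∈ S, κ p = κ q → p = q) →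
    (∀ p ∈ S, ∀ q ∈ S, ∀ r ∈ S, ∀ s ∈ S, κ p < κ q → κ q < κ r → κ q < κ s →
      segment ℝ p q ∩ segment ℝ r s = ∅) →
    ∃ m : Pt → Pt, PartialNC S m := by
  intro k
  induction k using Nat.strong_induction_on with
  | _ k ih =>
    intro S hk hke hinj hdisj
    rcases S.eq_empty_or_nonempty with rfl | hne
    · exact ⟨id, by simp [PartialNC]⟩
    obtain ⟨t1, ht1S, ht1max⟩ := S.exists_max_image κ hne
    have hk2 : 2 ≤ k := by
      rcases hke with ⟨j, hj⟩
      have : 1 ≤ k := hk ▸ Finset.card_pos.mpr hne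
      omega
    have hS1ne : (S.erase t1).Nonempty := by
      rw [← Finset.card_pos, Finset.card_erase_of_mem ht1S, hk]; omega
    obtain ⟨t2, ht2S1, ht2max⟩ := (S.erase t1).exists_max_image κ hS1ne
    have ht2S : t2 ∈ S := Finset.mem_of_mem_erase ht2S1
    have ht21 : t2 ≠ t1 := (Finset.mem_erase.mp ht2S1).1
    set S2 := (S.erase t1).erase t2 with hS2def
    have hmemS2 : ∀ q, q ∈ S2 ↔ q ∈ S ∧ q ≠ t1 ∧ q ≠ t2 := by
      intro q; simp [hS2def, Finset.mem_erase]; tauto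
    have hS2sub : ∀ q ∈ S2, q ∈ S := fun q hq => ((hmemS2 q).mp hq).1
    have hcard2 : S2.card = k - 2 := by
      rw [hS2def, Finset.card_erase_of_mem ht2S1, Finset.card_erase_of_mem ht1S, hk]
      omega
    have hlt1 : ∀ q ∈ S2, κ q < κ t2 := by
      intro q hq
      rcases (hmemS2 q).mp hq with ⟨hqS, hq1, hq2⟩
      rcases lt_or_eq_of_le (ht2max q (Finset.mem_erase.mpr ⟨hq1, hqS⟩)) with h | h
      · exact h
      · exact absurd (hinj q hqS t2 ht2S h) hq2
    have hlt2 : κ t2 < κ t1 := by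
      rcases lt_or_eq_of_le (ht1max t2 ht2S) with h | h
      · exact h
      · exact absurd (hinj t2 ht2S t1 ht1S h) ht21
    obtain ⟨m', hm1, hm2, hm3, hm4, hm5⟩ := ih (k - 2) (by omega) S2 hcard2
      (by rcases hke with ⟨j, hj⟩; exact ⟨j - 1, by omega⟩)
      (fun p hp q hq => hinj p (hS2sub p hp) q (hS2sub q hq))
      (fun p hp q hq r hr s hs => hdisj p (hS2sub p hp) q (hS2sub q hq) r (hS2sub r hr)
        s (hS2sub s hs))
    have hpair : ∀ q ∈ S2, segment ℝ t1 t2 ∩ segment ℝ q (m' q) = ∅ := by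
      intro q hq
      have hq' : m' q ∈ S2 := hm1 q hq
      have hqne : m' q ≠ q := hm3 q hq
      have key : ∀ x ∈ S2, ∀ y ∈ S2, κ x < κ y →
          segment ℝ t1 t2 ∩ segment ℝ x y = ∅ := by
        intro x hx y hy hxy
        rw [Set.inter_comm, ssymm t1 t2]
        exact hdisj x (hS2sub x hx) y (hS2sub y hy) t2 ht2S t1 ht1S hxy
          (hlt1 y hy) (lt_trans (hlt1 y hy) hlt2)
      rcases lt_or_gt_of_ne
        (fun h => hqne (hinj (m' q) (hS2sub _ hq') q (hS2sub _ hq) h)) with h | h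
      · rw [ssymm q (m' q)]
        exact key (m' q) hq' q hq h
      · exact key q hq (m' q) hq' h
    set m : Pt → Pt := fun p => if p = t1 then t2 else if p = t2 then t1 else m' p with hmdef
    have hv1 : m t1 = t2 := by simp [hmdef]
    have hv2 : m t2 = t1 := by simp [hmdef, ht21]
    have hv3 : ∀ p, p ≠ t1 → p ≠ t2 → m p = m' p := by
      intro p h1 h2; simp [hmdef, h1, h2]
    refine ⟨m, ?_, ?_, ?_, ?_, ?_⟩
    · intro p hp
      by_cases h1 : p = t1
      · rw [h1, hv1]; exact ht2S
      by_cases h2 : p = t2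
      · rw [h2, hv2]; exact ht1S
      · rw [hv3 p h1 h2]; exact hS2sub _ (hm1 p ((hmemS2 p).mpr ⟨hp, h1, h2⟩))
    · intro p hp
      by_cases h1 : p = t1
      · rw [h1, hv1, hv2]
      by_cases h2 : p = t2
      · rw [h2, hv2, hv1]
      · have hp2 : p ∈ S2 := (hmemS2 p).mpr ⟨hp, h1, h2⟩
        have hmem := hm1 p hp2
        rw [hv3 p h1 h2, hv3 (m' p) ((hmemS2 _).mp hmem).2.1 ((hmemS2 _).mp hmem).2.2]
        exact hm2 p hp2
    · intro p hp
      by_cases h1 : p = t1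
      · rw [h1, hv1]; exact ht21
      by_cases h2 : p = t2
      · rw [h2, hv2]; exact Ne.symm ht21
      · rw [hv3 p h1 h2]; exact hm3 p ((hmemS2 p).mpr ⟨hp, h1, h2⟩)
    · intro p hp
      have h1 : p ≠ t1 := fun h => hp (h ▸ ht1S)
      have h2 : p ≠ t2 := fun h => hp (h ▸ ht2S)
      rw [hv3 p h1 h2]; exact hm4 p (fun h => hp (hS2sub p h))
    · intro p hp q hq hqp hqmp
      by_cases h1 : p = t1
      · have hq1 : q ≠ t1 := h1 ▸ hqp
        have hqm : q ≠ t2 := by rw [h1, hv1] at hqmp; exact hqmp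
        have hq2 : q ∈ S2 := (hmemS2 q).mpr ⟨hq, hq1, hqm⟩
        rw [h1, hv1, hv3 q hq1 hqm]
        exact hpair q hq2
      by_cases h2 : p = t2
      · have hq2' : q ≠ t2 := h2 ▸ hqp
        have hqm : q ≠ t1 := by rw [h2, hv2] at hqmp; exact hqmp
        have hq2 : q ∈ S2 := (hmemS2 q).mpr ⟨hq, hqm, hq2'⟩
        rw [h2, hv2, hv3 q hqm hq2', ssymm t2 t1]
        exact hpair q hq2
      · have hp2 : p ∈ S2 := (hmemS2 p).mpr ⟨hp, h1, h2⟩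
        have hmem := hm1 p hp2
        rw [hv3 p h1 h2]
        by_cases hq1 : q = t1
        · rw [hq1, hv1, Set.inter_comm]
          exact hpair p hp2
        by_cases hq2 : q = t2
        · rw [hq2, hv2, Set.inter_comm, ssymm t2 t1]
          exact hpair p hp2
        · have hq2' : q ∈ S2 := (hmemS2 q).mpr ⟨hq, hq1, hq2⟩
          rw [hv3 q hq1 hq2]
          refine hm5 p hp2 q hq2' hqp ?_
          rw [hv3 p h1 h2] at hqmp; exact hqmp

lemma partial_pair (a b : Pt) (hab : a ≠ b) :
    PartialNC {a, b} (fun p => if p = a then b else if p = b then a else p) := by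
  refine ⟨?_, ?_, ?_, ?_, ?_⟩
  · intro p hp
    rcases Finset.mem_insert.mp hp with rfl | hp
    · simp
    · rcases Finset.mem_singleton.mp hp with rfl
      simp [Ne.symm hab, hab]
  · intro p hp
    rcases Finset.mem_insert.mp hp with rfl | hp
    · simp [Ne.symm hab]
    · rcases Finset.mem_singleton.mp hp with rfl
      simp [Ne.symm hab]
  · intro p hp
    rcases Finset.mem_insert.mp hp with rfl | hp
    · simpa using Ne.symm hab
    · rcases Finset.mem_singleton.mp hp with rfl
      simp [Ne.symm hab]; exact hab
  · intro p hp
    simp only [Finset.mem_insert, Finset.mem_singleton, not_or] at hp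
    simp [hp.1, hp.2]
  · intro p hp q hq hqp hqmp
    exfalso
    rcases Finset.mem_insert.mp hp with rfl | hp'
    · rcases Finset.mem_insert.mp hq with rfl | hq'
      · exact hqp rfl
      · rcases Finset.mem_singleton.mp hq' with rfl
        simp at hqmp
    · rcases Finset.mem_singleton.mp hp' with rfl
      rcases Finset.mem_insert.mp hq with rfl | hq'
      · simp [Ne.symm hab] at hqmp
      · rcases Finset.mem_singleton.mp hq' with rfl
        exact hqp rfl

lemma partial_union (S T : Finset Pt) (mS mT : Pt → Pt) (hST : ∀ p ∈ S, p ∉ T)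
    (hS : PartialNC S mS) (hT : PartialNC T mT)
    (hx : ∀ p ∈ S, ∀ q ∈ T, segment ℝ p (mS p) ∩ segment ℝ q (mT q) = ∅) :
    PartialNC (S ∪ T) (fun p => if p ∈ S then mS p else mT p) := by
  obtain ⟨hS1, hS2, hS3, hS4, hS5⟩ := hS
  obtain ⟨hT1, hT2, hT3, hT4, hT5⟩ := hT
  set m : Pt → Pt := fun p => if p ∈ S then mS p else mT p with hmdef
  have hvS : ∀ p ∈ S, m p = mS p := by intro p hp; simp [hmdef, hp]
  have hvT : ∀ p ∈ T, m p = mT p := by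
    intro p hp; simp [hmdef]
    intro hpS; exact absurd hp (hST p hpS)
  refine ⟨?_, ?_, ?_, ?_, ?_⟩
  · intro p hp
    rcases Finset.mem_union.mp hp with hp' | hp'
    · rw [hvS p hp']; exact Finset.mem_union_left _ (hS1 p hp')
    · rw [hvT p hp']; exact Finset.mem_union_right _ (hT1 p hp')
  · intro p hp
    rcases Finset.mem_union.mp hp with hp' | hp'
    · rw [hvS p hp', hvS _ (hS1 p hp')]; exact hS2 p hp'
    · rw [hvT p hp', hvT _ (hT1 p hp')]; exact hT2 p hp'
  · intro p hp
    rcases Finset.mem_union.mp hp with hp' | hp'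
    · rw [hvS p hp']; exact hS3 p hp'
    · rw [hvT p hp']; exact hT3 p hp'
  · intro p hp
    rw [Finset.mem_union, not_or] at hp
    rw [hmdef]; simp only [hp.1, if_false]
    exact hT4 p hp.2
  · intro p hp q hq hqp hqmp
    rcases Finset.mem_union.mp hp with hp' | hp'
    · rw [hvS p hp'] at hqmp ⊢
      rcases Finset.mem_union.mp hq with hq' | hq'
      · rw [hvS q hq']; exact hS5 p hp' q hq' hqp hqmp
      · rw [hvT q hq']; exact hx p hp' q hq'
    · rw [hvT p hp'] at hqmp ⊢
      rcases Finset.mem_union.mp hq with hq' | hq'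
      · rw [hvS q hq', Set.inter_comm]; exact hx q hq' p hp'
      · rw [hvT q hq']; exact hT5 p hp' q hq' hqp hqmp

def xdot (v w p : Pt) : ℝ := (w - v) 0 * (p - v) 0 + (w - v) 1 * (p - v) 1
def kf (v w p : Pt) : ℝ := xdot v w p / det2 (w - v) (p - v)

lemma enorm_pos_pt (v w : Pt) (hvw : v ≠ w) : 0 < (w - v) 0 ^ 2 + (w - v) 1 ^ 2 := by
  rcases (show (w - v) 0 ≠ 0 ∨ (w - v) 1 ≠ 0 by
    by_contra hc
    push_neg at hc
    apply hvw
    have : w - v = 0 := by ext i; fin_cases i <;> simp [hc.1, hc.2]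
    have := sub_eq_zero.mp this
    exact this.symm) with h | h
  · positivity
  · positivity

lemma frame_identity (v w p q : Pt) :
    xdot v w p * det2 (w - v) (q - v) - xdot v w q * det2 (w - v) (p - v) =
      ((w - v) 0 ^ 2 + (w - v) 1 ^ 2) * det2 (p - v) (q - v) := by
  simp [xdot, det2]; ring

lemma kf_lt_iff (v w p q : Pt) (hvw : v ≠ w)
    (hpq : 0 < det2 (w - v) (p - v) * det2 (w - v) (q - v)) :
    kf v w p < kf v w q ↔ det2 (p - v) (q - v) < 0 := by
  have hE := enorm_pos_pt v w hvw
  have key := frame_identity v w p q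
  have hgp : det2 (w - v) (p - v) ≠ 0 := by
    intro h; rw [h] at hpq; simp at hpq
  have hgq : det2 (w - v) (q - v) ≠ 0 := by
    intro h; rw [h] at hpq; simp at hpq
  have hmain : kf v w p < kf v w q ↔
      xdot v w p * det2 (w - v) (q - v) < xdot v w q * det2 (w - v) (p - v) := by
    rcases lt_or_gt_of_ne hgp with hp | hp
    · have hq : det2 (w - v) (q - v) < 0 := by nlinarith
      rw [kf, kf, show xdot v w p / det2 (w - v) (p - v)
          = (- xdot v w p) / (- det2 (w - v) (p - v)) by rw [neg_div_neg_eq],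
        show xdot v w q / det2 (w - v) (q - v)
          = (- xdot v w q) / (- det2 (w - v) (q - v)) by rw [neg_div_neg_eq],
        div_lt_div_iff₀ (by linarith) (by linarith)]
      constructor <;> intro <;> nlinarith
    · have hq : 0 < det2 (w - v) (q - v) := by nlinarith
      rw [kf, kf, div_lt_div_iff₀ hp hq]
  rw [hmain]
  constructor <;> intro <;> nlinarith

lemma kf_inj (v w p q : Pt) (hvw : v ≠ w)
    (hpq : 0 < det2 (w - v) (p - v) * det2 (w - v) (q - v))
    (h : kf v w p = kf v w q) : det2 (p - v) (q - v) = 0 := by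
  by_contra hne
  rcases lt_or_gt_of_ne hne with hlt | hgt
  · rw [← kf_lt_iff v w p q hvw hpq] at hlt; linarith
  · have : det2 (q - v) (p - v) < 0 := by
      have : det2 (q - v) (p - v) = - det2 (p - v) (q - v) := by simp [det2]; ring
      linarith [this, hgt]
    rw [← kf_lt_iff v w q p hvw (by nlinarith)] at this
    linarith

lemma cross_mono_real (xa ya xa1 ya1 xb yb xb1 yb1 : ℝ) (h1 : 0 < ya) (h2 : 0 < ya1)
    (h3 : yb < 0) (h4 : yb1 < 0) (hab : 0 < xa * yb - xb * ya)
    (haa : 0 ≤ xa * ya1 - xa1 * ya) (hbb : 0 ≤ xb1 * yb - xb * yb1) :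
    0 < xa1 * yb1 - xb1 * ya1 := by
  have iv : xa1 * yb > xb * ya1 := by nlinarith
  nlinarith

/-- open half plane is convex -/
lemma convex_halfplane (u vv : Pt) : Convex ℝ {z : Pt | 0 < det2 u (z - vv)} := by
  intro x hx y hy a b ha hb hab
  simp only [Set.mem_setOf_eq] at hx hy ⊢
  have : det2 u ((a • x + b • y) - vv) = a * det2 u (x - vv) + b * det2 u (y - vv) := by
    have hb' : b = 1 - a := by linarith
    subst hb'; simp [det2]; ring
  rw [this]
  rcases eq_or_lt_of_le ha with h | h
  · rw [← h]; simp; nlinarith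
  · nlinarith
lemma feasible_of_partial (P : Finset Pt) (v w : Pt) (m : Pt → Pt) (h : PartialNC P m)
    (hm : m v = w) : Feasible P v w :=
  ⟨m, ⟨h.1, h.2.1, h.2.2.1, h.2.2.2.2⟩, hm⟩

lemma feasible_of (P : Finset Pt) (hgp : GenPos P) (v w : Pt) (hv : v ∈ P) (hw : w ∈ P)
    (hvw : v ≠ w) (hPeven : Even P.card)
    (hor : Even (P.filter (fun p => 0 < det2 (w - v) (p - v))).card ∨
      v ∈ convexHull ℝ ((P : Set Pt) \ {v})) :
    Feasible P v w := by
  set A := P.filter (fun p => 0 < det2 (w - v) (p - v)) with hA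
  set B := P.filter (fun p => det2 (w - v) (p - v) < 0) with hB
  have hgv : det2 (w - v) (v - v) = 0 := by simp [det2]
  have hgw : det2 (w - v) (w - v) = 0 := by simp [det2]; ring
  have hgz : ∀ p ∈ P, p ≠ v → p ≠ w → det2 (w - v) (p - v) ≠ 0 := by
    intro p hp hpv hpw h
    exact hgp v hv w hw p hp hvw (Ne.symm hpv) (Ne.symm hpw) (collinear_of_det2_zero v w p h)
  have hmemA : ∀ p, p ∈ A ↔ p ∈ P ∧ 0 < det2 (w - v) (p - v) := by
    intro p; simp [hA, Finset.mem_filter]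
  have hmemB : ∀ p, p ∈ B ↔ p ∈ P ∧ det2 (w - v) (p - v) < 0 := by
    intro p; simp [hB, Finset.mem_filter]
  have htri : ∀ p ∈ P, p = v ∨ p = w ∨ p ∈ A ∨ p ∈ B := by
    intro p hp
    by_cases h1 : p = v
    · tauto
    by_cases h2 : p = w
    · tauto
    rcases lt_trichotomy (det2 (w - v) (p - v)) 0 with h | h | h
    · exact Or.inr (Or.inr (Or.inr ((hmemB p).mpr ⟨hp, h⟩)))
    · exact absurd h (hgz p hp h1 h2)
    · exact Or.inr (Or.inr (Or.inl ((hmemA p).mpr ⟨hp, h⟩)))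
  have hvA : v ∉ A := by
    intro h; have := ((hmemA v).mp h).2; rw [hgv] at this; exact lt_irrefl 0 this
  have hvB : v ∉ B := by
    intro h; have := ((hmemB v).mp h).2; rw [hgv] at this; exact lt_irrefl 0 this
  have hwA : w ∉ A := by
    intro h; have := ((hmemA w).mp h).2; rw [hgw] at this; exact lt_irrefl 0 this
  have hwB : w ∉ B := by
    intro h; have := ((hmemB w).mp h).2; rw [hgw] at this; exact lt_irrefl 0 this
  have hAB : ∀ p ∈ A, p ∉ B := by
    intro p hp h
    have h1 := ((hmemA p).mp hp).2
    have h2 := ((hmemB p).mp h).2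
    linarith
  have hdetvne : ∀ p ∈ P, ∀ q ∈ P, p ≠ v → q ≠ v → p ≠ q → det2 (p - v) (q - v) ≠ 0 := by
    intro p hp q hq hpv hqv hpq h
    exact hgp v hv p hp q hq (Ne.symm hpv) (Ne.symm hqv) hpq (collinear_of_det2_zero v p q h)
  have hprodA : ∀ p ∈ A, ∀ q ∈ A, 0 < det2 (w - v) (p - v) * det2 (w - v) (q - v) :=
    fun p hp q hq => mul_pos ((hmemA p).mp hp).2 ((hmemA q).mp hq).2
  have hprodB : ∀ p ∈ B, ∀ q ∈ B, 0 < det2 (w - v) (p - v) * det2 (w - v) (q - v) :=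
    fun p hp q hq => mul_pos_of_neg_of_neg ((hmemB p).mp hp).2 ((hmemB q).mp hq).2
  have hinjA : ∀ p ∈ A, ∀ q ∈ A, kf v w p = kf v w q → p = q := by
    intro p hpA q hqA h
    by_contra hne
    exact hdetvne p ((hmemA p).mp hpA).1 q ((hmemA q).mp hqA).1
      (fun hh => hvA (hh ▸ hpA)) (fun hh => hvA (hh ▸ hqA)) hne
      (kf_inj v w p q hvw (hprodA p hpA q hqA) h)
  have hinjB : ∀ p ∈ B, ∀ q ∈ B, kf v w p = kf v w q → p = q := by
    intro p hpB q hqB h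
    by_contra hne
    exact hdetvne p ((hmemB p).mp hpB).1 q ((hmemB q).mp hqB).1
      (fun hh => hvB (hh ▸ hpB)) (fun hh => hvB (hh ▸ hqB)) hne
      (kf_inj v w p q hvw (hprodB p hpB q hqB) h)
  have hdisjA : ∀ p ∈ A, ∀ q ∈ A, ∀ r ∈ A, ∀ s ∈ A, kf v w p < kf v w q →
      kf v w q < kf v w r → kf v w q < kf v w s → segment ℝ p q ∩ segment ℝ r s = ∅ := by
    intro p hp q hq r hr s hs h1 h2 h3
    rw [kf_lt_iff v w p q hvw (hprodA p hp q hq)] at h1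
    rw [kf_lt_iff v w q r hvw (hprodA q hq r hr)] at h2
    rw [kf_lt_iff v w q s hvw (hprodA q hq s hs)] at h3
    apply seg_disj (v - q) v p q r s
    · have : det2 (v - q) (p - v) = det2 (p - v) (q - v) := by simp [det2]; ring
      linarith
    · have : det2 (v - q) (q - v) = 0 := by simp [det2]; ring
      linarith
    · have : det2 (v - q) (r - v) = - det2 (q - v) (r - v) := by simp [det2]; ring
      linarith
    · have : det2 (v - q) (s - v) = - det2 (q - v) (s - v) := by simp [det2]; ring
      linarith
  have hdisjB : ∀ p ∈ B, ∀ q ∈ B, ∀ r ∈ B, ∀ s ∈ B, kf v w p < kf v w q →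
      kf v w q < kf v w r → kf v w q < kf v w s → segment ℝ p q ∩ segment ℝ r s = ∅ := by
    intro p hp q hq r hr s hs h1 h2 h3
    rw [kf_lt_iff v w p q hvw (hprodB p hp q hq)] at h1
    rw [kf_lt_iff v w q r hvw (hprodB q hq r hr)] at h2
    rw [kf_lt_iff v w q s hvw (hprodB q hq s hs)] at h3
    apply seg_disj (v - q) v p q r s
    · have : det2 (v - q) (p - v) = det2 (p - v) (q - v) := by simp [det2]; ring
      linarith
    · have : det2 (v - q) (q - v) = 0 := by simp [det2]; ring
      linarith
    · have : det2 (v - q) (r - v) = - det2 (q - v) (r - v) := by simp [det2]; ring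
      linarith
    · have : det2 (v - q) (s - v) = - det2 (q - v) (s - v) := by simp [det2]; ring
      linarith
  have hABcard : P.card = 2 + A.card + B.card := by
    have hunion : A ∪ B = P \ {v, w} := by
      ext p
      simp only [Finset.mem_union, Finset.mem_sdiff, Finset.mem_insert, Finset.mem_singleton]
      constructor
      · intro h
        rcases h with h | h
        · obtain ⟨hp, hs⟩ := (hmemA p).mp h
          refine ⟨hp, ?_⟩
          rintro (rfl | rfl)
          · rw [hgv] at hs; exact lt_irrefl 0 hs
          · rw [hgw] at hs; exact lt_irrefl 0 hs
        · obtain ⟨hp, hs⟩ := (hmemB p).mp h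
          refine ⟨hp, ?_⟩
          rintro (rfl | rfl)
          · rw [hgv] at hs; exact lt_irrefl 0 hs
          · rw [hgw] at hs; exact lt_irrefl 0 hs
      · rintro ⟨hp, hno⟩
        rcases htri p hp with rfl | rfl | h | h
        · exact absurd (Or.inl rfl) hno
        · exact absurd (Or.inr rfl) hno
        · exact Or.inl h
        · exact Or.inr h
    have hsub : ({v, w} : Finset Pt) ⊆ P := by
      intro p hp
      rcases Finset.mem_insert.mp hp with rfl | hp'
      · exact hv
      · rw [Finset.mem_singleton.mp hp']; exact hw
    have hdisj2 : Disjoint A B := Finset.disjoint_left.mpr hAB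
    have h1 : (A ∪ B).card = A.card + B.card := Finset.card_union_of_disjoint hdisj2
    have h2 : (P \ ({v, w} : Finset Pt)).card = P.card - 2 := by
      rw [Finset.card_sdiff_of_subset hsub, Finset.card_insert_of_notMem (by simp [hvw]),
        Finset.card_singleton]
    have h3 : 2 ≤ P.card := by
      have := Finset.card_le_card hsub
      rwa [Finset.card_insert_of_notMem (by simp [hvw]), Finset.card_singleton] at this
    rw [hunion] at h1
    omega
  -- the cross-side disjointness via the splitting line, for subsets of A and B
  have hxABgen : ∀ p ∈ A, ∀ pa ∈ A, ∀ q ∈ B, ∀ qb ∈ B,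
      segment ℝ p pa ∩ segment ℝ q qb = ∅ := by
    intro p hp pa hpa q hq qb hqb
    rw [Set.inter_comm]
    apply seg_disj (w - v) v q qb p pa
    · exact le_of_lt ((hmemB q).mp hq).2
    · exact le_of_lt ((hmemB qb).mp hqb).2
    · exact ((hmemA p).mp hp).2
    · exact ((hmemA pa).mp hpa).2
  -- v-w segment versus side pairs
  have hxVWA : ∀ p ∈ A, ∀ pa ∈ A, segment ℝ v w ∩ segment ℝ p pa = ∅ := by
    intro p hp pa hpa
    apply seg_disj (w - v) v v w p pa (le_of_eq hgv) (le_of_eq hgw)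
      ((hmemA p).mp hp).2 ((hmemA pa).mp hpa).2
  have hxVWB : ∀ p ∈ B, ∀ pa ∈ B, segment ℝ v w ∩ segment ℝ p pa = ∅ := by
    intro p hp pa hpa
    apply seg_disj (v - w) v v w p pa
    · have : det2 (v - w) (v - v) = 0 := by simp [det2]
      rw [this]
    · have : det2 (v - w) (w - v) = - det2 (w - v) (w - v) := by simp [det2]; ring
      rw [this, hgw]; simp
    · have : det2 (v - w) (p - v) = - det2 (w - v) (p - v) := by simp [det2]; ring
      rw [this]; linarith [((hmemB p).mp hp).2]
    · have : det2 (v - w) (pa - v) = - det2 (w - v) (pa - v) := by simp [det2]; ring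
      rw [this]; linarith [((hmemB pa).mp hpa).2]
  by_cases hAe : Even A.card
  · -- both sides even : match each side by the sweep
    have hBe : Even B.card := by
      rw [Nat.even_iff] at hAe hPeven ⊢
      omega
    obtain ⟨mA, hmA⟩ := exists_matching_of_key (kf v w) A.card A rfl hAe hinjA hdisjA
    obtain ⟨mB, hmB⟩ := exists_matching_of_key (kf v w) B.card B rfl hBe hinjB hdisjB
    have hside := partial_union A B mA mB hAB hmA hmB
      (fun p hp q hq => hxABgen p hp (mA p) (hmA.1 p hp) q hq (mB q) (hmB.1 q hq))
    have hpairvw := partial_pair v w hvw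
    have hVWnotin : ∀ p ∈ ({v, w} : Finset Pt), p ∉ A ∪ B := by
      intro p hp h
      rcases Finset.mem_insert.mp hp with rfl | hp'
      · rcases Finset.mem_union.mp h with h' | h'
        · exact hvA h'
        · exact hvB h'
      · rw [Finset.mem_singleton.mp hp'] at h
        rcases Finset.mem_union.mp h with h' | h'
        · exact hwA h'
        · exact hwB h'
    have hxVW : ∀ p ∈ ({v, w} : Finset Pt), ∀ q ∈ A ∪ B,
        segment ℝ p ((fun p => if p = v then w else if p = w then v else p) p) ∩
          segment ℝ q ((fun p => if p ∈ A then mA p else mB p) q) = ∅ := by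
      intro p hp q hq
      have hseg : segment ℝ p ((fun p => if p = v then w else if p = w then v else p) p)
          = segment ℝ v w := by
        rcases Finset.mem_insert.mp hp with rfl | hp'
        · simp
        · rw [Finset.mem_singleton.mp hp']
          simp only [if_neg (Ne.symm hvw), if_pos rfl]
          exact ssymm w v
      rw [hseg]
      rcases Finset.mem_union.mp hq with hq' | hq'
      · simp only [if_pos hq']
        exact hxVWA q hq' (mA q) (hmA.1 q hq')
      · have hqA : q ∉ A := fun h => hAB q h hq'
        simp only [if_neg hqA]
        exact hxVWB q hq' (mB q) (hmB.1 q hq')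
    have hall := partial_union {v, w} (A ∪ B) _ _ hVWnotin hpairvw hside hxVW
    have hset : ({v, w} : Finset Pt) ∪ (A ∪ B) = P := by
      ext p
      simp only [Finset.mem_union, Finset.mem_insert, Finset.mem_singleton]
      constructor
      · rintro ((rfl | rfl) | h | h)
        · exact hv
        · exact hw
        · exact ((hmemA p).mp h).1
        · exact ((hmemB p).mp h).1
      · intro hp
        rcases htri p hp with h | h | h | h <;> tauto
    rw [hset] at hall
    refine feasible_of_partial P v w _ hall ?_
    simp
  · -- odd case: v is not a hull vertex; find a crossing pair
    have hBo : ¬ Even B.card := by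
      rw [Nat.even_iff] at hPeven ⊢
      rw [Nat.even_iff] at hAe
      omega
    have hAne : A.Nonempty := by
      rw [← Finset.card_pos]
      rcases Nat.eq_zero_or_pos A.card with h | h
      · exact absurd (h ▸ Even.zero) hAe
      · exact h
    have hBne : B.Nonempty := by
      rw [← Finset.card_pos]
      rcases Nat.eq_zero_or_pos B.card with h | h
      · exact absurd (h ▸ Even.zero) hBo
      · exact h
    have hvhull : v ∈ convexHull ℝ ((P : Set Pt) \ {v}) := hor.resolve_left hAe
    obtain ⟨a1, ha1A, ha1min⟩ := A.exists_min_image (kf v w) hAne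
    obtain ⟨b1, hb1B, hb1max⟩ := B.exists_max_image (kf v w) hBne
    have ha1P : a1 ∈ P := ((hmemA a1).mp ha1A).1
    have hb1P : b1 ∈ P := ((hmemB b1).mp hb1B).1
    have ha1v : a1 ≠ v := fun h => hvA (h ▸ ha1A)
    have hb1v : b1 ≠ v := fun h => hvB (h ▸ hb1B)
    have ha1b1 : a1 ≠ b1 := fun h => hAB a1 ha1A (h ▸ hb1B)
    -- existence of a crossing pair
    have hcross : ∃ a ∈ A, ∃ b ∈ B, 0 < det2 (a - v) (b - v) := by
      by_contra hnc
      push_neg at hnc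
      have hnc' : ∀ a ∈ A, ∀ b ∈ B, det2 (a - v) (b - v) < 0 := by
        intro a ha b hb
        rcases lt_or_eq_of_le (hnc a ha b hb) with h | h
        · exact h
        · exact absurd h (hdetvne a ((hmemA a).mp ha).1 b ((hmemB b).mp hb).1
            (fun hh => hvA (hh ▸ ha)) (fun hh => hvB (hh ▸ hb))
            (fun hh => hAB a ha (hh ▸ hb)))
      have hclaim : ((P : Set Pt) \ {v}) ⊆ {z : Pt | 0 < det2 (b1 - a1) (z - v)} := by
        intro z hz
        simp only [Set.mem_diff, Set.mem_singleton_iff, Finset.mem_coe] at hz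
        obtain ⟨hzP, hzv⟩ := hz
        simp only [Set.mem_setOf_eq]
        have husplit : det2 (b1 - a1) (z - v)
            = det2 (b1 - v) (z - v) - det2 (a1 - v) (z - v) := by simp [det2]; ring
        rw [husplit]
        rcases htri z hzP with rfl | rfl | hzA | hzB
        · exact absurd rfl hzv
        · have h1 : det2 (a1 - v) (z - v) = - det2 (z - v) (a1 - v) := by simp [det2]; ring
          have h2 : det2 (b1 - v) (z - v) = - det2 (z - v) (b1 - v) := by simp [det2]; ring
          have h3 := ((hmemA a1).mp ha1A).2
          have h4 := ((hmemB b1).mp hb1B).2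
          rw [h1, h2]
          linarith
        · have hda : det2 (a1 - v) (z - v) ≤ 0 := by
            by_cases hza : z = a1
            · rw [hza]
              have : det2 (a1 - v) (a1 - v) = 0 := by simp [det2]; ring
              linarith
            · have hlt : kf v w a1 < kf v w z :=
                lt_of_le_of_ne (ha1min z hzA)
                  (fun h => hza ((hinjA a1 ha1A z hzA h).symm))
              have := (kf_lt_iff v w a1 z hvw (hprodA a1 ha1A z hzA)).mp hlt
              linarith
          have hdb : 0 < det2 (b1 - v) (z - v) := by
            have h5 := hnc' z hzA b1 hb1B
            have hsw : det2 (b1 - v) (z - v) = - det2 (z - v) (b1 - v) := by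
              simp [det2]; ring
            linarith
          linarith
        · have hdb : 0 ≤ det2 (b1 - v) (z - v) := by
            by_cases hzb : z = b1
            · rw [hzb]
              have : det2 (b1 - v) (b1 - v) = 0 := by simp [det2]; ring
              linarith
            · have hlt : kf v w z < kf v w b1 :=
                lt_of_le_of_ne (hb1max z hzB)
                  (fun h => hzb (hinjB z hzB b1 hb1B h))
              have := (kf_lt_iff v w z b1 hvw (hprodB z hzB b1 hb1B)).mp hlt
              have hsw : det2 (b1 - v) (z - v) = - det2 (z - v) (b1 - v) := by
                simp [det2]; ring
              linarith
          have hda : det2 (a1 - v) (z - v) < 0 := hnc' a1 ha1A z hzB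
          linarith
      have hvin := convexHull_min hclaim (convex_halfplane (b1 - a1) v) hvhull
      simp only [Set.mem_setOf_eq] at hvin
      have : det2 (b1 - a1) (v - v) = 0 := by simp [det2]
      linarith
    obtain ⟨a, haA, b, hbB, hab⟩ := hcross
    -- the extreme pair also crosses
    have hc1 : 0 < det2 (a1 - v) (b1 - v) := by
      have hE := enorm_pos_pt v w hvw
      have h1 : det2 (a1 - v) (a - v) ≤ 0 := by
        by_cases hza : a = a1
        · rw [hza]
          have : det2 (a1 - v) (a1 - v) = 0 := by simp [det2]; ring
          linarith
        · have hlt : kf v w a1 < kf v w a :=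
            lt_of_le_of_ne (ha1min a haA) (fun h => hza ((hinjA a1 ha1A a haA h).symm))
          have := (kf_lt_iff v w a1 a hvw (hprodA a1 ha1A a haA)).mp hlt
          linarith
      have h2 : det2 (b - v) (b1 - v) ≤ 0 := by
        by_cases hzb : b = b1
        · rw [hzb]
          have : det2 (b1 - v) (b1 - v) = 0 := by simp [det2]; ring
          linarith
        · have hlt : kf v w b < kf v w b1 :=
            lt_of_le_of_ne (hb1max b hbB) (fun h => hzb (hinjB b hbB b1 hb1B h))
          have := (kf_lt_iff v w b b1 hvw (hprodB b hbB b1 hb1B)).mp hlt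
          linarith
      have hfr1 := frame_identity v w a b
      have hfr2 := frame_identity v w a a1
      have hfr3 := frame_identity v w b1 b
      have hfr4 := frame_identity v w a1 b1
      have hga := ((hmemA a).mp haA).2
      have hga1 := ((hmemA a1).mp ha1A).2
      have hgb := ((hmemB b).mp hbB).2
      have hgb1 := ((hmemB b1).mp hb1B).2
      have hsw2 : det2 (a - v) (a1 - v) = - det2 (a1 - v) (a - v) := by simp [det2]; ring
      have hsw3 : det2 (b1 - v) (b - v) = - det2 (b - v) (b1 - v) := by simp [det2]; ring
      have hmono := cross_mono_real (xdot v w a) (det2 (w - v) (a - v))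
        (xdot v w a1) (det2 (w - v) (a1 - v)) (xdot v w b) (det2 (w - v) (b - v))
        (xdot v w b1) (det2 (w - v) (b1 - v)) hga hga1 hgb hgb1
        (by rw [hfr1]; exact mul_pos hE hab)
        (by rw [hfr2]; exact mul_nonneg hE.le (by linarith))
        (by rw [hfr3]; exact mul_nonneg hE.le (by linarith))
      rw [hfr4] at hmono
      rcases mul_pos_iff.mp hmono with ⟨_, h⟩ | ⟨h, _⟩
      · exact h
      · linarith
    -- build the matching
    set A' := A.erase a1 with hA'
    set B' := B.erase b1 with hB'
    have hA'A : ∀ p ∈ A', p ∈ A := fun p hp => Finset.mem_of_mem_erase hp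
    have hB'B : ∀ p ∈ B', p ∈ B := fun p hp => Finset.mem_of_mem_erase hp
    have hA'e : Even A'.card := by
      rw [hA', Finset.card_erase_of_mem ha1A]
      rw [Nat.even_iff] at hAe ⊢
      have : 1 ≤ A.card := Finset.card_pos.mpr hAne
      omega
    have hB'e : Even B'.card := by
      rw [hB', Finset.card_erase_of_mem hb1B]
      rw [Nat.even_iff] at hBo ⊢
      have : 1 ≤ B.card := Finset.card_pos.mpr hBne
      omega
    obtain ⟨mA, hmA⟩ := exists_matching_of_key (kf v w) A'.card A' rfl hA'e
      (fun p hp q hq => hinjA p (hA'A p hp) q (hA'A q hq))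
      (fun p hp q hq r hr s hs => hdisjA p (hA'A p hp) q (hA'A q hq) r (hA'A r hr)
        s (hA'A s hs))
    obtain ⟨mB, hmB⟩ := exists_matching_of_key (kf v w) B'.card B' rfl hB'e
      (fun p hp q hq => hinjB p (hB'B p hp) q (hB'B q hq))
      (fun p hp q hq r hr s hs => hdisjB p (hB'B p hp) q (hB'B q hq) r (hB'B r hr)
        s (hB'B s hs))
    have hA'B' : ∀ p ∈ A', p ∉ B' := fun p hp h => hAB p (hA'A p hp) (hB'B p h)
    have hside := partial_union A' B' mA mB hA'B' hmA hmB
      (fun p hp q hq => hxABgen p (hA'A p hp) (mA p) (hA'A _ (hmA.1 p hp))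
        q (hB'B q hq) (mB q) (hB'B _ (hmB.1 q hq)))
    -- segments of the crossing pair vs side pairs
    have hxA1 : ∀ q ∈ A', segment ℝ a1 b1 ∩
        segment ℝ q ((fun p => if p ∈ A' then mA p else mB p) q) = ∅ := by
      intro q hq
      have hqA : q ∈ A := hA'A q hq
      have hmq : mA q ∈ A' := hmA.1 q hq
      simp only [if_pos hq]
      have hstrict : ∀ z ∈ A', det2 (a1 - v) (z - v) < 0 := by
        intro z hz
        have hzA := hA'A z hz
        have hza : z ≠ a1 := (Finset.mem_erase.mp hz).1
        have hlt : kf v w a1 < kf v w z :=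
          lt_of_le_of_ne (ha1min z hzA) (fun h => hza ((hinjA a1 ha1A z hzA h).symm))
        have := (kf_lt_iff v w a1 z hvw (hprodA a1 ha1A z hzA)).mp hlt
        linarith
      apply seg_disj (v - a1) v a1 b1 q (mA q)
      · have : det2 (v - a1) (a1 - v) = 0 := by simp [det2]; ring
        linarith
      · have : det2 (v - a1) (b1 - v) = - det2 (a1 - v) (b1 - v) := by simp [det2]; ring
        linarith
      · have : det2 (v - a1) (q - v) = - det2 (a1 - v) (q - v) := by simp [det2]; ring
        linarith [hstrict q hq]
      · have : det2 (v - a1) (mA q - v) = - det2 (a1 - v) (mA q - v) := by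
          simp [det2]; ring
        linarith [hstrict (mA q) hmq]
    have hxB1 : ∀ q ∈ B', segment ℝ a1 b1 ∩
        segment ℝ q ((fun p => if p ∈ A' then mA p else mB p) q) = ∅ := by
      intro q hq
      have hqB : q ∈ B := hB'B q hq
      have hmq : mB q ∈ B' := hmB.1 q hq
      have hqA' : q ∉ A' := fun h => hA'B' q h hq
      simp only [if_neg hqA']
      have hstrict : ∀ z ∈ B', 0 < det2 (b1 - v) (z - v) := by
        intro z hz
        have hzB := hB'B z hz
        have hzb : z ≠ b1 := (Finset.mem_erase.mp hz).1
        have hlt : kf v w z < kf v w b1 :=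
          lt_of_le_of_ne (hb1max z hzB) (fun h => hzb (hinjB z hzB b1 hb1B h))
        have := (kf_lt_iff v w z b1 hvw (hprodB z hzB b1 hb1B)).mp hlt
        have hsw : det2 (b1 - v) (z - v) = - det2 (z - v) (b1 - v) := by simp [det2]; ring
        linarith
      apply seg_disj (b1 - v) v a1 b1 q (mB q)
      · have : det2 (b1 - v) (a1 - v) = - det2 (a1 - v) (b1 - v) := by simp [det2]; ring
        linarith
      · have : det2 (b1 - v) (b1 - v) = 0 := by simp [det2]; ring
        linarith
      · exact hstrict q hq
      · exact hstrict (mB q) hmq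
    have hpairx := partial_pair a1 b1 ha1b1
    have hnotin1 : ∀ p ∈ ({a1, b1} : Finset Pt), p ∉ A' ∪ B' := by
      intro p hp h
      rcases Finset.mem_insert.mp hp with rfl | hp'
      · rcases Finset.mem_union.mp h with h' | h'
        · exact (Finset.mem_erase.mp h').1 rfl
        · exact hAB p ha1A (hB'B p h')
      · rw [Finset.mem_singleton.mp hp'] at h
        rcases Finset.mem_union.mp h with h' | h'
        · exact hAB b1 (hA'A b1 h') hb1B
        · exact (Finset.mem_erase.mp h').1 rfl
    have hx2 : ∀ p ∈ ({a1, b1} : Finset Pt), ∀ q ∈ A' ∪ B',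
        segment ℝ p ((fun p => if p = a1 then b1 else if p = b1 then a1 else p) p) ∩
          segment ℝ q ((fun p => if p ∈ A' then mA p else mB p) q) = ∅ := by
      intro p hp q hq
      have hseg : segment ℝ p ((fun p => if p = a1 then b1 else if p = b1 then a1 else p) p)
          = segment ℝ a1 b1 := by
        rcases Finset.mem_insert.mp hp with rfl | hp'
        · simp
        · rw [Finset.mem_singleton.mp hp']
          simp only [if_neg (Ne.symm ha1b1), if_pos rfl]
          exact ssymm b1 a1
      rw [hseg]
      rcases Finset.mem_union.mp hq with hq' | hq'
      · exact hxA1 q hq'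
      · exact hxB1 q hq'
    have hmid := partial_union {a1, b1} (A' ∪ B') _ _ hnotin1 hpairx hside hx2
    have hpairvw := partial_pair v w hvw
    have hVWnotin : ∀ p ∈ ({v, w} : Finset Pt), p ∉ {a1, b1} ∪ (A' ∪ B') := by
      intro p hp h
      have hp' : p = v ∨ p = w := by
        rcases Finset.mem_insert.mp hp with rfl | hp'
        · exact Or.inl rfl
        · exact Or.inr (Finset.mem_singleton.mp hp')
      have hAorB : p ∈ A ∨ p ∈ B := by
        rcases Finset.mem_union.mp h with h' | h'
        · rcases Finset.mem_insert.mp h' with rfl | h''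
          · exact Or.inl ha1A
          · rw [Finset.mem_singleton.mp h'']; exact Or.inr hb1B
        · rcases Finset.mem_union.mp h' with h'' | h''
          · exact Or.inl (hA'A p h'')
          · exact Or.inr (hB'B p h'')
      rcases hp' with rfl | rfl
      · rcases hAorB with h' | h'
        · exact hvA h'
        · exact hvB h'
      · rcases hAorB with h' | h'
        · exact hwA h'
        · exact hwB h'
    have hx3 : ∀ p ∈ ({v, w} : Finset Pt), ∀ q ∈ {a1, b1} ∪ (A' ∪ B'),
        segment ℝ p ((fun p => if p = v then w else if p = w then v else p) p) ∩
          segment ℝ q ((fun p => if p ∈ ({a1, b1} : Finset Pt) then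
            (fun p => if p = a1 then b1 else if p = b1 then a1 else p) p
            else (fun p => if p ∈ A' then mA p else mB p) p) q) = ∅ := by
      intro p hp q hq
      have hseg : segment ℝ p ((fun p => if p = v then w else if p = w then v else p) p)
          = segment ℝ v w := by
        rcases Finset.mem_insert.mp hp with rfl | hp'
        · simp
        · rw [Finset.mem_singleton.mp hp']
          simp only [if_neg (Ne.symm hvw), if_pos rfl]
          exact ssymm w v
      rw [hseg]
      rcases Finset.mem_union.mp hq with hq' | hq'
      · simp only [if_pos hq']
        have hseg2 : segment ℝ q
            ((fun p => if p = a1 then b1 else if p = b1 then a1 else p) q)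
            = segment ℝ a1 b1 := by
          rcases Finset.mem_insert.mp hq' with rfl | hq''
          · simp
          · rw [Finset.mem_singleton.mp hq'']
            simp only [if_neg (Ne.symm ha1b1), if_pos rfl]
            exact ssymm b1 a1
        rw [hseg2]
        exact seg_vw_disj_cross v w a1 b1 ((hmemB b1).mp hb1B).2 hc1
      · have hqn : q ∉ ({a1, b1} : Finset Pt) := by
          intro hh
          exact hnotin1 q hh hq'
        simp only [if_neg hqn]
        rcases Finset.mem_union.mp hq' with hq'' | hq''
        · simp only [if_pos hq'']
          exact hxVWA q (hA'A q hq'') (mA q) (hA'A _ (hmA.1 q hq''))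
        · have hqA' : q ∉ A' := fun h => hA'B' q h hq''
          simp only [if_neg hqA']
          exact hxVWB q (hB'B q hq'') (mB q) (hB'B _ (hmB.1 q hq''))
    have hall := partial_union {v, w} ({a1, b1} ∪ (A' ∪ B')) _ _ hVWnotin hpairvw hmid hx3
    have hset : ({v, w} : Finset Pt) ∪ ({a1, b1} ∪ (A' ∪ B')) = P := by
      ext p
      simp only [Finset.mem_union, Finset.mem_insert, Finset.mem_singleton]
      constructor
      · rintro ((rfl | rfl) | (rfl | rfl) | h | h)
        · exact hv
        · exact hw
        · exact ha1P
        · exact hb1P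
        · exact ((hmemA p).mp (hA'A p h)).1
        · exact ((hmemB p).mp (hB'B p h)).1
      · intro hp
        rcases htri p hp with h | h | h | h
        · exact Or.inl (Or.inl h)
        · exact Or.inl (Or.inr h)
        · by_cases hpa : p = a1
          · exact Or.inr (Or.inl (Or.inl hpa))
          · exact Or.inr (Or.inr (Or.inl (Finset.mem_erase.mpr ⟨hpa, h⟩)))
        · by_cases hpb : p = b1
          · exact Or.inr (Or.inl (Or.inr hpb))
          · exact Or.inr (Or.inr (Or.inr (Finset.mem_erase.mpr ⟨hpb, h⟩)))
    rw [hset] at hall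
    refine feasible_of_partial P v w _ hall ?_
    simp
lemma feasible_symm (P : Finset Pt) (v w : Pt) (hw : w ∈ P) (h : Feasible P w v) :
    Feasible P v w := by
  obtain ⟨m, hm, hmw⟩ := h
  refine ⟨m, hm, ?_⟩
  rw [← hmw, hm.2.1 w hw]

lemma sides_split (P : Finset Pt) (hgp : GenPos P) (v w : Pt) (hv : v ∈ P) (hw : w ∈ P)
    (hvw : v ≠ w) :
    P.card = 2 + (P.filter (fun p => 0 < det2 (w - v) (p - v))).card
      + (P.filter (fun p => det2 (w - v) (p - v) < 0)).card := by
  set A := P.filter (fun p => 0 < det2 (w - v) (p - v)) with hA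
  set B := P.filter (fun p => det2 (w - v) (p - v) < 0) with hB
  have hgv : det2 (w - v) (v - v) = 0 := by simp [det2]
  have hgw : det2 (w - v) (w - v) = 0 := by simp [det2]; ring
  have hgz : ∀ p ∈ P, p ≠ v → p ≠ w → det2 (w - v) (p - v) ≠ 0 := by
    intro p hp hpv hpw h
    exact hgp v hv w hw p hp hvw (Ne.symm hpv) (Ne.symm hpw) (collinear_of_det2_zero v w p h)
  have hmemA : ∀ p, p ∈ A ↔ p ∈ P ∧ 0 < det2 (w - v) (p - v) := by
    intro p; simp [hA, Finset.mem_filter]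
  have hmemB : ∀ p, p ∈ B ↔ p ∈ P ∧ det2 (w - v) (p - v) < 0 := by
    intro p; simp [hB, Finset.mem_filter]
  have hAB : ∀ p ∈ A, p ∉ B := by
    intro p hp h
    have h1 := ((hmemA p).mp hp).2
    have h2 := ((hmemB p).mp h).2
    linarith
  have hunion : A ∪ B = P \ {v, w} := by
    ext p
    simp only [Finset.mem_union, Finset.mem_sdiff, Finset.mem_insert, Finset.mem_singleton]
    constructor
    · intro h
      rcases h with h | h
      · obtain ⟨hp, hs⟩ := (hmemA p).mp h
        refine ⟨hp, ?_⟩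
        rintro (rfl | rfl)
        · rw [hgv] at hs; exact lt_irrefl 0 hs
        · rw [hgw] at hs; exact lt_irrefl 0 hs
      · obtain ⟨hp, hs⟩ := (hmemB p).mp h
        refine ⟨hp, ?_⟩
        rintro (rfl | rfl)
        · rw [hgv] at hs; exact lt_irrefl 0 hs
        · rw [hgw] at hs; exact lt_irrefl 0 hs
    · rintro ⟨hp, hno⟩
      by_cases h1 : p = v
      · exact absurd (Or.inl h1) hno
      by_cases h2 : p = w
      · exact absurd (Or.inr h2) hno
      rcases lt_trichotomy (det2 (w - v) (p - v)) 0 with h | h | h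
      · exact Or.inr ((hmemB p).mpr ⟨hp, h⟩)
      · exact absurd h (hgz p hp h1 h2)
      · exact Or.inl ((hmemA p).mpr ⟨hp, h⟩)
  have hsub : ({v, w} : Finset Pt) ⊆ P := by
    intro p hp
    rcases Finset.mem_insert.mp hp with rfl | hp'
    · exact hv
    · rw [Finset.mem_singleton.mp hp']; exact hw
  have hdisj2 : Disjoint A B := Finset.disjoint_left.mpr hAB
  have h1 : (A ∪ B).card = A.card + B.card := Finset.card_union_of_disjoint hdisj2
  have h2 : (P \ ({v, w} : Finset Pt)).card = P.card - 2 := by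
    rw [Finset.card_sdiff_of_subset hsub, Finset.card_insert_of_notMem (by simp [hvw]),
      Finset.card_singleton]
  have h3 : 2 ≤ P.card := by
    have := Finset.card_le_card hsub
    rwa [Finset.card_insert_of_notMem (by simp [hvw]), Finset.card_singleton] at this
  rw [hunion] at h1
  omega

lemma infeasible_of (P : Finset Pt) (hgp : GenPos P) (v w : Pt) (hv : v ∈ P) (hw : w ∈ P)
    (hvw : v ≠ w)
    (hvhull : v ∉ convexHull ℝ ((P : Set Pt) \ {v}))
    (hwhull : w ∉ convexHull ℝ ((P : Set Pt) \ {w}))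
    (hoA : Odd (P.filter (fun p => 0 < det2 (w - v) (p - v))).card) :
    ¬ Feasible P v w := by
  rintro ⟨m, ⟨hm1, hm2, hm3, hm4⟩, hmv⟩
  set A := P.filter (fun p => 0 < det2 (w - v) (p - v)) with hA
  have hmemA : ∀ p, p ∈ A ↔ p ∈ P ∧ 0 < det2 (w - v) (p - v) := by
    intro p; simp [hA, Finset.mem_filter]
  have hgv : det2 (w - v) (v - v) = 0 := by simp [det2]
  have hgw : det2 (w - v) (w - v) = 0 := by simp [det2]; ring
  have hgz : ∀ p ∈ P, p ≠ v → p ≠ w → det2 (w - v) (p - v) ≠ 0 := by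
    intro p hp hpv hpw h
    exact hgp v hv w hw p hp hvw (Ne.symm hpv) (Ne.symm hpw) (collinear_of_det2_zero v w p h)
  have hmw : m w = v := by rw [← hmv, hm2 v hv]
  have key : ∀ p ∈ A, m p ∈ A := by
    intro p hpA
    obtain ⟨hpP, hgpos⟩ := (hmemA p).mp hpA
    have hpv : p ≠ v := by
      intro h; rw [h, hgv] at hgpos; exact lt_irrefl 0 hgpos
    have hpw : p ≠ w := by
      intro h; rw [h, hgw] at hgpos; exact lt_irrefl 0 hgpos
    have hmpP : m p ∈ P := hm1 p hpP
    have hmpv : m p ≠ v := by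
      intro h
      apply hpw
      rw [← hm2 p hpP, h, hmv]
    have hmpw : m p ≠ w := by
      intro h
      apply hpv
      rw [← hm2 p hpP, h, hmw]
    rw [hmemA]
    refine ⟨hmpP, ?_⟩
    rcases lt_trichotomy (det2 (w - v) (m p - v)) 0 with hneg | h0 | hpos
    · exfalso
      -- the edge p -- m p would cross the line through v and w
      have hseg : segment ℝ v w ∩ segment ℝ p (m p) = ∅ := by
        have := hm4 v hv p hpP hpv (by rw [hmv]; exact hpw)
        rwa [hmv] at this
      set ga := det2 (w - v) (p - v) with hga
      set gb := det2 (w - v) (m p - v) with hgb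
      set lam := ga / (ga - gb) with hlam
      have hgagb : 0 < ga - gb := by linarith
      have hlam0 : 0 < lam := by positivity
      have hlam1 : lam < 1 := by
        rw [hlam, div_lt_one hgagb]; linarith
      set x := (1 - lam) • p + lam • (m p) with hx
      have hxseg : x ∈ segment ℝ p (m p) :=
        ⟨1 - lam, lam, by linarith, le_of_lt hlam0, by ring, rfl⟩
      have hgx : det2 (w - v) (x - v) = 0 := by
        rw [det2_seg (w - v) v p (m p) x (1 - lam) lam (by ring) rfl]
        rw [← hga, ← hgb, hlam]
        field_simp
        ring
      obtain ⟨s, hs⟩ := exists_smul_of_det2 (w - v) (x - v)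
        (sub_ne_zero.mpr (Ne.symm hvw)) hgx
      have hxnotin : x ∉ segment ℝ v w := by
        intro hxin
        have : x ∈ segment ℝ v w ∩ segment ℝ p (m p) := ⟨hxin, hxseg⟩
        rw [hseg] at this
        exact this
      have hxv : x = s • (w - v) + v := by rw [← hs]; abel
      rcases le_or_gt s 0 with hs0 | hs0
      · rcases eq_or_lt_of_le hs0 with hs0' | hs0'
        · -- s = 0 : x = v ∈ segment v w, contradiction
          apply hxnotin
          rw [hxv, hs0', zero_smul, zero_add]
          exact left_mem_segment ℝ v w
        · -- s < 0 : v is a convex combination of x and w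
          apply hvhull
          have hxhull : x ∈ convexHull ℝ ((P : Set Pt) \ {v}) := by
            apply segment_subset_convexHull (x := p) (y := m p) ?_ ?_ hxseg
            · exact ⟨hpP, hpv⟩
            · exact ⟨hmpP, hmpv⟩
          have hw2 : w ∈ convexHull ℝ ((P : Set Pt) \ {v}) :=
            subset_convexHull ℝ _ ⟨hw, Ne.symm hvw⟩
          have hns : (0:ℝ) < 1 - s := by linarith
          have hns' : (1:ℝ) - s ≠ 0 := ne_of_gt hns
          have hvmem : v ∈ segment ℝ x w := by
            refine ⟨1 / (1 - s), -s / (1 - s), le_of_lt (div_pos one_pos hns),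
              le_of_lt (div_pos (by linarith) hns), ?_, ?_⟩
            · rw [← add_div, div_eq_iff hns']; ring
            · rw [hxv]
              ext i
              simp [smul_eq_mul]
              field_simp
              ring
          exact (convex_convexHull ℝ _).segment_subset hxhull hw2 hvmem
      · rcases le_or_gt s 1 with hs1 | hs1
        · -- 0 < s ≤ 1 : x ∈ segment v w, contradiction
          apply hxnotin
          refine ⟨1 - s, s, by linarith, le_of_lt hs0, by ring, ?_⟩
          rw [hxv]
          ext i
          simp [smul_eq_mul]
          ring
        · -- s > 1 : w is a convex combination of x and v
          apply hwhull
          have hxhull : x ∈ convexHull ℝ ((P : Set Pt) \ {w}) := by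
            apply segment_subset_convexHull (x := p) (y := m p) ?_ ?_ hxseg
            · exact ⟨hpP, hpw⟩
            · exact ⟨hmpP, hmpw⟩
          have hv2 : v ∈ convexHull ℝ ((P : Set Pt) \ {w}) :=
            subset_convexHull ℝ _ ⟨hv, hvw⟩
          have hspos : (0:ℝ) < s := by linarith
          have hsne : s ≠ 0 := ne_of_gt hspos
          have hwmem : w ∈ segment ℝ x v := by
            refine ⟨1 / s, (s - 1) / s, le_of_lt (div_pos one_pos hspos),
              div_nonneg (by linarith) (by linarith), ?_, ?_⟩
            · rw [← add_div, div_eq_iff hsne]; ring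
            · rw [hxv]
              ext i
              simp [smul_eq_mul]
              field_simp
              ring
          exact (convex_convexHull ℝ _).segment_subset hxhull hv2 hwmem
    · exact absurd h0 (hgz (m p) hmpP hmpv hmpw)
    · exact hpos
  have heven : Even A.card :=
    even_card_invol A.card A m rfl key
      (fun p hp => hm2 p ((hmemA p).mp hp).1)
      (fun p hp => hm3 p ((hmemA p).mp hp).1)
  rw [Nat.even_iff] at heven
  rw [Nat.odd_iff] at hoA
  omega

/-- For a set `P` of `2n` points in general position, an edge `{v,w}` is
infeasible iff both `v` and `w` are vertices of the convex hull of `P` and the number of points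
of `P` strictly on each open side of the line through `v` and `w` is odd. -/
theorem infeasible_iff_hull_and_odd_sides (n : ℕ) (P : Finset Pt) (hcard : P.card = 2 * n)
    (hgp : GenPos P) (v w : Pt) (hv : v ∈ P) (hw : w ∈ P) (hvw : v ≠ w) :
    ¬ Feasible P v w ↔
      ((v ∉ convexHull ℝ ((P : Set Pt) \ {v}) ∧
        w ∉ convexHull ℝ ((P : Set Pt) \ {w})) ∧
       (Odd {p ∈ (P : Set Pt) | 0 < det2 (w - v) (p - v)}.ncard ∧
        Odd {p ∈ (P : Set Pt) | det2 (w - v) (p - v) < 0}.ncard)) := by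
  have hAset : {p ∈ (P : Set Pt) | 0 < det2 (w - v) (p - v)}.ncard
      = (P.filter (fun p => 0 < det2 (w - v) (p - v))).card := by
    rw [show {p ∈ (P : Set Pt) | 0 < det2 (w - v) (p - v)}
        = ↑(P.filter (fun p => 0 < det2 (w - v) (p - v))) by ext p; simp]
    exact Set.ncard_coe_finset _
  have hBset : {p ∈ (P : Set Pt) | det2 (w - v) (p - v) < 0}.ncard
      = (P.filter (fun p => det2 (w - v) (p - v) < 0)).card := by
    rw [show {p ∈ (P : Set Pt) | det2 (w - v) (p - v) < 0}
        = ↑(P.filter (fun p => det2 (w - v) (p - v) < 0)) by ext p; simp]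
    exact Set.ncard_coe_finset _
  have hPeven : Even P.card := ⟨n, by omega⟩
  have hsplit := sides_split P hgp v w hv hw hvw
  constructor
  · intro hnf
    by_contra hR
    apply hnf
    rcases not_and_or.mp hR with h | h
    · rcases not_and_or.mp h with h' | h'
      · rw [not_not] at h'
        exact feasible_of P hgp v w hv hw hvw hPeven (Or.inr h')
      · rw [not_not] at h'
        exact feasible_symm P v w hw
          (feasible_of P hgp w v hw hv (Ne.symm hvw) hPeven (Or.inr h'))
    · rcases not_and_or.mp h with h' | h'
      · rw [hAset, Nat.not_odd_iff_even] at h'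
        exact feasible_of P hgp v w hv hw hvw hPeven (Or.inl h')
      · rw [hBset, Nat.not_odd_iff_even] at h'
        have heq : Even (P.filter (fun p => 0 < det2 (w - v) (p - v))).card := by
          rw [Nat.even_iff] at h' hPeven ⊢
          omega
        exact feasible_of P hgp v w hv hw hvw hPeven (Or.inl heq)
  · rintro ⟨⟨hvh, hwh⟩, ⟨ho1, _⟩⟩
    rw [hAset] at ho1
    exact infeasible_of P hgp v w hv hw hvw hvh hwh ho1
end
end

section
/- Let P be a set of 2n distinct points in the Euclidean plane in general position. If {v,w} is a feasible edge whose length dist(v,w) is maximal among all feasible edges of P, then at least one of v, w is a vertex of the convex hull of P. -/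
noncomputable section

/-- Oriented determinant of `(b-a, c-a)`. -/
def dt (a b c : Pt) : ℝ := (b 0 - a 0) * (c 1 - a 1) - (b 1 - a 1) * (c 0 - a 0)

lemma pt_ext {x y : Pt} (h0 : x 0 = y 0) (h1 : x 1 = y 1) : x = y := by
  ext i; fin_cases i <;> assumption

lemma pt_ne_iff {x y : Pt} : x ≠ y ↔ x 0 ≠ y 0 ∨ x 1 ≠ y 1 := by
  constructor
  · intro h
    by_contra hc
    push_neg at hc
    exact h (pt_ext hc.1 hc.2)
  · rintro (h | h) rfl <;> exact h rfl

lemma smul_add_coord (a b : ℝ) (x y : Pt) (i : Fin 2) :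
    (a • x + b • y) i = a * x i + b * y i := by
  simp

/-- If the determinant vanishes, the three points are collinear. -/
lemma collinear_of_dt_eq_zero {a b c : Pt} (hab : a ≠ b) (h : dt a b c = 0) :
    Collinear ℝ ({a, b, c} : Set Pt) := by
  rw [collinear_iff_of_mem (Set.mem_insert a {b, c})]
  refine ⟨b - a, ?_⟩
  intro x hx
  rcases hx with rfl | rfl | rfl
  · exact ⟨0, by simp⟩
  · exact ⟨1, by simp⟩
  · -- third point
    unfold dt at h
    rcases pt_ne_iff.mp hab with h0 | h0
    · have hb0 : b 0 - a 0 ≠ 0 := sub_ne_zero.mpr (fun hh => h0 hh.symm)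
      refine ⟨(x 0 - a 0) / (b 0 - a 0), ?_⟩
      apply pt_ext
      · simp only [vadd_eq_add, PiLp.add_apply, PiLp.smul_apply, PiLp.sub_apply, smul_eq_mul]
        field_simp
        ring
      · simp only [vadd_eq_add, PiLp.add_apply, PiLp.smul_apply, PiLp.sub_apply, smul_eq_mul]
        field_simp
        nlinarith [h]
    · have hb1 : b 1 - a 1 ≠ 0 := sub_ne_zero.mpr (fun hh => h0 hh.symm)
      refine ⟨(x 1 - a 1) / (b 1 - a 1), ?_⟩
      apply pt_ext
      · simp only [vadd_eq_add, PiLp.add_apply, PiLp.smul_apply, PiLp.sub_apply, smul_eq_mul]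
        field_simp
        nlinarith [h]
      · simp only [vadd_eq_add, PiLp.add_apply, PiLp.smul_apply, PiLp.sub_apply, smul_eq_mul]
        field_simp
        ring

lemma dt_ne_of_genpos {P : Finset Pt} (hgp : GenPos P) {a b c : Pt}
    (ha : a ∈ P) (hb : b ∈ P) (hc : c ∈ P) (hab : a ≠ b) (hac : a ≠ c) (hbc : b ≠ c) :
    dt a b c ≠ 0 := fun h => hgp a ha b hb c hc hab hac hbc (collinear_of_dt_eq_zero hab h)

/-- Points of the convex hull satisfy any affine inequality valid on the set. -/
lemma hull_affine_le {S : Set Pt} {A B C : ℝ} (h : ∀ x ∈ S, A * x 0 + B * x 1 ≤ C) :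
    ∀ y ∈ convexHull ℝ S, A * y 0 + B * y 1 ≤ C := by
  have hconv : Convex ℝ {x : Pt | A * x 0 + B * x 1 ≤ C} := by
    intro x hx y hy a b ha hb hab
    simp only [Set.mem_setOf_eq] at *
    have h0 : (a • x + b • y) 0 = a * x 0 + b * y 0 := by simp
    have h1 : (a • x + b • y) 1 = a * x 1 + b * y 1 := by simp
    rw [h0, h1]
    have hC : a * C + b * C = C := by rw [← add_mul, hab, one_mul]
    nlinarith [mul_le_mul_of_nonneg_left hx ha, mul_le_mul_of_nonneg_left hy hb]
  exact fun y hy => convexHull_min h hconv hy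

lemma dist_sq_formula (x y : Pt) :
    dist x y = Real.sqrt ((x 0 - y 0)^2 + (x 1 - y 1)^2) := by
  rw [EuclideanSpace.dist_eq, Fin.sum_univ_two]
  simp [Real.dist_eq, sq_abs]

lemma mem_segment_coord {x y ξ : Pt} (h : ξ ∈ segment ℝ x y) :
    ∃ a b : ℝ, 0 ≤ a ∧ 0 ≤ b ∧ a + b = 1 ∧
      ξ 0 = a * x 0 + b * y 0 ∧ ξ 1 = a * x 1 + b * y 1 := by
  obtain ⟨a, b, ha, hb, hab, hco⟩ := h
  exact ⟨a, b, ha, hb, hab, by rw [← hco]; simp, by rw [← hco]; simp⟩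

lemma dt_self_right (p z : Pt) : dt p z p = 0 := by unfold dt; ring
lemma dt_self_z (p z : Pt) : dt p z z = 0 := by unfold dt; ring

set_option maxHeartbeats 1600000 in
lemma cone_lemma (α β : ℝ) (p z : Pt) (hpz : p ≠ z) :
    ∀ N : ℕ, ∀ S : Finset Pt, S.card = N → GenPos S → p ∈ S → z ∈ S →
    (∀ x ∈ S, x ≠ p → α * (x 0 - p 0) + β * (x 1 - p 1) < 0) →
    Even (S.filter (fun x => 0 < dt p z x)).card →
    Even (S.filter (fun x => dt p z x < 0)).card →
    ∃ m : Pt → Pt, IsNCMatching S m ∧ m p = z := by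
  intro N
  induction N using Nat.strong_induction_on with
  | _ N IH =>
  intro S hcardN hgp hp hz hsep hposE hnegE
  classical
  by_cases hbig : 2 ≤ (S.filter (fun x => 0 < dt p z x)).card ∨
      2 ≤ (S.filter (fun x => dt p z x < 0)).card
  case neg =>
    -- base case : S = {p, z}
    push_neg at hbig
    have hpos0 : (S.filter (fun x => 0 < dt p z x)).card = 0 := by
      obtain ⟨k, hk⟩ := hposE; omega
    have hneg0 : (S.filter (fun x => dt p z x < 0)).card = 0 := by
      obtain ⟨k, hk⟩ := hnegE; omega
    have hsub : ∀ x ∈ S, x = p ∨ x = z := by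
      intro x hx
      by_contra hc
      push_neg at hc
      have hne : dt p z x ≠ 0 :=
        dt_ne_of_genpos hgp hp hz hx hpz (Ne.symm hc.1) (Ne.symm hc.2)
      rcases hne.lt_or_gt with h | h
      · have : x ∈ S.filter (fun x => dt p z x < 0) := Finset.mem_filter.mpr ⟨hx, h⟩
        rw [Finset.card_eq_zero.mp hneg0] at this
        exact Finset.notMem_empty x this
      · have : x ∈ S.filter (fun x => 0 < dt p z x) := Finset.mem_filter.mpr ⟨hx, h⟩
        rw [Finset.card_eq_zero.mp hpos0] at this
        exact Finset.notMem_empty x this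
    refine ⟨fun x => if x = p then z else if x = z then p else x, ⟨?_, ?_, ?_, ?_⟩, by simp⟩
    · intro x hx
      rcases hsub x hx with rfl | rfl
      · simpa using hz
      · simp only [if_neg (Ne.symm hpz), if_pos rfl]; exact hp
    · intro x hx
      rcases hsub x hx with rfl | rfl
      · simp [Ne.symm hpz]
      · simp [Ne.symm hpz]
    · intro x hx
      rcases hsub x hx with rfl | rfl
      · simpa using Ne.symm hpz
      · simp [Ne.symm hpz, hpz]
    · intro x hx y hy hyx hymx
      exfalso
      rcases hsub x hx with rfl | rfl
      · simp only [if_pos rfl] at hymx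
        rcases hsub y hy with rfl | rfl
        · exact hyx rfl
        · exact hymx rfl
      · simp only [if_neg (Ne.symm hpz), if_pos rfl] at hymx
        rcases hsub y hy with rfl | rfl
        · exact hymx rfl
        · exact hyx rfl
  case pos =>
  -- step case
  have hNpos : 0 < N := hcardN ▸ Finset.card_pos.mpr ⟨p, hp⟩
  have hαβ : 0 < α ^ 2 + β ^ 2 := by
    rcases eq_or_ne α 0 with rfl | hα
    · rcases eq_or_ne β 0 with rfl | hβ
      · exfalso; have := hsep z hz (Ne.symm hpz); simp at this
      · positivity
    · positivity
  have hchoice : ∃ γ δ cc : ℝ, cc ≠ 0 ∧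
      (∀ x y : Pt, (γ * (y 0 - p 0) + δ * (y 1 - p 1)) * (-(α * (x 0 - p 0) + β * (x 1 - p 1)))
        - (γ * (x 0 - p 0) + δ * (x 1 - p 1)) * (-(α * (y 0 - p 0) + β * (y 1 - p 1)))
        = cc * dt p x y) ∧
      ∃ y1, y1 ∈ S ∧ ∃ y2, y2 ∈ S ∧ y1 ≠ y2 ∧ 0 < cc * dt p z y1 ∧ 0 < cc * dt p z y2 := by
    rcases hbig with hA | hB
    · obtain ⟨y1, hy1, y2, hy2, h12⟩ :=
        (Finset.one_lt_card (s := S.filter (fun x => 0 < dt p z x))).mp (by omega)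
      rw [Finset.mem_filter] at hy1 hy2
      refine ⟨β, -α, α ^ 2 + β ^ 2, ne_of_gt hαβ, ?_, y1, hy1.1, y2, hy2.1, h12, ?_, ?_⟩
      · intro x y; unfold dt; ring
      · exact mul_pos hαβ hy1.2
      · exact mul_pos hαβ hy2.2
    · obtain ⟨y1, hy1, y2, hy2, h12⟩ :=
        (Finset.one_lt_card (s := S.filter (fun x => dt p z x < 0))).mp (by omega)
      rw [Finset.mem_filter] at hy1 hy2
      refine ⟨-β, α, -(α ^ 2 + β ^ 2), neg_ne_zero.mpr (ne_of_gt hαβ), ?_, y1, hy1.1, y2, hy2.1, h12, ?_, ?_⟩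
      · intro x y; unfold dt; ring
      · exact mul_pos_of_neg_of_neg (by linarith) hy1.2
      · exact mul_pos_of_neg_of_neg (by linarith) hy2.2
  obtain ⟨γ, δ, cc, hcc, hKA, y1, hy1S, y2, hy2S, hy12, hcy1, hcy2⟩ := hchoice
  set dd : Pt → ℝ := fun x => -(α * (x 0 - p 0) + β * (x 1 - p 1)) with hdd
  set σ : Pt → ℝ := fun x => (γ * (x 0 - p 0) + δ * (x 1 - p 1)) / dd x with hσ
  have hdpos : ∀ x ∈ S, x ≠ p → 0 < dd x := by
    intro x hx hxp; simp only [hdd]; linarith [hsep x hx hxp]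
  have hKA' : ∀ x y : Pt, (γ * (y 0 - p 0) + δ * (y 1 - p 1)) * dd x
      - (γ * (x 0 - p 0) + δ * (x 1 - p 1)) * dd y = cc * dt p x y := fun x y => hKA x y
  have hσlt : ∀ x y : Pt, 0 < dd x → 0 < dd y → (σ x < σ y ↔ 0 < cc * dt p x y) := by
    intro x y hx hy
    simp only [hσ]
    rw [div_lt_div_iff₀ hx hy]
    constructor
    · intro h; linarith [hKA' x y]
    · intro h; linarith [hKA' x y]
  have hdtswap : ∀ x y : Pt, dt p y x = -dt p x y := by intro x y; unfold dt; ring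
  have hσne : ∀ x ∈ S, ∀ y ∈ S, x ≠ p → y ≠ p → x ≠ y → σ x ≠ σ y := by
    intro x hx y hy hxp hyp hxy heq
    have hdx := hdpos x hx hxp
    have hdy := hdpos y hy hyp
    have h1 : ¬ (0 < cc * dt p x y) := by rw [← hσlt x y hdx hdy, heq]; exact lt_irrefl _
    have h2 : ¬ (0 < cc * dt p y x) := by rw [← hσlt y x hdy hdx, heq]; exact lt_irrefl _
    rw [hdtswap] at h2
    have hne : dt p x y ≠ 0 :=
      dt_ne_of_genpos hgp hp hx hy (Ne.symm hxp) (Ne.symm hyp) hxy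
    rcases (mul_ne_zero hcc hne).lt_or_gt with h | h
    · exact h2 (by linarith)
    · exact h1 h
  -- pick the two σ-largest elements t1 t2 of S \ {p}
  have hy1p : y1 ≠ p := by rintro rfl; rw [dt_self_right] at hcy1; simp at hcy1
  have hy2p : y2 ≠ p := by rintro rfl; rw [dt_self_right] at hcy2; simp at hcy2
  obtain ⟨t1, ht1m, ht1max⟩ := (S.erase p).exists_max_image σ
    ⟨z, Finset.mem_erase.mpr ⟨Ne.symm hpz, hz⟩⟩
  have ht1S : t1 ∈ S := Finset.mem_of_mem_erase ht1m
  have ht1p : t1 ≠ p := (Finset.mem_erase.mp ht1m).1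
  obtain ⟨yy, hyyS, hyyp, hyyne1, hcyy⟩ :
      ∃ yy, yy ∈ S ∧ yy ≠ p ∧ yy ≠ t1 ∧ 0 < cc * dt p z yy := by
    rcases eq_or_ne y1 t1 with rfl | hne
    · exact ⟨y2, hy2S, hy2p, Ne.symm hy12, hcy2⟩
    · exact ⟨y1, hy1S, hy1p, hne, hcy1⟩
  obtain ⟨t2, ht2m, ht2max⟩ := ((S.erase p).erase t1).exists_max_image σ
    ⟨yy, Finset.mem_erase.mpr ⟨hyyne1, Finset.mem_erase.mpr ⟨hyyp, hyyS⟩⟩⟩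
  have ht2S : t2 ∈ S := Finset.mem_of_mem_erase (Finset.mem_of_mem_erase ht2m)
  have ht2p : t2 ≠ p := (Finset.mem_erase.mp (Finset.mem_of_mem_erase ht2m)).1
  have ht2ne1 : t2 ≠ t1 := (Finset.mem_erase.mp ht2m).1
  have hddz : 0 < dd z := hdpos z hz (Ne.symm hpz)
  have hddt1 : 0 < dd t1 := hdpos t1 ht1S ht1p
  have hddt2 : 0 < dd t2 := hdpos t2 ht2S ht2p
  have hddyy : 0 < dd yy := hdpos yy hyyS hyyp
  have hσzyy : σ z < σ yy := (hσlt z yy hddz hddyy).mpr hcyy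
  have hσzt2 : σ z < σ t2 :=
    lt_of_lt_of_le hσzyy (ht2max yy (Finset.mem_erase.mpr ⟨hyyne1, Finset.mem_erase.mpr ⟨hyyp, hyyS⟩⟩))
  have ht2z : t2 ≠ z := by rintro rfl; exact lt_irrefl _ hσzt2
  have hσ21 : σ t2 ≤ σ t1 := ht1max t2 (Finset.mem_of_mem_erase ht2m)
  have hσzt1 : σ z < σ t1 := lt_of_lt_of_le hσzt2 hσ21
  have ht1z : t1 ≠ z := by rintro rfl; exact lt_irrefl _ hσzt1
  have hσ21s : σ t2 < σ t1 :=
    lt_of_le_of_ne hσ21 (hσne t2 ht2S t1 ht1S ht2p ht1p ht2ne1)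
  have hmax2 : ∀ x ∈ S, x ≠ p → x ≠ t1 → x ≠ t2 → σ x < σ t2 := by
    intro x hx hxp hx1 hx2
    have hle : σ x ≤ σ t2 := ht2max x
      (Finset.mem_erase.mpr ⟨hx1, Finset.mem_erase.mpr ⟨hxp, hx⟩⟩)
    exact lt_of_le_of_ne hle (hσne x hx t2 ht2S hxp ht2p hx2)
  have hct1 : 0 < cc * dt p z t1 := (hσlt z t1 hddz hddt1).mp hσzt1
  have hct2 : 0 < cc * dt p z t2 := (hσlt z t2 hddz hddt2).mp hσzt2
  -- affine computation helpers
  have hddp : dd p = 0 := by simp [hdd]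
  have hddco : ∀ (x y ξ : Pt) (a : ℝ), ξ 0 = a * x 0 + (1-a) * y 0 →
      ξ 1 = a * x 1 + (1-a) * y 1 → dd ξ = a * dd x + (1-a) * dd y := by
    intro x y ξ a h0 h1; simp only [hdd]; rw [h0, h1]; ring
  have hdtco : ∀ (x y ξ : Pt) (a : ℝ), ξ 0 = a * x 0 + (1-a) * y 0 →
      ξ 1 = a * x 1 + (1-a) * y 1 → dt p ξ y = a * dt p x y := by
    intro x y ξ a h0 h1; unfold dt; rw [h0, h1]; ring
  have hdtco2 : ∀ (x y ξ : Pt) (a : ℝ), ξ 0 = a * x 0 + (1-a) * y 0 →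
      ξ 1 = a * x 1 + (1-a) * y 1 → dt p y ξ = a * dt p y x := by
    intro x y ξ a h0 h1; unfold dt; rw [h0, h1]; ring
  -- both t1 t2 on the same side of the line p z
  have hsame : (0 < dt p z t1 ∧ 0 < dt p z t2) ∨ (dt p z t1 < 0 ∧ dt p z t2 < 0) := by
    rcases mul_pos_iff.mp hct1 with ⟨h1, h2⟩ | ⟨h1, h2⟩ <;>
      rcases mul_pos_iff.mp hct2 with ⟨h3, h4⟩ | ⟨h3, h4⟩
    · exact Or.inl ⟨h2, h4⟩
    · linarith
    · linarith
    · exact Or.inr ⟨h2, h4⟩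
  set S' := (S.erase t1).erase t2 with hS'def
  have ht2in : t2 ∈ S.erase t1 := Finset.mem_erase.mpr ⟨ht2ne1, ht2S⟩
  have hcard' : S'.card = N - 2 := by
    rw [hS'def, Finset.card_erase_of_mem ht2in, Finset.card_erase_of_mem ht1S, hcardN]
    omega
  have hmemS' : ∀ x : Pt, x ∈ S' ↔ x ≠ t2 ∧ x ≠ t1 ∧ x ∈ S := by
    intro x; rw [hS'def]; simp only [Finset.mem_erase]
  have hsubS' : S' ⊆ S := fun x hx => ((hmemS' x).mp hx).2.2
  have hpS' : p ∈ S' := (hmemS' p).mpr ⟨Ne.symm ht2p, Ne.symm ht1p, hp⟩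
  have hzS' : z ∈ S' := (hmemS' z).mpr ⟨Ne.symm ht2z, Ne.symm ht1z, hz⟩
  have hgp' : GenPos S' := fun a ha b hb c hc hab hac hbc =>
    hgp a (hsubS' ha) b (hsubS' hb) c (hsubS' hc) hab hac hbc
  have hsep' : ∀ x ∈ S', x ≠ p → α * (x 0 - p 0) + β * (x 1 - p 1) < 0 :=
    fun x hx => hsep x (hsubS' hx)
  have hfe : ∀ (pr : Pt → Prop) (_ : DecidablePred pr),
      S'.filter pr = ((S.filter pr).erase t1).erase t2 := by
    intro pr hdec
    rw [hS'def, Finset.filter_erase, Finset.filter_erase]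
  have hposE' : Even (S'.filter (fun x => 0 < dt p z x)).card ∧
      Even (S'.filter (fun x => dt p z x < 0)).card := by
    have hkey : ∀ (pr : Pt → Prop) (_ : DecidablePred pr), pr t1 → pr t2 →
        Even (S.filter pr).card → Even (S'.filter pr).card := by
      intro pr hdec h1 h2 hE
      rw [hfe pr hdec]
      have ht1f : t1 ∈ S.filter pr := Finset.mem_filter.mpr ⟨ht1S, h1⟩
      have ht2f : t2 ∈ (S.filter pr).erase t1 :=
        Finset.mem_erase.mpr ⟨ht2ne1, Finset.mem_filter.mpr ⟨ht2S, h2⟩⟩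
      rw [Finset.card_erase_of_mem ht2f, Finset.card_erase_of_mem ht1f]
      have h2le : 2 ≤ (S.filter pr).card := Finset.one_lt_card.mpr
        ⟨t1, ht1f, t2, Finset.mem_filter.mpr ⟨ht2S, h2⟩, Ne.symm ht2ne1⟩
      obtain ⟨k, hk⟩ := hE
      exact ⟨k - 1, by omega⟩
    have hkey2 : ∀ (pr : Pt → Prop) (_ : DecidablePred pr), ¬ pr t1 → ¬ pr t2 →
        Even (S.filter pr).card → Even (S'.filter pr).card := by
      intro pr hdec h1 h2 hE
      rw [hfe pr hdec]
      rw [Finset.erase_eq_of_notMem, Finset.erase_eq_of_notMem]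
      · exact hE
      · exact fun hmem => h1 (Finset.mem_filter.mp hmem).2
      · exact fun hmem => h2 (Finset.mem_filter.mp
          (Finset.mem_of_mem_erase hmem)).2
    rcases hsame with ⟨h1, h2⟩ | ⟨h1, h2⟩
    · exact ⟨hkey _ _ h1 h2 hposE, hkey2 _ _ (by simp; linarith) (by simp; linarith) hnegE⟩
    · exact ⟨hkey2 _ _ (by simp; linarith) (by simp; linarith) hposE, hkey _ _ h1 h2 hnegE⟩
  obtain ⟨m', hm'NC, hm'p⟩ := IH (N - 2) (by omega) S' hcard' hgp' hpS' hzS'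
    hsep' hposE'.1 hposE'.2
  obtain ⟨hm1, hm2, hm3, hm4⟩ := hm'NC
  -- key geometric disjointness
  have hdisj : ∀ q ∈ S', segment ℝ t1 t2 ∩ segment ℝ q (m' q) = ∅ := by
    intro q hqS'
    have hq'S' : m' q ∈ S' := hm1 q hqS'
    set q' := m' q with hq'def
    rw [Set.eq_empty_iff_forall_notMem]
    rintro ξ ⟨hξt, hξq⟩
    obtain ⟨a1, b1, ha1, hb1, hab1, hx0, hx1⟩ := mem_segment_coord hξt
    have hx0' : ξ 0 = a1 * t1 0 + (1 - a1) * t2 0 := by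
      rw [show (1:ℝ) - a1 = b1 by linarith]; exact hx0
    have hx1' : ξ 1 = a1 * t1 1 + (1 - a1) * t2 1 := by
      rw [show (1:ℝ) - a1 = b1 by linarith]; exact hx1
    -- ξ is in the open halfplane, and σ t2 ≤ σ ξ
    have hddξ : dd ξ = a1 * dd t1 + (1 - a1) * dd t2 := hddco _ _ _ _ hx0' hx1'
    have hddξpos : 0 < dd ξ := by
      rw [hddξ]
      rcases lt_or_eq_of_le ha1 with h | h
      · nlinarith
      · rw [← h]; simpa using hddt2
    have hσt2ξ : σ t2 ≤ σ ξ := by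
      by_contra hcon
      push_neg at hcon
      rw [hσlt ξ t2 hddξpos hddt2] at hcon
      have hdtv : dt p ξ t2 = a1 * dt p t1 t2 := hdtco _ _ _ _ hx0' hx1'
      have h12neg : cc * dt p t1 t2 < 0 := by
        have := (hσlt t2 t1 hddt2 hddt1).mp hσ21s
        rw [hdtswap] at this; linarith
      rw [hdtv] at hcon
      nlinarith
    -- now analyse the other segment
    by_cases hqp : q = p ∨ q' = p
    · -- the other segment is the segment from p to z
      have hpz' : ξ ∈ segment ℝ p z := by
        rcases hqp with rfl | hq'p
        · rwa [hq'def, hm'p] at hξq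
        · have hqz : q = z := by
            have := hm2 q hqS'
            rw [← hq'def, hq'p] at this
            rw [← this, hm'p]
          rw [hqz, hq'p] at hξq
          rwa [segment_symm] at hξq
      obtain ⟨a2, b2, ha2, hb2, hab2, hz0, hz1⟩ := mem_segment_coord hpz'
      have hz0' : ξ 0 = a2 * p 0 + (1 - a2) * z 0 := by
        rw [show (1:ℝ) - a2 = b2 by linarith]; exact hz0
      have hz1' : ξ 1 = a2 * p 1 + (1 - a2) * z 1 := by
        rw [show (1:ℝ) - a2 = b2 by linarith]; exact hz1
      have hdtzξ : dt p z ξ = 0 := by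
        have := hdtco2 p z ξ a2 hz0' hz1'
        rw [this, dt_self_right]; ring
      have h1 : ¬ σ z < σ ξ := by
        rw [hσlt z ξ hddz hddξpos, hdtzξ]; simp
      exact h1 (lt_of_lt_of_le hσzt2 hσt2ξ)
    · push_neg at hqp
      obtain ⟨hqnp, hq'np⟩ := hqp
      have hqS : q ∈ S := hsubS' hqS'
      have hq'S : q' ∈ S := hsubS' hq'S'
      have hddq : 0 < dd q := hdpos q hqS hqnp
      have hddq' : 0 < dd q' := hdpos q' hq'S hq'np
      have hσq : σ q < σ t2 := hmax2 q hqS hqnp ((hmemS' q).mp hqS').2.1 ((hmemS' q).mp hqS').1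
      have hσq' : σ q' < σ t2 := hmax2 q' hq'S hq'np ((hmemS' q').mp hq'S').2.1 ((hmemS' q').mp hq'S').1
      obtain ⟨a2, b2, ha2, hb2, hab2, hz0, hz1⟩ := mem_segment_coord hξq
      have hz0' : ξ 0 = a2 * q 0 + (1 - a2) * q' 0 := by
        rw [show (1:ℝ) - a2 = b2 by linarith]; exact hz0
      have hz1' : ξ 1 = a2 * q 1 + (1 - a2) * q' 1 := by
        rw [show (1:ℝ) - a2 = b2 by linarith]; exact hz1
      rcases le_total (σ q) (σ q') with hle | hle
      · -- σ ξ ≤ σ q'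
        have hkey : ¬ σ q' < σ ξ := by
          rw [hσlt q' ξ hddq' hddξpos]
          have hv : dt p q' ξ = a2 * dt p q' q := hdtco2 _ _ _ _ hz0' hz1'
          have : ¬ (0 < cc * dt p q' q) := by
            rw [← hσlt q' q hddq' hddq]; exact not_lt.mpr hle
          rw [hv]; nlinarith [not_lt.mp this]
        exact hkey (lt_of_lt_of_le hσq' hσt2ξ)
      · have hkey : ¬ σ q < σ ξ := by
          have hz0'' : ξ 0 = (1 - a2) * q' 0 + (1 - (1-a2)) * q 0 := by
            rw [show (1:ℝ) - (1 - a2) = a2 by ring]; linarith [hz0']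
          have hz1'' : ξ 1 = (1 - a2) * q' 1 + (1 - (1-a2)) * q 1 := by
            rw [show (1:ℝ) - (1 - a2) = a2 by ring]; linarith [hz1']
          rw [hσlt q ξ hddq hddξpos]
          have hv : dt p q ξ = (1 - a2) * dt p q q' := hdtco2 _ _ _ _ hz0'' hz1''
          have : ¬ (0 < cc * dt p q q') := by
            rw [← hσlt q q' hddq hddq']; exact not_lt.mpr hle
          rw [hv]; nlinarith [not_lt.mp this, hb2, hab2]
        exact hkey (lt_of_lt_of_le hσq hσt2ξ)
  -- assemble the matching
  have ht1ne2 : t1 ≠ t2 := Ne.symm ht2ne1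
  set mm : Pt → Pt := fun x => if x = t1 then t2 else if x = t2 then t1 else m' x with hmm
  have hmmt1 : mm t1 = t2 := by simp [hmm]
  have hmmt2 : mm t2 = t1 := by simp [hmm, ht2ne1]
  have hmmo : ∀ x : Pt, x ≠ t1 → x ≠ t2 → mm x = m' x := by
    intro x h1 h2; simp [hmm, h1, h2]
  refine ⟨mm, ⟨?_, ?_, ?_, ?_⟩, ?_⟩
  · intro x hx
    by_cases hx1 : x = t1
    · rw [hx1, hmmt1]; exact ht2S
    by_cases hx2 : x = t2
    · rw [hx2, hmmt2]; exact ht1S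
    · rw [hmmo x hx1 hx2]
      exact hsubS' (hm1 x ((hmemS' x).mpr ⟨hx2, hx1, hx⟩))
  · intro x hx
    by_cases hx1 : x = t1
    · rw [hx1, hmmt1, hmmt2]
    by_cases hx2 : x = t2
    · rw [hx2, hmmt2, hmmt1]
    · have hxS' : x ∈ S' := (hmemS' x).mpr ⟨hx2, hx1, hx⟩
      have hmx : m' x ∈ S' := hm1 x hxS'
      rw [hmmo x hx1 hx2, hmmo (m' x) ((hmemS' (m' x)).mp hmx).2.1 ((hmemS' (m' x)).mp hmx).1]
      exact hm2 x hxS'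
  · intro x hx
    by_cases hx1 : x = t1
    · rw [hx1, hmmt1]; exact ht2ne1
    by_cases hx2 : x = t2
    · rw [hx2, hmmt2]; exact ht1ne2
    · rw [hmmo x hx1 hx2]
      exact hm3 x ((hmemS' x).mpr ⟨hx2, hx1, hx⟩)
  · intro x hx y hy hyx hymx
    by_cases hx1 : x = t1
    · rw [hx1, hmmt1] at hymx ⊢
      rw [hx1] at hyx
      rw [hmmo y hyx hymx]
      exact hdisj y ((hmemS' y).mpr ⟨hymx, hyx, hy⟩)
    by_cases hx2 : x = t2
    · rw [hx2, hmmt2] at hymx ⊢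
      rw [hx2] at hyx
      rw [hmmo y hymx hyx, segment_symm]
      exact hdisj y ((hmemS' y).mpr ⟨hyx, hymx, hy⟩)
    · have hxS' : x ∈ S' := (hmemS' x).mpr ⟨hx2, hx1, hx⟩
      rw [hmmo x hx1 hx2] at hymx ⊢
      by_cases hy1 : y = t1
      · rw [hy1, hmmt1, Set.inter_comm]
        exact hdisj x hxS'
      by_cases hy2 : y = t2
      · rw [hy2, hmmt2, segment_symm (𝕜 := ℝ) (x := t2) (y := t1), Set.inter_comm]
        exact hdisj x hxS'
      · rw [hmmo y hy1 hy2]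
        exact hm4 x hxS' y ((hmemS' y).mpr ⟨hy2, hy1, hy⟩) hyx hymx
  · rw [hmmo p (Ne.symm ht1p) (Ne.symm ht2p)]
    exact hm'p

set_option maxHeartbeats 1600000 in
lemma feasible_of_extreme_interior (P : Finset Pt) (hgp : GenPos P) (hcard : Even P.card)
    (p z : Pt) (hp : p ∈ P) (hz : z ∈ P) (hpz : p ≠ z)
    (α β : ℝ) (hsep : ∀ x ∈ P, x ≠ p → α * (x 0 - p 0) + β * (x 1 - p 1) < 0)
    (hzint : z ∈ convexHull ℝ ((P : Set Pt) \ {z})) :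
    ∃ m : Pt → Pt, IsNCMatching P m ∧ m p = z := by
  classical
  set Apos := P.filter (fun x => 0 < dt p z x) with hApos
  set Aneg := P.filter (fun x => dt p z x < 0) with hAneg
  -- cardinal bookkeeping : Apos.card + Aneg.card = P.card - 2
  have hPfull : P.filter (fun x => ¬ (0 < dt p z x ∨ dt p z x < 0)) = {p, z} := by
    ext x
    simp only [Finset.mem_filter, Finset.mem_insert, Finset.mem_singleton]
    constructor
    · rintro ⟨hxP, hx0⟩
      push_neg at hx0
      by_contra hc
      push_neg at hc
      exact dt_ne_of_genpos hgp hp hz hxP hpz (Ne.symm hc.1) (Ne.symm hc.2)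
        (le_antisymm hx0.1 hx0.2)
    · rintro (rfl | rfl)
      · exact ⟨hp, by rw [dt_self_right]; simp⟩
      · exact ⟨hz, by rw [dt_self_z]; simp⟩
  have hcount : Apos.card + Aneg.card + 2 = P.card := by
    have hdisj : Disjoint Apos Aneg := by
      rw [Finset.disjoint_left]
      intro x hx1 hx2
      rw [hApos, Finset.mem_filter] at hx1
      rw [hAneg, Finset.mem_filter] at hx2
      linarith [hx1.2, hx2.2]
    have hu : Apos ∪ Aneg = P.filter (fun x => 0 < dt p z x ∨ dt p z x < 0) := by
      rw [hApos, hAneg, Finset.filter_or]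
    have h2 : (P.filter (fun x => ¬ (0 < dt p z x ∨ dt p z x < 0))).card = 2 := by
      rw [hPfull]; rw [Finset.card_insert_of_notMem (by simpa using hpz), Finset.card_singleton]
    have h3 := Finset.card_filter_add_card_filter_not
      (s := P) (p := fun x => 0 < dt p z x ∨ dt p z x < 0)
    rw [h2] at h3
    rw [← Finset.card_union_of_disjoint hdisj, hu]
    omega
  by_cases hAE : Even Apos.card
  · have hBE : Even Aneg.card := by
      rw [Nat.even_iff] at *
      omega
    exact cone_lemma α β p z hpz P.card P rfl hgp hp hz hsep hAE hBE
  · -- both sides odd : remove a "bridge" pair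
    have hAO : Odd Apos.card := Nat.odd_iff.mpr (by rw [Nat.even_iff] at hAE; omega)
    have hBO : Odd Aneg.card := by
      rw [Nat.odd_iff]
      rw [Nat.even_iff] at hcard hAE
      omega
    have hAne : Apos.Nonempty := Finset.card_pos.mp (by have := hAO.pos; omega)
    have hBne : Aneg.Nonempty := Finset.card_pos.mp (by have := hBO.pos; omega)
    -- the functional along the line p z, and the crossing position
    set gg : Pt → ℝ := fun x => (x 0 - p 0) * (z 0 - p 0) + (x 1 - p 1) * (z 1 - p 1) with hgg
    set M : Pt × Pt → ℝ := fun ab =>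
      (dt p z ab.1 * gg ab.2 - dt p z ab.2 * gg ab.1) / (dt p z ab.1 - dt p z ab.2) with hM
    obtain ⟨ab, habmem, habmax⟩ := (Apos ×ˢ Aneg).exists_max_image M
      (Finset.Nonempty.product hAne hBne)
    obtain ⟨haA, hbB⟩ := Finset.mem_product.mp habmem
    set a := ab.1 with hadef
    set b := ab.2 with hbdef
    have haP : a ∈ P := (Finset.mem_filter.mp haA).1
    have hbP : b ∈ P := (Finset.mem_filter.mp hbB).1
    have hDa : 0 < dt p z a := (Finset.mem_filter.mp haA).2
    have hDb : dt p z b < 0 := (Finset.mem_filter.mp hbB).2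
    have hab : a ≠ b := by intro h; rw [h] at hDa; linarith
    have hap : a ≠ p := by intro h; rw [h, dt_self_right] at hDa; linarith
    have haz : a ≠ z := by intro h; rw [h, dt_self_z] at hDa; linarith
    have hbp : b ≠ p := by intro h; rw [h, dt_self_right] at hDb; linarith
    have hbz : b ≠ z := by intro h; rw [h, dt_self_z] at hDb; linarith
    have hdda : 0 < -(α * (a 0 - p 0) + β * (a 1 - p 1)) := by linarith [hsep a haP hap]
    have hddb : 0 < -(α * (b 0 - p 0) + β * (b 1 - p 1)) := by linarith [hsep b hbP hbp]
    have hddz : 0 < -(α * (z 0 - p 0) + β * (z 1 - p 1)) := by linarith [hsep z hz (Ne.symm hpz)]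
    have hZn : 0 < (z 0 - p 0)^2 + (z 1 - p 1)^2 := by
      rcases pt_ne_iff.mp hpz with h | h
      · have : z 0 - p 0 ≠ 0 := fun hc => h (by linarith)
        positivity
      · have : z 1 - p 1 ≠ 0 := fun hc => h (by linarith)
        positivity
    -- numerator of M a b is positive
    have heab : 0 < dt p z a * gg b - dt p z b * gg a := by
      have hkey : (dt p z a * gg b - dt p z b * gg a) * (-(α * (z 0 - p 0) + β * (z 1 - p 1)))
          = ((z 0 - p 0)^2 + (z 1 - p 1)^2) *
            (dt p z a * (-(α * (b 0 - p 0) + β * (b 1 - p 1)))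
              - dt p z b * (-(α * (a 0 - p 0) + β * (a 1 - p 1)))) := by
        simp only [hgg]; unfold dt; ring
      nlinarith [mul_pos hDa hddb, mul_pos (neg_pos.mpr hDb) hdda]
    have hMab : 0 < M (a, b) := by
      rw [hM]
      exact div_pos heab (by simp only; linarith)
    -- every other point of P is strictly on the p-side of the line a b
    have hpside : dt a b p < 0 := by
      have hkey : dt a b p * ((z 0 - p 0)^2 + (z 1 - p 1)^2)
          = -(dt p z a * gg b - dt p z b * gg a) := by
        simp only [hgg]; unfold dt; ring
      nlinarith
    have hqside : ∀ q ∈ P, q ≠ a → q ≠ b → q ≠ p → q ≠ z → dt a b q < 0 := by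
      intro q hqP hqa hqb hqp hqz
      have hψne : dt a b q ≠ 0 := dt_ne_of_genpos hgp haP hbP hqP hab (Ne.symm hqa) (Ne.symm hqb)
      have hDq : dt p z q ≠ 0 := dt_ne_of_genpos hgp hp hz hqP hpz (Ne.symm hqp) (Ne.symm hqz)
      rcases hDq.lt_or_gt with hq | hq
      · -- q on the negative side : compare with the pair (a, q)
        have hmem : (a, q) ∈ Apos ×ˢ Aneg :=
          Finset.mem_product.mpr ⟨haA, Finset.mem_filter.mpr ⟨hqP, hq⟩⟩
        have hle := habmax (a, q) hmem
        rw [hM] at hle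
        simp only at hle
        rw [div_le_div_iff₀ (by linarith) (by linarith)] at hle
        have hkey : (dt p z a * gg q - dt p z q * gg a) * (dt p z a - dt p z b)
            - (dt p z a * gg b - dt p z b * gg a) * (dt p z a - dt p z q)
            = dt p z a * ((z 0 - p 0)^2 + (z 1 - p 1)^2) * dt a b q := by
          simp only [hgg]; unfold dt; ring
        rcases hψne.lt_or_gt with h | h
        · exact h
        · exfalso; nlinarith [mul_pos (mul_pos hDa hZn) h]
      · -- q on the positive side : compare with the pair (q, b)
        have hmem : (q, b) ∈ Apos ×ˢ Aneg :=
          Finset.mem_product.mpr ⟨Finset.mem_filter.mpr ⟨hqP, hq⟩, hbB⟩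
        have hle := habmax (q, b) hmem
        rw [hM] at hle
        simp only at hle
        rw [div_le_div_iff₀ (by linarith) (by linarith)] at hle
        have hkey : (dt p z q * gg b - dt p z b * gg q) * (dt p z a - dt p z b)
            - (dt p z a * gg b - dt p z b * gg a) * (dt p z q - dt p z b)
            = (- dt p z b) * ((z 0 - p 0)^2 + (z 1 - p 1)^2) * dt a b q := by
          simp only [hgg]; unfold dt; ring
        rcases hψne.lt_or_gt with h | h
        · exact h
        · exfalso; nlinarith [mul_pos (mul_pos (neg_pos.mpr hDb) hZn) h]
    have hzside : dt a b z < 0 := by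
      have hzne : dt a b z ≠ 0 := dt_ne_of_genpos hgp haP hbP hz hab haz hbz
      have hle : ∀ x ∈ (P : Set Pt) \ {z},
          -(b 1 - a 1) * x 0 + (b 0 - a 0) * x 1 ≤ (b 0 - a 0) * a 1 - (b 1 - a 1) * a 0 := by
        rintro x ⟨hxP, hxz⟩
        rw [Finset.mem_coe] at hxP
        rw [Set.mem_singleton_iff] at hxz
        have hform : ∀ y : Pt, -(b 1 - a 1) * y 0 + (b 0 - a 0) * y 1
            - ((b 0 - a 0) * a 1 - (b 1 - a 1) * a 0) = dt a b y := by
          intro y; unfold dt; ring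
        rcases eq_or_ne x a with hxa | hxa
        · have hz0 : dt a b x = 0 := by rw [hxa]; unfold dt; ring
          linarith [hform x]
        rcases eq_or_ne x b with hxb | hxb
        · have hz0 : dt a b x = 0 := by rw [hxb]; unfold dt; ring
          linarith [hform x]
        rcases eq_or_ne x p with hxp | hxp
        · have := hform x
          rw [hxp] at this ⊢
          linarith [hpside]
        · linarith [hform x, hqside x hxP hxa hxb hxp hxz]
      have := hull_affine_le hle z hzint
      have hform : -(b 1 - a 1) * z 0 + (b 0 - a 0) * z 1
          - ((b 0 - a 0) * a 1 - (b 1 - a 1) * a 0) = dt a b z := by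
        unfold dt; ring
      rcases hzne.lt_or_gt with h | h
      · exact h
      · exfalso; linarith
    -- remove the bridge pair (a, b) and match the rest by the cone lemma
    set P₂ := (P.erase a).erase b with hP2
    have hmem2 : ∀ x : Pt, x ∈ P₂ ↔ x ≠ b ∧ x ≠ a ∧ x ∈ P := by
      intro x; rw [hP2]; simp only [Finset.mem_erase]
    have hsub2 : P₂ ⊆ P := fun x hx => ((hmem2 x).mp hx).2.2
    have hp2 : p ∈ P₂ := (hmem2 p).mpr ⟨Ne.symm hbp, Ne.symm hap, hp⟩
    have hz2 : z ∈ P₂ := (hmem2 z).mpr ⟨Ne.symm hbz, Ne.symm haz, hz⟩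
    have hgp2 : GenPos P₂ := fun x hx y hy w hw hxy hxw hyw =>
      hgp x (hsub2 hx) y (hsub2 hy) w (hsub2 hw) hxy hxw hyw
    have hsep2 : ∀ x ∈ P₂, x ≠ p → α * (x 0 - p 0) + β * (x 1 - p 1) < 0 :=
      fun x hx => hsep x (hsub2 hx)
    have hbnA : b ∉ Apos := by
      intro hmem; exact absurd (Finset.mem_filter.mp hmem).2 (by linarith)
    have hanB : a ∉ Aneg := by
      intro hmem; exact absurd (Finset.mem_filter.mp hmem).2 (by linarith)
    have hposE2 : Even (P₂.filter (fun x => 0 < dt p z x)).card := by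
      have : P₂.filter (fun x => 0 < dt p z x) = (Apos.erase a).erase b := by
        rw [hP2, Finset.filter_erase, Finset.filter_erase, hApos]
      rw [this, Finset.erase_eq_of_notMem (fun hc => hbnA (Finset.mem_of_mem_erase hc)),
        Finset.card_erase_of_mem haA]
      obtain ⟨k, hk⟩ := hAO
      exact ⟨k, by omega⟩
    have hnegE2 : Even (P₂.filter (fun x => dt p z x < 0)).card := by
      have : P₂.filter (fun x => dt p z x < 0) = (Aneg.erase a).erase b := by
        rw [hP2, Finset.filter_erase, Finset.filter_erase, hAneg]
      rw [this, Finset.erase_eq_of_notMem hanB, Finset.card_erase_of_mem hbB]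
      obtain ⟨k, hk⟩ := hBO
      exact ⟨k, by omega⟩
    obtain ⟨m₂, hNC₂, hm₂p⟩ := cone_lemma α β p z hpz P₂.card P₂ rfl hgp2 hp2 hz2
      hsep2 hposE2 hnegE2
    obtain ⟨hm1, hm2, hm3, hm4⟩ := hNC₂
    -- every point of P₂ is strictly on one side of the line a b
    have hψ2 : ∀ x ∈ P₂, dt a b x < 0 := by
      intro x hx
      obtain ⟨hxb, hxa, hxP⟩ := (hmem2 x).mp hx
      rcases eq_or_ne x p with hxp | hxp
      · rw [hxp]; exact hpside
      rcases eq_or_ne x z with hxz | hxz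
      · rw [hxz]; exact hzside
      · exact hqside x hxP hxa hxb hxp hxz
    have hdt3aff : ∀ (x y ξ : Pt) (t : ℝ), ξ 0 = t * x 0 + (1-t) * y 0 →
        ξ 1 = t * x 1 + (1-t) * y 1 → dt a b ξ = t * dt a b x + (1-t) * dt a b y := by
      intro x y ξ t h0 h1; unfold dt; rw [h0, h1]; ring
    have hdisjAB : ∀ q ∈ P₂, segment ℝ a b ∩ segment ℝ q (m₂ q) = ∅ := by
      intro q hq
      have hq' : m₂ q ∈ P₂ := hm1 q hq
      rw [Set.eq_empty_iff_forall_notMem]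
      rintro ξ ⟨h1, h2⟩
      obtain ⟨t1, t2, ht1, ht2, ht12, hc0, hc1⟩ := mem_segment_coord h1
      obtain ⟨s1, s2, hs1, hs2, hs12, hd0, hd1⟩ := mem_segment_coord h2
      have hc0' : ξ 0 = t1 * a 0 + (1 - t1) * b 0 := by
        rw [show (1:ℝ) - t1 = t2 by linarith]; exact hc0
      have hc1' : ξ 1 = t1 * a 1 + (1 - t1) * b 1 := by
        rw [show (1:ℝ) - t1 = t2 by linarith]; exact hc1
      have hd0' : ξ 0 = s1 * q 0 + (1 - s1) * (m₂ q) 0 := by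
        rw [show (1:ℝ) - s1 = s2 by linarith]; exact hd0
      have hd1' : ξ 1 = s1 * q 1 + (1 - s1) * (m₂ q) 1 := by
        rw [show (1:ℝ) - s1 = s2 by linarith]; exact hd1
      have hzero : dt a b ξ = 0 := by
        rw [hdt3aff a b ξ t1 hc0' hc1']
        have e1 : dt a b a = 0 := by unfold dt; ring
        have e2 : dt a b b = 0 := by unfold dt; ring
        rw [e1, e2]; ring
      have hneg : dt a b ξ < 0 := by
        rw [hdt3aff q (m₂ q) ξ s1 hd0' hd1']
        have e1 : dt a b q < 0 := hψ2 q hq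
        have e2 : dt a b (m₂ q) < 0 := hψ2 (m₂ q) hq'
        rcases eq_or_lt_of_le hs1 with h | h
        · rw [← h]; simpa using e2
        · have : (1 - s1) * dt a b (m₂ q) ≤ 0 :=
            mul_nonpos_of_nonneg_of_nonpos (by linarith) e2.le
          nlinarith [mul_neg_of_pos_of_neg h e1]
      rw [hzero] at hneg
      exact lt_irrefl _ hneg
    -- assemble
    have hba : b ≠ a := Ne.symm hab
    set mm : Pt → Pt := fun x => if x = a then b else if x = b then a else m₂ x with hmm
    have hmma : mm a = b := by simp [hmm]
    have hmmb : mm b = a := by simp [hmm, hba]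
    have hmmo : ∀ x : Pt, x ≠ a → x ≠ b → mm x = m₂ x := by
      intro x h1 h2; simp [hmm, h1, h2]
    refine ⟨mm, ⟨?_, ?_, ?_, ?_⟩, ?_⟩
    · intro x hx
      by_cases hx1 : x = a
      · rw [hx1, hmma]; exact hbP
      by_cases hx2 : x = b
      · rw [hx2, hmmb]; exact haP
      · rw [hmmo x hx1 hx2]
        exact hsub2 (hm1 x ((hmem2 x).mpr ⟨hx2, hx1, hx⟩))
    · intro x hx
      by_cases hx1 : x = a
      · rw [hx1, hmma, hmmb]
      by_cases hx2 : x = b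
      · rw [hx2, hmmb, hmma]
      · have hxS' : x ∈ P₂ := (hmem2 x).mpr ⟨hx2, hx1, hx⟩
        have hmx : m₂ x ∈ P₂ := hm1 x hxS'
        rw [hmmo x hx1 hx2, hmmo (m₂ x) ((hmem2 (m₂ x)).mp hmx).2.1 ((hmem2 (m₂ x)).mp hmx).1]
        exact hm2 x hxS'
    · intro x hx
      by_cases hx1 : x = a
      · rw [hx1, hmma]; exact hba
      by_cases hx2 : x = b
      · rw [hx2, hmmb]; exact hab
      · rw [hmmo x hx1 hx2]
        exact hm3 x ((hmem2 x).mpr ⟨hx2, hx1, hx⟩)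
    · intro x hx y hy hyx hymx
      by_cases hx1 : x = a
      · rw [hx1, hmma] at hymx ⊢
        rw [hx1] at hyx
        rw [hmmo y hyx hymx]
        exact hdisjAB y ((hmem2 y).mpr ⟨hymx, hyx, hy⟩)
      by_cases hx2 : x = b
      · rw [hx2, hmmb] at hymx ⊢
        rw [hx2] at hyx
        rw [hmmo y hymx hyx, segment_symm]
        exact hdisjAB y ((hmem2 y).mpr ⟨hyx, hymx, hy⟩)
      · have hxS' : x ∈ P₂ := (hmem2 x).mpr ⟨hx2, hx1, hx⟩
        rw [hmmo x hx1 hx2] at hymx ⊢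
        by_cases hy1 : y = a
        · rw [hy1, hmma, Set.inter_comm]
          exact hdisjAB x hxS'
        by_cases hy2 : y = b
        · rw [hy2, hmmb, segment_symm (𝕜 := ℝ) (x := b) (y := a), Set.inter_comm]
          exact hdisjAB x hxS'
        · rw [hmmo y hy1 hy2]
          exact hm4 x hxS' y ((hmem2 y).mpr ⟨hy2, hy1, hy⟩) hyx hymx
    · rw [hmmo p (Ne.symm hap) (Ne.symm hbp)]
      exact hm₂p

set_option maxHeartbeats 1600000 in
/-- If `{v,w}` is a feasible edge of maximal length among all feasible edges
of a set `P` of `2n` points in general position, then `v` or `w` is a vertex of the convex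
hull of `P`. -/
theorem longest_feasible_edge_has_hull_vertex (n : ℕ) (P : Finset Pt)
    (hcard : P.card = 2 * n) (hgp : GenPos P)
    (v w : Pt) (hv : v ∈ P) (hw : w ∈ P) (hvw : v ≠ w)
    (hfeas : Feasible P v w)
    (hmax : ∀ a ∈ P, ∀ b ∈ P, a ≠ b → Feasible P a b → dist a b ≤ dist v w) :
    v ∉ convexHull ℝ ((P : Set Pt) \ {v}) ∨ w ∉ convexHull ℝ ((P : Set Pt) \ {w}) := by
  classical
  by_contra hcon
  push_neg at hcon
  obtain ⟨hvin, hwin⟩ := hcon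
  set u0 := v 0 - w 0 with hu0
  set u1 := v 1 - w 1 with hu1
  set f : Pt → ℝ := fun x => u0 * x 0 + u1 * x 1 with hf
  set h : Pt → ℝ := fun x => u0 * x 1 - u1 * x 0 with hh
  have hun : 0 < u0 ^ 2 + u1 ^ 2 := by
    rcases pt_ne_iff.mp hvw with hne | hne
    · have : u0 ≠ 0 := by rw [hu0]; exact sub_ne_zero.mpr hne
      positivity
    · have : u1 ≠ 0 := by rw [hu1]; exact sub_ne_zero.mpr hne
      positivity
  have hfvw : f w < f v := by
    have : f v - f w = u0 ^ 2 + u1 ^ 2 := by simp only [hf, hu0, hu1]; ring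
    linarith
  -- injectivity of the pair (f, h)
  have hfh_inj : ∀ x y : Pt, f x = f y → h x = h y → x = y := by
    intro x y h1 h2
    have e0 : (u0 ^ 2 + u1 ^ 2) * (x 0 - y 0) = u0 * (f x - f y) - u1 * (h x - h y) := by
      simp only [hf, hh]; ring
    have e1 : (u0 ^ 2 + u1 ^ 2) * (x 1 - y 1) = u1 * (f x - f y) + u0 * (h x - h y) := by
      simp only [hf, hh]; ring
    rw [h1, h2] at e0 e1
    simp only [sub_self, mul_zero, zero_sub, zero_add, neg_zero, add_zero] at e0 e1
    have hx0 : x 0 = y 0 := by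
      have := mul_eq_zero.mp (by linarith [e0] : (u0 ^ 2 + u1 ^ 2) * (x 0 - y 0) = 0)
      rcases this with hc | hc
      · linarith
      · linarith
    have hx1 : x 1 = y 1 := by
      have := mul_eq_zero.mp (by linarith [e1] : (u0 ^ 2 + u1 ^ 2) * (x 1 - y 1) = 0)
      rcases this with hc | hc
      · linarith
      · linarith
    exact pt_ext hx0 hx1
  -- choice of a generic small ε
  set bad : Finset ℝ := (P ×ˢ P).image (fun q => (f q.2 - f q.1) / (h q.1 - h q.2)) with hbad
  set T : Finset ℝ :=
    ((P ×ˢ P).filter (fun q => f q.1 < f q.2)).image (fun q => f q.2 - f q.1) with hT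
  have hTne : T.Nonempty := by
    refine ⟨f v - f w, Finset.mem_image.mpr ⟨(w, v), ?_, rfl⟩⟩
    exact Finset.mem_filter.mpr ⟨Finset.mem_product.mpr ⟨hw, hv⟩, hfvw⟩
  set mT := T.min' hTne with hmT
  have hmpos : 0 < mT := by
    have := T.min'_mem hTne
    rw [← hmT] at this
    obtain ⟨q, hq, hqe⟩ := Finset.mem_image.mp this
    have := (Finset.mem_filter.mp hq).2
    linarith
  set K : Finset ℝ := (P ×ˢ P).image (fun q => |h q.1 - h q.2|) with hK
  have hKne : K.Nonempty := ⟨|h w - h v|,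
    Finset.mem_image.mpr ⟨(w, v), Finset.mem_product.mpr ⟨hw, hv⟩, rfl⟩⟩
  set Km := K.max' hKne with hKm
  have hKm0 : 0 ≤ Km := le_trans (abs_nonneg _)
    (K.le_max' _ (Finset.mem_image.mpr ⟨(w, v), Finset.mem_product.mpr ⟨hw, hv⟩, rfl⟩))
  have hδpos : 0 < mT / (Km + 1) := by positivity
  obtain ⟨ε, hεI, hεbad⟩ : ∃ ε : ℝ, ε ∈ Set.Ioo 0 (mT / (Km + 1)) ∧ ε ∉ bad := by
    have h1 : (Set.Ioo (0:ℝ) (mT / (Km + 1))).Infinite := Set.Ioo_infinite hδpos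
    obtain ⟨e, he⟩ := (h1.diff bad.finite_toSet).nonempty
    exact ⟨e, he.1, he.2⟩
  obtain ⟨hεpos, hεδ⟩ := hεI
  have hbound : ∀ x ∈ P, ∀ y ∈ P, f x < f y → ε * |h x - h y| < f y - f x := by
    intro x hx y hy hlt
    have h1 : |h x - h y| ≤ Km :=
      K.le_max' _ (Finset.mem_image.mpr ⟨(x, y), Finset.mem_product.mpr ⟨hx, hy⟩, rfl⟩)
    have h2 : mT ≤ f y - f x := T.min'_le _
      (Finset.mem_image.mpr ⟨(x, y), Finset.mem_filter.mpr ⟨Finset.mem_product.mpr ⟨hx, hy⟩, hlt⟩, rfl⟩)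
    have h3 : ε * |h x - h y| ≤ ε * Km := mul_le_mul_of_nonneg_left h1 hεpos.le
    have h4 : ε * (Km + 1) < mT := by
      have := mul_lt_mul_of_pos_right hεδ (by linarith : (0:ℝ) < Km + 1)
      rwa [div_mul_cancel₀ mT (by linarith : Km + 1 ≠ 0)] at this
    nlinarith
  set g : Pt → ℝ := fun x => f x + ε * h x with hg
  have hginj : ∀ x ∈ P, ∀ y ∈ P, x ≠ y → g x ≠ g y := by
    intro x hx y hy hxy hgeq
    simp only [hg] at hgeq
    rcases eq_or_ne (h x) (h y) with hhe | hhe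
    · rw [hhe] at hgeq
      have hfe : f x = f y := by linarith
      exact hxy (hfh_inj x y hfe hhe)
    · apply hεbad
      rw [hbad]
      refine Finset.mem_image.mpr ⟨(x, y), Finset.mem_product.mpr ⟨hx, hy⟩, ?_⟩
      have hne : h x - h y ≠ 0 := sub_ne_zero.mpr hhe
      field_simp
      linarith
  obtain ⟨p, hpP, hpmax⟩ := P.exists_max_image g ⟨v, hv⟩
  have hstrict : ∀ x ∈ P, x ≠ p → g x < g p :=
    fun x hx hxp => lt_of_le_of_ne (hpmax x hx) (hginj x hx p hpP hxp)
  -- p is not in the hull of the other points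
  have hpnotin : p ∉ convexHull ℝ ((P : Set Pt) \ {p}) := by
    intro hpin
    obtain ⟨y0, hy0P, hy0ne⟩ : ∃ y0, y0 ∈ P ∧ y0 ≠ p := by
      rcases eq_or_ne p v with rfl | hne
      · exact ⟨w, hw, Ne.symm hvw⟩
      · exact ⟨v, hv, Ne.symm hne⟩
    have hyer : y0 ∈ P.erase p := Finset.mem_erase.mpr ⟨hy0ne, hy0P⟩
    have herne : ((P.erase p).image g).Nonempty := ⟨g y0, Finset.mem_image.mpr ⟨y0, hyer, rfl⟩⟩
    set c := ((P.erase p).image g).max' herne with hc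
    have hcbound : ∀ x ∈ (P : Set Pt) \ {p},
        (u0 - ε * u1) * x 0 + (u1 + ε * u0) * x 1 ≤ c := by
      rintro x ⟨hxP, hxt⟩
      rw [Finset.mem_coe] at hxP
      rw [Set.mem_singleton_iff] at hxt
      have h1 : g x ≤ c := Finset.le_max' _ _
        (Finset.mem_image.mpr ⟨x, Finset.mem_erase.mpr ⟨hxt, hxP⟩, rfl⟩)
      have h2 : g x = (u0 - ε * u1) * x 0 + (u1 + ε * u0) * x 1 := by
        simp only [hg, hf, hh]; ring
      linarith
    have hct := hull_affine_le hcbound p hpin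
    have hgt : g p ≤ c := by
      have h2 : g p = (u0 - ε * u1) * p 0 + (u1 + ε * u0) * p 1 := by
        simp only [hg, hf, hh]; ring
      linarith
    obtain ⟨y1, hy1m, hy1e⟩ := Finset.mem_image.mp (((P.erase p).image g).max'_mem herne)
    rw [← hc] at hy1e
    have := hstrict y1 (Finset.mem_of_mem_erase hy1m) (Finset.mem_erase.mp hy1m).1
    rw [hy1e] at this
    linarith
  have hpv : v ≠ p := by rintro rfl; exact hpnotin hvin
  have hpw : w ≠ p := by rintro rfl; exact hpnotin hwin
  -- f p ≥ f v
  have hfpv : f v ≤ f p := by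
    by_contra hfc
    push_neg at hfc
    have h1 := hbound p hpP v hv hfc
    have h2 : g v ≤ g p := hpmax v hv
    simp only [hg] at h2
    have h3 : -(ε * |h p - h v|) ≤ ε * (h v - h p) := by
      have h4 : -|h p - h v| ≤ h v - h p := by
        rw [abs_sub_comm]
        exact neg_abs_le _
      nlinarith
    linarith
  -- dist p w > dist v w
  have hdist : dist v w < dist p w := by
    have hSpv : 0 < (p 0 - v 0)^2 + (p 1 - v 1)^2 := by
      rcases pt_ne_iff.mp (Ne.symm hpv) with hne | hne
      · have : p 0 - v 0 ≠ 0 := sub_ne_zero.mpr hne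
        positivity
      · have : p 1 - v 1 ≠ 0 := sub_ne_zero.mpr hne
        positivity
    have hid : (p 0 - w 0)^2 + (p 1 - w 1)^2
        = ((p 0 - v 0)^2 + (p 1 - v 1)^2) + ((v 0 - w 0)^2 + (v 1 - w 1)^2)
          + 2 * ((p 0 - v 0) * u0 + (p 1 - v 1) * u1) := by
      simp only [hu0, hu1]; ring
    have hcross : 0 ≤ (p 0 - v 0) * u0 + (p 1 - v 1) * u1 := by
      have : (p 0 - v 0) * u0 + (p 1 - v 1) * u1 = f p - f v := by
        simp only [hf]; ring
      linarith
    rw [dist_sq_formula, dist_sq_formula]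
    apply Real.sqrt_lt_sqrt (by positivity)
    nlinarith
  -- (p, w) is feasible : contradiction with maximality
  have hPeven : Even P.card := ⟨n, by omega⟩
  have hsep : ∀ x ∈ P, x ≠ p →
      (u0 - ε * u1) * (x 0 - p 0) + (u1 + ε * u0) * (x 1 - p 1) < 0 := by
    intro x hx hxp
    have h1 := hstrict x hx hxp
    have h2 : (u0 - ε * u1) * (x 0 - p 0) + (u1 + ε * u0) * (x 1 - p 1) = g x - g p := by
      simp only [hg, hf, hh]; ring
    linarith
  have hfeaspw : Feasible P p w := by
    obtain ⟨m, hm, hmp⟩ := feasible_of_extreme_interior P hgp hPeven p w hpP hw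
      (Ne.symm hpw) (u0 - ε * u1) (u1 + ε * u0) hsep hwin
    exact ⟨m, hm, hmp⟩
  have := hmax p hpP w hw (Ne.symm hpw) hfeaspw
  linarith
end
end

section
/- Let x ∈ ℝ², let u and v be unit vectors in ℝ² with inner product ⟨u,v⟩ ≤ 0, and let S = {x + s·u : s ≥ 0} ∪ {x + t·v : t ≥ 0} be the boundary of the corresponding sector of angle at least π/2. Then for any two distinct points p, q ∈ S there exists an open half-plane H whose boundary is the line through p and q such that any two points a, b ∈ S ∩ H satisfy dist(a,b) ≤ dist(p,q). (The boundary of a big sector has the decreasing chords property.) -/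
noncomputable section

open scoped InnerProductSpace

private lemma unit_sq (u : Pt) (hu : ‖u‖ = 1) : u 0 ^ 2 + u 1 ^ 2 = 1 := by
  have h := real_inner_self_eq_norm_sq u
  rw [hu] at h
  simp only [PiLp.inner_apply, Fin.sum_univ_two, RCLike.inner_apply, conj_trivial] at h
  linarith

private lemma dist_formula (x u v : Pt) (hu2 : u 0^2 + u 1^2 = 1) (hv2 : v 0^2 + v 1^2 = 1)
    (s t : ℝ) :
    dist (x + s • u) (x + t • v)
      = Real.sqrt (s^2 - 2*(s*t)*(u 0 * v 0 + u 1 * v 1) + t^2) := by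
  rw [EuclideanSpace.dist_eq]
  congr 1
  simp [Fin.sum_univ_two, Real.dist_eq, sq_abs, PiLp.add_apply, PiLp.smul_apply, smul_eq_mul]
  ring_nf
  linear_combination s^2 * hu2 + t^2 * hv2

private lemma dist_formula_same (x u : Pt) (hu : ‖u‖ = 1) (s t : ℝ) :
    dist (x + s • u) (x + t • u) = |s - t| := by
  have h : (x + s • u) - (x + t • u) = (s - t) • u := by module
  rw [dist_eq_norm, h, norm_smul, hu, mul_one, Real.norm_eq_abs]

set_option maxHeartbeats 1600000 in
private lemma aux (x u v : Pt) (hu : ‖u‖ = 1) (hv : ‖v‖ = 1)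
    (huv : ⟪u, v⟫_ℝ ≤ 0) (p q : Pt) (a : ℝ) (ha : 0 ≤ a) (hpx : p = x + a • u)
    (hq : (∃ s : ℝ, 0 ≤ s ∧ q = x + s • u) ∨ (∃ t : ℝ, 0 ≤ t ∧ q = x + t • v)) :
    ∃ H : Set Pt,
      (H = {y | 0 < det2 (q - p) (y - p)} ∨ H = {y | det2 (q - p) (y - p) < 0}) ∧
      ∀ a' ∈ ({y | ∃ s : ℝ, 0 ≤ s ∧ y = x + s • u}
          ∪ {y | ∃ t : ℝ, 0 ≤ t ∧ y = x + t • v} : Set Pt) ∩ H,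
        ∀ b' ∈ ({y | ∃ s : ℝ, 0 ≤ s ∧ y = x + s • u}
          ∪ {y | ∃ t : ℝ, 0 ≤ t ∧ y = x + t • v} : Set Pt) ∩ H,
          dist a' b' ≤ dist p q := by
  have hu2 := unit_sq u hu
  have hv2 := unit_sq v hv
  have hc : u 0 * v 0 + u 1 * v 1 ≤ 0 := by
    have h' := huv
    simp [PiLp.inner_apply, Fin.sum_univ_two, RCLike.inner_apply] at h'
    linarith
  rcases hq with ⟨b, hb, hqx⟩ | ⟨b, hb, hqx⟩
  · -- p and q on the same ray (direction u): one open side misses S entirely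
    have keyu : ∀ s : ℝ, det2 (q - p) ((x + s • u) - p) = 0 := by
      intro s
      simp [hpx, hqx, det2, PiLp.sub_apply, PiLp.add_apply, PiLp.smul_apply, smul_eq_mul]
      ring
    have keyv : ∀ t : ℝ, det2 (q - p) ((x + t • v) - p) = (b - a) * t * det2 u v := by
      intro t
      simp [hpx, hqx, det2, PiLp.sub_apply, PiLp.add_apply, PiLp.smul_apply, smul_eq_mul]
      ring
    by_cases h : 0 < (b - a) * det2 u v
    · refine ⟨{y | det2 (q - p) (y - p) < 0}, Or.inr rfl, ?_⟩
      rintro a' ⟨ha'S, ha'H⟩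
      exfalso
      rcases ha'S with ⟨s, hs, rfl⟩ | ⟨t, ht, rfl⟩
      · rw [Set.mem_setOf_eq, keyu] at ha'H; exact lt_irrefl 0 ha'H
      · rw [Set.mem_setOf_eq, keyv] at ha'H; nlinarith
    · refine ⟨{y | 0 < det2 (q - p) (y - p)}, Or.inl rfl, ?_⟩
      rintro a' ⟨ha'S, ha'H⟩
      exfalso
      push_neg at h
      rcases ha'S with ⟨s, hs, rfl⟩ | ⟨t, ht, rfl⟩
      · rw [Set.mem_setOf_eq, keyu] at ha'H; exact lt_irrefl 0 ha'H
      · rw [Set.mem_setOf_eq, keyv] at ha'H; nlinarith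
  · -- p = x + a•u, q = x + b•v
    have keyu : ∀ s : ℝ, det2 (q - p) ((x + s • u) - p) = b * (a - s) * det2 u v := by
      intro s
      simp [hpx, hqx, det2, PiLp.sub_apply, PiLp.add_apply, PiLp.smul_apply, smul_eq_mul]
      ring
    have keyv : ∀ t : ℝ, det2 (q - p) ((x + t • v) - p) = a * (b - t) * det2 u v := by
      intro t
      simp [hpx, hqx, det2, PiLp.sub_apply, PiLp.add_apply, PiLp.smul_apply, smul_eq_mul]
      ring
    by_cases hd : det2 u v = 0
    · -- degenerate: S lies on the line through p and q
      refine ⟨{y | 0 < det2 (q - p) (y - p)}, Or.inl rfl, ?_⟩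
      rintro a' ⟨ha'S, ha'H⟩
      exfalso
      rcases ha'S with ⟨s, hs, rfl⟩ | ⟨t, ht, rfl⟩
      · rw [Set.mem_setOf_eq, keyu, hd] at ha'H; simp at ha'H
      · rw [Set.mem_setOf_eq, keyv, hd] at ha'H; simp at ha'H
    · -- nondegenerate case
      obtain ⟨H, hH, hHs⟩ :
          ∃ H : Set Pt,
            (H = {y | 0 < det2 (q - p) (y - p)} ∨ H = {y | det2 (q - p) (y - p) < 0}) ∧
            ∀ y ∈ H, 0 < det2 (q - p) (y - p) * det2 u v := by
        rcases lt_or_gt_of_ne hd with h | h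
        · exact ⟨{y | det2 (q - p) (y - p) < 0}, Or.inr rfl,
            fun y hy => mul_pos_of_neg_of_neg hy h⟩
        · exact ⟨{y | 0 < det2 (q - p) (y - p)}, Or.inl rfl,
            fun y hy => mul_pos hy h⟩
      refine ⟨H, hH, ?_⟩
      have hmem : ∀ y ∈ ({y | ∃ s : ℝ, 0 ≤ s ∧ y = x + s • u}
          ∪ {y | ∃ t : ℝ, 0 ≤ t ∧ y = x + t • v} : Set Pt) ∩ H,
          (∃ s : ℝ, 0 ≤ s ∧ s ≤ a ∧ y = x + s • u) ∨
          (∃ t : ℝ, 0 ≤ t ∧ t ≤ b ∧ y = x + t • v) := by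
        rintro y ⟨hyS, hyH⟩
        have hpos := hHs y hyH
        rcases hyS with ⟨s, hs, rfl⟩ | ⟨t, ht, rfl⟩
        · rw [keyu] at hpos
          refine Or.inl ⟨s, hs, ?_, rfl⟩
          nlinarith [mul_nonneg hb (sq_nonneg (det2 u v)), hpos]
        · rw [keyv] at hpos
          refine Or.inr ⟨t, ht, ?_, rfl⟩
          nlinarith [mul_nonneg ha (sq_nonneg (det2 u v)), hpos]
      have hdpq : dist p q = Real.sqrt (a^2 - 2*(a*b)*(u 0 * v 0 + u 1 * v 1) + b^2) := by
        rw [hpx, hqx]; exact dist_formula x u v hu2 hv2 a b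
      have mainUV : ∀ s t : ℝ, 0 ≤ s → s ≤ a → 0 ≤ t → t ≤ b →
          dist (x + s • u) (x + t • v) ≤ dist p q := by
        intro s t hs hsa ht htb
        rw [hdpq, dist_formula x u v hu2 hv2]
        apply Real.sqrt_le_sqrt
        nlinarith [mul_le_mul hsa htb ht ha, mul_nonneg hs ht,
          mul_nonneg (neg_nonneg.2 hc) (sub_nonneg.2 (mul_le_mul hsa htb ht ha)),
          mul_self_le_mul_self hs hsa, mul_self_le_mul_self ht htb]
      have mainUU : ∀ s₁ s₂ : ℝ, 0 ≤ s₁ → s₁ ≤ a → 0 ≤ s₂ → s₂ ≤ a →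
          dist (x + s₁ • u) (x + s₂ • u) ≤ dist p q := by
        intro s₁ s₂ h1 h1a h2 h2a
        rw [hdpq, dist_formula_same x u hu, ← Real.sqrt_sq_eq_abs]
        apply Real.sqrt_le_sqrt
        nlinarith [mul_nonneg h1 h2, mul_nonneg (sub_nonneg.2 h1a) (sub_nonneg.2 h2a),
          mul_nonneg (mul_nonneg ha hb) (neg_nonneg.2 hc)]
      have mainVV : ∀ t₁ t₂ : ℝ, 0 ≤ t₁ → t₁ ≤ b → 0 ≤ t₂ → t₂ ≤ b →
          dist (x + t₁ • v) (x + t₂ • v) ≤ dist p q := by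
        intro t₁ t₂ h1 h1b h2 h2b
        rw [hdpq, dist_formula_same x v hv, ← Real.sqrt_sq_eq_abs]
        apply Real.sqrt_le_sqrt
        nlinarith [mul_nonneg h1 h2, mul_nonneg (sub_nonneg.2 h1b) (sub_nonneg.2 h2b),
          mul_nonneg (mul_nonneg ha hb) (neg_nonneg.2 hc)]
      rintro a' ha' b' hb'
      rcases hmem a' ha' with ⟨s, hs, hsa, rfl⟩ | ⟨t, ht, htb, rfl⟩ <;>
        rcases hmem b' hb' with ⟨s', hs', hs'a, rfl⟩ | ⟨t', ht', ht'b, rfl⟩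
      · exact mainUU s s' hs hsa hs' hs'a
      · exact mainUV s t' hs hsa ht' ht'b
      · rw [dist_comm]; exact mainUV s' t hs' hs'a ht htb
      · exact mainVV t t' ht htb ht' ht'b

/-- **the boundary of a big sector has the decreasing chords property.**
Let `x ∈ ℝ²`, let `u`, `v` be unit vectors with `⟪u,v⟫ ≤ 0`, and let
`S = {x + s•u : s ≥ 0} ∪ {x + t•v : t ≥ 0}` be the boundary of the corresponding sector of
angle at least `π/2`. Then for any two distinct points `p, q ∈ S` there is an open half-plane
`H` bounded by the line through `p` and `q` such that any two points `a, b ∈ S ∩ H` satisfy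
`dist a b ≤ dist p q`. -/
theorem big_sector_decreasing_chords (x u v : Pt) (hu : ‖u‖ = 1) (hv : ‖v‖ = 1)
    (huv : ⟪u, v⟫_ℝ ≤ 0) (S : Set Pt)
    (hS : S = {y | ∃ s : ℝ, 0 ≤ s ∧ y = x + s • u} ∪ {y | ∃ t : ℝ, 0 ≤ t ∧ y = x + t • v})
    (p q : Pt) (hp : p ∈ S) (hq : q ∈ S) (hpq : p ≠ q) :
    ∃ H : Set Pt,
      (H = {y | 0 < det2 (q - p) (y - p)} ∨ H = {y | det2 (q - p) (y - p) < 0}) ∧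
      ∀ a ∈ S ∩ H, ∀ b ∈ S ∩ H, dist a b ≤ dist p q := by
  subst hS
  have huv' : ⟪v, u⟫_ℝ ≤ 0 := by rwa [real_inner_comm]
  rcases hp with ⟨a, ha, hpx⟩ | ⟨a, ha, hpx⟩
  · exact aux x u v hu hv huv p q a ha hpx hq
  · obtain ⟨H, hH, hmain⟩ := aux x v u hv hu huv' p q a ha hpx (Or.symm hq)
    refine ⟨H, hH, ?_⟩
    rintro a' ⟨ha'S, ha'H⟩ b' ⟨hb'S, hb'H⟩
    exact hmain a' ⟨Or.symm ha'S, ha'H⟩ b' ⟨Or.symm hb'S, hb'H⟩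
end
end

section
/- Let p_0, p_1, …, p_{2n−1} be 2n distinct points on a common circle in counterclockwise order and let M be a perfect non-crossing matching of these points. Then every edge of M of minimum length among the edges of M is a boundary edge, i.e., of the form {p_i, p_{i+1}} (indices modulo 2n). -/
noncomputable section

/-- The points `p 0, p 1, …, p (N-1)` (indices in `ZMod N`) are distinct, lie on a common
circle, and are labeled in counterclockwise order: every triple of points with increasing
indices is positively (counterclockwise) oriented. -/
def OnCircleCCW (N : ℕ) (p : ZMod N → Pt) : Prop :=
  (∃ c : Pt, ∃ r : ℝ, 0 < r ∧ ∀ i, dist (p i) c = r) ∧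
  Function.Injective p ∧
  (∀ i j k : ZMod N, i.val < j.val → j.val < k.val →
    0 < det2 (p j - p i) (p k - p i))

/-- `σ` encodes a perfect non-crossing matching of the points `p 0, …, p (N-1)`: it is a
fixed-point free involution of the indices, and the closed segments induced by two distinct
edges are disjoint. -/
def IsNCM (N : ℕ) (p : ZMod N → Pt) (σ : ZMod N → ZMod N) : Prop :=
  (∀ i, σ (σ i) = i) ∧ (∀ i, σ i ≠ i) ∧
  (∀ i j : ZMod N, j ≠ i → j ≠ σ i →
    segment ℝ (p i) (p (σ i)) ∩ segment ℝ (p j) (p (σ j)) = ∅)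


lemma det2_swap (u v : Pt) : det2 u v = - det2 v u := by simp [det2]; ring

lemma det2_sub_right (a b c : Pt) : det2 a (b - c) = det2 a b - det2 a c := by
  simp [det2, PiLp.sub_apply]; ring

lemma det2_add_right (a b c : Pt) : det2 a (b + c) = det2 a b + det2 a c := by
  simp [det2, PiLp.add_apply]; ring

lemma det2_cyc (X Y Z : Pt) : det2 (Y - X) (Z - X) = det2 (Z - Y) (X - Y) := by
  simp [det2, PiLp.sub_apply]; ring

lemma cramer (u v w : Pt) : det2 w v • u + det2 u w • v = det2 u v • w := by
  apply pt_ext <;> simp [det2, PiLp.smul_apply, PiLp.add_apply, smul_eq_mul] <;> ring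

lemma segs_cross (A B C D : Pt)
    (h1 : det2 (C - A) (B - A) < 0) (h2 : 0 < det2 (C - A) (D - A))
    (h3 : det2 (D - B) (C - B) < 0) (h4 : 0 < det2 (D - B) (A - B)) :
    (segment ℝ A C ∩ segment ℝ B D).Nonempty := by
  set u := C - A with hu
  set v := D - B with hv
  set w := B - A with hw
  have hDA : D - A = w + v := by rw [hw, hv]; abel
  have hCB : C - B = u - w := by rw [hu, hw]; abel
  have hAB : A - B = (0 : Pt) - w := by rw [hw]; abel
  rw [hDA, det2_add_right] at h2
  rw [hCB, det2_sub_right] at h3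
  rw [hAB, det2_sub_right] at h4
  have hvu : det2 v u = - det2 u v := by rw [det2_swap]
  have hv0 : det2 v (0 : Pt) = 0 := by simp [det2]
  have hvw : det2 v w = - det2 w v := by rw [det2_swap]
  rw [hvu] at h3
  rw [hv0, hvw] at h4
  -- now: h1 : det2 u w < 0, h2 : 0 < det2 u w + det2 u v,
  -- h3 : -det2 u v - det2 v w < 0, h4 : 0 < det2 w v
  have hd : 0 < det2 u v := by linarith
  have hwv_lt : det2 w v < det2 u v := by rw [hvw] at h3; linarith
  set d := det2 u v with hdd
  set s := det2 w v / d with hs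
  set t := (- det2 u w) / d with ht
  have hs0 : 0 < s := div_pos (by linarith) hd
  have hs1 : s < 1 := (div_lt_one hd).2 hwv_lt
  have ht0 : 0 < t := div_pos (by linarith) hd
  have ht1 : t < 1 := (div_lt_one hd).2 (by linarith)
  have hkey : s • u - t • v = w := by
    have hdne : d ≠ 0 := ne_of_gt hd
    have h5 : d • (s • u - t • v) = d • w := by
      rw [smul_sub, smul_smul, smul_smul]
      have e1 : d * s = det2 w v := by rw [hs]; field_simp
      have e2 : d * t = - det2 u w := by rw [ht]; field_simp
      rw [e1, e2]
      have := cramer u v w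
      rw [← hdd] at this
      rw [← this]
      module
    exact smul_right_injective Pt hdne h5
  refine ⟨A + s • u, ?_, ?_⟩
  · rw [segment_eq_image']
    exact ⟨s, ⟨le_of_lt hs0, le_of_lt hs1⟩, rfl⟩
  · rw [segment_eq_image']
    refine ⟨t, ⟨le_of_lt ht0, le_of_lt ht1⟩, ?_⟩
    have : D - B = v := by rw [hv]
    rw [this]
    have : A + s • u = B + t • v := by
      have : A + (s • u - t • v) + t • v = A + s • u := by abel
      rw [← this, hkey, hw]; abel
    exact this.symm
lemma sin_triple' (a b : ℝ) :
    Real.sin (2*a) + Real.sin (2*b) - Real.sin (2*a + 2*b) =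
    4 * Real.sin a * Real.sin b * Real.sin (a + b) := by
  have ha := Real.sin_sq_add_cos_sq a
  have hb := Real.sin_sq_add_cos_sq b
  have h1 : (2:ℝ)*a + 2*b = 2*(a+b) := by ring
  rw [h1, Real.sin_two_mul, Real.sin_two_mul, Real.sin_two_mul, Real.sin_add, Real.cos_add]
  linear_combination (-2*Real.sin a*Real.cos a) * hb + (-2*Real.sin b*Real.cos b) * ha

lemma sin_triple (x y : ℝ) :
    Real.sin x + Real.sin y - Real.sin (x + y) =
    4 * Real.sin (x/2) * Real.sin (y/2) * Real.sin ((x+y)/2) := by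
  have := sin_triple' (x/2) (y/2)
  have h1 : 2*(x/2) = x := by ring
  have h2 : 2*(y/2) = y := by ring
  rw [h1, h2] at this
  rw [this]
  ring_nf

section GX
variable {N : ℕ} (A : ZMod N → ℝ)

noncomputable def Garc (u v : ZMod N) : ℝ := if A u < A v then A v - A u else A v - A u + 2*Real.pi

variable {A}
variable (hrange : ∀ u, 0 ≤ A u ∧ A u < 2*Real.pi)

include hrange

lemma g_pos {u v : ZMod N} : 0 < Garc A u v := by
  unfold Garc; split
  · linarith
  · have := (hrange u).2; have := (hrange v).1; linarith

lemma g_lt {u v : ZMod N} (hne : A u ≠ A v) : Garc A u v < 2*Real.pi := by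
  unfold Garc; split
  · have := (hrange u).1; have := (hrange v).2; linarith
  · rename_i h
    have : A v < A u := lt_of_le_of_ne (not_lt.1 h) (Ne.symm hne)
    linarith

omit hrange

lemma g_mod (u v : ZMod N) : Garc A u v = A v - A u ∨ Garc A u v = A v - A u + 2*Real.pi := by
  unfold Garc; split
  · exact Or.inl rfl
  · exact Or.inr rfl

lemma g_cos (u v : ZMod N) : Real.cos (A v - A u) = Real.cos (Garc A u v) := by
  rcases g_mod (A := A) u v with h | h <;> rw [h]
  rw [Real.cos_add_two_pi]

lemma g_rev {u v : ZMod N} (hne : A u ≠ A v) : Garc A u v + Garc A v u = 2*Real.pi := by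
  unfold Garc
  rcases lt_trichotomy (A u) (A v) with h | h | h
  · rw [if_pos h, if_neg (not_lt.2 (le_of_lt h))]; ring
  · exact absurd h hne
  · rw [if_neg (not_lt.2 (le_of_lt h)), if_pos h]; ring

include hrange

lemma g_sum {u v w : ZMod N} (huv : A u ≠ A v) (hvw : A v ≠ A w) (huw : A u ≠ A w)
    (hlt : Garc A u v < Garc A u w) : Garc A u v + Garc A v w = Garc A u w := by
  have p1 := g_pos (A := A) hrange (u := u) (v := v)
  have p2 := g_pos (A := A) hrange (u := v) (v := w)
  have p3 := g_pos (A := A) hrange (u := u) (v := w)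
  have q1 := g_lt hrange huv
  have q2 := g_lt hrange hvw
  have q3 := g_lt hrange huw
  have pi_pos := Real.pi_pos
  rcases g_mod (A := A) u v with h1 | h1 <;> rcases g_mod (A := A) v w with h2 | h2 <;>
    rcases g_mod (A := A) u w with h3 | h3 <;> linarith

end GX

section GX
variable {N : ℕ} {A : ZMod N → ℝ}

lemma a_ne [NeZero N] (hmono : ∀ u v : ZMod N, u.val < v.val → A u < A v)
    {u v : ZMod N} (h : u ≠ v) : A u ≠ A v := by
  rcases lt_trichotomy u.val v.val with hl | hl | hl
  · exact ne_of_lt (hmono u v hl)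
  · exact absurd (ZMod.val_injective N hl) h
  · exact ne_of_gt (hmono v u hl)

lemma g_succ [NeZero N] (hN : 1 < N)
    (hzero : A 0 = 0) (hrange : ∀ u, 0 ≤ A u ∧ A u < 2*Real.pi)
    (hmono : ∀ u v : ZMod N, u.val < v.val → A u < A v)
    (i w : ZMod N) (hw : w ≠ i) (hw2 : w ≠ i + 1) :
    Garc A i (i+1) < Garc A i w := by
  haveI : Fact (1 < N) := ⟨hN⟩
  have h1v : (i+1).val = (i.val + 1) % N := by rw [ZMod.val_add, ZMod.val_one]
  have hvlt : i.val < N := ZMod.val_lt i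
  by_cases hc : i.val + 1 < N
  · have h1 : (i+1).val = i.val + 1 := by rw [h1v, Nat.mod_eq_of_lt hc]
    have hAi1 : A i < A (i+1) := hmono i (i+1) (by omega)
    rcases lt_trichotomy w.val i.val with h | h | h
    · have hAw : A w < A i := hmono w i h
      unfold Garc
      rw [if_pos hAi1, if_neg (not_lt.2 (le_of_lt hAw))]
      have := (hrange (i+1)).2
      have := (hrange w).1
      linarith
    · exact absurd (ZMod.val_injective N h) hw
    · have hne1 : w.val ≠ i.val + 1 := by
        intro hh
        exact hw2 (ZMod.val_injective N (by rw [h1, hh]))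
      have h2 : (i+1).val < w.val := by omega
      have hA1 : A (i+1) < A w := hmono _ _ h2
      have hAw : A i < A w := hmono i w h
      unfold Garc
      rw [if_pos hAi1, if_pos hAw]
      linarith
  · have hceq : i.val + 1 = N := by omega
    have hi1 : i + 1 = 0 := by
      have : (i+1).val = 0 := by rw [h1v, hceq, Nat.mod_self]
      exact (ZMod.val_eq_zero _).1 this
    have hiz : i.val ≠ 0 := by omega
    have hAi : 0 < A i := by
      have := hmono 0 i (by rw [ZMod.val_zero]; omega)
      rwa [hzero] at this
    have hwz : w ≠ 0 := by rw [← hi1]; exact hw2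
    have hwv : 0 < w.val := by
      rcases Nat.eq_zero_or_pos w.val with h | h
      · exact absurd ((ZMod.val_eq_zero _).1 h) hwz
      · exact h
    have hAw0 : 0 < A w := by
      have := hmono 0 w (by rw [ZMod.val_zero]; omega)
      rwa [hzero] at this
    have hwi : w.val < i.val := by
      have hx1 := ZMod.val_lt w
      have hx2 : w.val ≠ i.val := fun hh => hw (ZMod.val_injective N hh)
      omega
    have hAw : A w < A i := hmono w i hwi
    rw [hi1]
    unfold Garc
    rw [if_neg (by rw [hzero]; exact not_lt.2 (le_of_lt hAi)),
        if_neg (not_lt.2 (le_of_lt hAw))]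
    rw [hzero]
    linarith
end GX

lemma orient_pos {N : ℕ} (p : ZMod N → Pt) {A : ZMod N → ℝ} {r : ℝ} (hr : 0 < r)
    (hrange : ∀ u, 0 ≤ A u ∧ A u < 2*Real.pi)
    (hdet : ∀ u v w, det2 (p v - p u) (p w - p u) =
      r^2 * (Real.sin (A v - A u) + Real.sin (A w - A v) + Real.sin (A u - A w)))
    {u v w : ZMod N} (huv : A u ≠ A v) (hvw : A v ≠ A w) (huw : A u ≠ A w)
    (hlt : Garc A u v < Garc A u w) : 0 < det2 (p v - p u) (p w - p u) := by
  have pi_pos := Real.pi_pos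
  have hsum := g_sum hrange huv hvw huw hlt
  have hG1 := g_pos (A := A) hrange (u := u) (v := v)
  have hG2 := g_pos (A := A) hrange (u := v) (v := w)
  have hG3 := g_pos (A := A) hrange (u := u) (v := w)
  have hL1 := g_lt hrange huv
  have hL2 := g_lt hrange hvw
  have hL3 := g_lt hrange huw
  have s1 : 0 < Real.sin (Garc A u v / 2) :=
    Real.sin_pos_of_pos_of_lt_pi (by linarith) (by linarith)
  have s2 : 0 < Real.sin (Garc A v w / 2) :=
    Real.sin_pos_of_pos_of_lt_pi (by linarith) (by linarith)
  have s3 : 0 < Real.sin (Garc A u w / 2) :=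
    Real.sin_pos_of_pos_of_lt_pi (by linarith) (by linarith)
  rw [hdet u v w]
  have base := sin_triple (A v - A u) (A w - A v)
  have hrw : A v - A u + (A w - A v) = A w - A u := by ring
  rw [hrw] at base
  have hneg : Real.sin (A u - A w) = - Real.sin (A w - A u) := by
    rw [show A u - A w = -(A w - A u) by ring, Real.sin_neg]
  have key : Real.sin (A v - A u) + Real.sin (A w - A v) + Real.sin (A u - A w)
      = 4 * Real.sin (Garc A u v / 2) * Real.sin (Garc A v w / 2) * Real.sin (Garc A u w / 2) := by
    rcases g_mod (A := A) u v with h1 | h1 <;> rcases g_mod (A := A) v w with h2 | h2 <;>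
      rcases g_mod (A := A) u w with h3 | h3 <;> rw [h1, h2, h3] at hsum ⊢
    · linear_combination base + hneg
    · linarith
    · linarith
    · rw [show (A w - A v + 2*Real.pi)/2 = (A w - A v)/2 + Real.pi by ring,
          show (A w - A u + 2*Real.pi)/2 = (A w - A u)/2 + Real.pi by ring,
          Real.sin_add_pi, Real.sin_add_pi]
      linear_combination base + hneg
    · linarith
    · rw [show (A v - A u + 2*Real.pi)/2 = (A v - A u)/2 + Real.pi by ring,
          show (A w - A u + 2*Real.pi)/2 = (A w - A u)/2 + Real.pi by ring,
          Real.sin_add_pi, Real.sin_add_pi]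
      linear_combination base + hneg
    · linarith
    · linarith
  rw [key]
  have h4 : 0 < 4 * Real.sin (Garc A u v / 2) * Real.sin (Garc A v w / 2) * Real.sin (Garc A u w / 2) := by
    nlinarith [mul_pos (mul_pos s1 s2) s3]
  exact mul_pos (pow_pos hr 2) h4

lemma g_inj {N : ℕ} {A : ZMod N → ℝ} (hrange : ∀ u, 0 ≤ A u ∧ A u < 2*Real.pi)
    {u v w : ZMod N} (h : Garc A u v = Garc A u w) : A v = A w := by
  have r1 := (hrange v).1; have r2 := (hrange v).2
  have r3 := (hrange w).1; have r4 := (hrange w).2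
  rcases g_mod (A := A) u v with h1 | h1 <;> rcases g_mod (A := A) u w with h2 | h2 <;>
    rw [h1, h2] at h <;> linarith

lemma key {N : ℕ} [NeZero N] (hN : 1 < N) (p : ZMod N → Pt) (σ : ZMod N → ZMod N)
    {A : ZMod N → ℝ} {r : ℝ} (hr : 0 < r)
    (hzero : A 0 = 0) (hrange : ∀ u, 0 ≤ A u ∧ A u < 2*Real.pi)
    (hmono : ∀ u v : ZMod N, u.val < v.val → A u < A v)
    (hdet : ∀ u v w, det2 (p v - p u) (p w - p u) =
      r^2 * (Real.sin (A v - A u) + Real.sin (A w - A v) + Real.sin (A u - A w)))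
    (hdist : ∀ u v, dist (p u) (p v) ^ 2 = 2*r^2*(1 - Real.cos (A v - A u)))
    (hinv : ∀ a, σ (σ a) = a) (hfix : ∀ a, σ a ≠ a)
    (hcross : ∀ a b : ZMod N, b ≠ a → b ≠ σ a →
      segment ℝ (p a) (p (σ a)) ∩ segment ℝ (p b) (p (σ b)) = ∅)
    (i : ZMod N)
    (hmin : ∀ b, dist (p i) (p (σ i)) ≤ dist (p b) (p (σ b)))
    (hG : Garc A i (σ i) ≤ Real.pi) : σ i = i + 1 := by
  haveI : Fact (1 < N) := ⟨hN⟩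
  by_contra hcon
  set k := σ i with hk
  have hki : k ≠ i := hfix i
  set j := i + 1 with hj
  have hji : j ≠ i := by
    intro h
    exact one_ne_zero (add_eq_left.mp h)
  have hjk : j ≠ k := fun h => hcon h.symm
  have hsucc : Garc A i j < Garc A i k :=
    g_succ hN hzero hrange hmono i k hki (fun h => hcon h)
  set m := σ j with hm
  have hmj : m ≠ j := hfix j
  have hmi : m ≠ i := by
    intro h
    apply hjk
    have h2 : σ m = σ i := congrArg σ h
    rw [hm, hinv j] at h2
    exact h2.trans hk.symm
  have hmk : m ≠ k := by
    intro h
    apply hji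
    have h2 : σ m = σ k := congrArg σ h
    rw [hm, hinv j, hk, hinv i] at h2
    exact h2
  -- distinct A values
  have Aij : A i ≠ A j := a_ne hmono (Ne.symm hji)
  have Aik : A i ≠ A k := a_ne hmono (Ne.symm hki)
  have Ajk : A j ≠ A k := a_ne hmono hjk
  have Aim : A i ≠ A m := a_ne hmono (Ne.symm hmi)
  have Ajm : A j ≠ A m := a_ne hmono (Ne.symm hmj)
  have Akm : A k ≠ A m := a_ne hmono (Ne.symm hmk)
  have hmlt : Garc A i m < Garc A i k := by
    rcases lt_trichotomy (Garc A i m) (Garc A i k) with h | h | h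
    · exact h
    · exact absurd (g_inj hrange h) (Ne.symm Akm)
    · exfalso
      have o1 : 0 < det2 (p j - p i) (p k - p i) :=
        orient_pos p hr hrange hdet Aij Ajk Aik hsucc
      have o2 : 0 < det2 (p k - p i) (p m - p i) :=
        orient_pos p hr hrange hdet Aik Akm Aim h
      have o3 : 0 < det2 (p j - p i) (p m - p i) :=
        orient_pos p hr hrange hdet Aij Ajm Aim (hsucc.trans h)
      have hsA : Garc A i j + Garc A j k = Garc A i k := g_sum hrange Aij Ajk Aik hsucc
      have hsB : Garc A i j + Garc A j m = Garc A i m := g_sum hrange Aij Ajm Aim (hsucc.trans h)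
      have o4 : 0 < det2 (p k - p j) (p m - p j) :=
        orient_pos p hr hrange hdet Ajk (fun hh => Akm hh) Ajm (by linarith)
      have c1 : det2 (p k - p i) (p j - p i) < 0 := by
        rw [det2_swap]; linarith
      have c3 : det2 (p m - p j) (p k - p j) < 0 := by
        rw [det2_swap]; linarith
      have c4 : 0 < det2 (p m - p j) (p i - p j) := by
        rw [det2_cyc, det2_cyc]; exact o3
      obtain ⟨X, hX1, hX2⟩ := segs_cross (p i) (p j) (p k) (p m) c1 o2 c3 c4
      have hemp := hcross i j hji hjk
      rw [Set.eq_empty_iff_forall_notMem] at hemp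
      exact hemp X ⟨by rwa [← hk], by rwa [← hm]⟩
  have hjm_ne : Garc A i j ≠ Garc A i m := fun h => Ajm (g_inj hrange h)
  have hGij : 0 < Garc A i j := g_pos (A := A) hrange
  have hGim : 0 < Garc A i m := g_pos (A := A) hrange
  have contra : dist (p j) (p m) < dist (p i) (p k) := by
    rcases lt_or_gt_of_ne hjm_ne with hcase | hcase
    · have hsum2 : Garc A i j + Garc A j m = Garc A i m := g_sum hrange Aij Ajm Aim hcase
      have hgap1 : 0 < Garc A j m := g_pos (A := A) hrange
      have hgap2 : Garc A j m < Garc A i k := by linarith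
      have hd1 : dist (p j) (p m) ^ 2 = 2*r^2*(1 - Real.cos (Garc A j m)) := by
        rw [hdist j m, g_cos]
      have hd2 : dist (p i) (p k) ^ 2 = 2*r^2*(1 - Real.cos (Garc A i k)) := by
        rw [hdist i k, g_cos]
      have hcoslt : Real.cos (Garc A i k) < Real.cos (Garc A j m) :=
        Real.cos_lt_cos_of_nonneg_of_le_pi (le_of_lt hgap1) hG hgap2
      apply lt_of_pow_lt_pow_left₀ 2 dist_nonneg
      rw [hd1, hd2]
      have hmul := mul_lt_mul_of_pos_left hcoslt (show (0:ℝ) < 2*r^2 by positivity)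
      nlinarith
    · have hsum2 : Garc A i m + Garc A m j = Garc A i j := g_sum hrange Aim (fun hh => Ajm hh.symm) Aij hcase
      have hgap1 : 0 < Garc A m j := g_pos (A := A) hrange
      have hgap2 : Garc A m j < Garc A i k := by linarith
      have hd1 : dist (p m) (p j) ^ 2 = 2*r^2*(1 - Real.cos (Garc A m j)) := by
        rw [hdist m j, g_cos]
      have hd2 : dist (p i) (p k) ^ 2 = 2*r^2*(1 - Real.cos (Garc A i k)) := by
        rw [hdist i k, g_cos]
      rw [dist_comm]
      apply lt_of_pow_lt_pow_left₀ 2 dist_nonneg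
      rw [hd1, hd2]
      have hcoslt : Real.cos (Garc A i k) < Real.cos (Garc A m j) :=
        Real.cos_lt_cos_of_nonneg_of_le_pi (le_of_lt hgap1) hG hgap2
      have hmul := mul_lt_mul_of_pos_left hcoslt (show (0:ℝ) < 2*r^2 by positivity)
      nlinarith
  have h5 := hmin j
  rw [← hm] at h5
  linarith

/-- For `2n` distinct points on a common circle in counterclockwise order,
every minimum-length edge of a perfect non-crossing matching is a boundary edge. -/
theorem min_edge_is_boundary (n : ℕ) (hn : 0 < n) (p : ZMod (2 * n) → Pt)
    (hccw : OnCircleCCW (2 * n) p) (σ : ZMod (2 * n) → ZMod (2 * n))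
    (hσ : IsNCM (2 * n) p σ) (i : ZMod (2 * n))
    (hmin : ∀ j : ZMod (2 * n), dist (p i) (p (σ i)) ≤ dist (p j) (p (σ j))) :
    σ i = i + 1 ∨ σ i = i - 1 := by
  haveI : NeZero (2*n) := ⟨by omega⟩
  have hN : 1 < 2*n := by omega
  obtain ⟨⟨c, r, hr, hc⟩, hinj, hccw3⟩ := hccw
  obtain ⟨hinv, hfix, hcross⟩ := hσ
  have pi_pos := Real.pi_pos
  -- circle equation in coordinates
  have hsq : ∀ u, (p u 0 - c 0)^2 + (p u 1 - c 1)^2 = r^2 := by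
    intro u
    have h := hc u
    rw [EuclideanSpace.dist_eq] at h
    have hS : (0:ℝ) ≤ ∑ x : Fin 2, dist (p u x) (c x) ^ 2 := by positivity
    have h2 : (∑ x : Fin 2, dist (p u x) (c x) ^ 2) = r^2 := by
      rw [← h, Real.sq_sqrt hS]
    rw [Fin.sum_univ_two, Real.dist_eq, Real.dist_eq, sq_abs, sq_abs] at h2
    exact h2
  -- angle extraction
  have hexists : ∀ u, ∃ t : ℝ, p u 0 - c 0 = r * Real.cos t ∧ p u 1 - c 1 = r * Real.sin t := by
    intro u
    have hz : ‖(⟨p u 0 - c 0, p u 1 - c 1⟩ : ℂ)‖ = r := by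
      rw [Complex.norm_def, Complex.normSq_apply]
      have he : (⟨p u 0 - c 0, p u 1 - c 1⟩ : ℂ).re * (⟨p u 0 - c 0, p u 1 - c 1⟩ : ℂ).re +
          (⟨p u 0 - c 0, p u 1 - c 1⟩ : ℂ).im * (⟨p u 0 - c 0, p u 1 - c 1⟩ : ℂ).im = r^2 := by
        show (p u 0 - c 0) * (p u 0 - c 0) + (p u 1 - c 1) * (p u 1 - c 1) = r^2
        nlinarith [hsq u]
      rw [he, Real.sqrt_sq hr.le]
    have hz0 : (⟨p u 0 - c 0, p u 1 - c 1⟩ : ℂ) ≠ 0 := by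
      intro h
      rw [h] at hz
      have h0 : (0:ℝ) = r := by simpa using hz
      exact absurd h0 (ne_of_lt hr)
    refine ⟨Complex.arg (⟨p u 0 - c 0, p u 1 - c 1⟩ : ℂ), ?_, ?_⟩
    · have hco := Complex.cos_arg hz0
      rw [hz] at hco
      rw [show (⟨p u 0 - c 0, p u 1 - c 1⟩ : ℂ).re = p u 0 - c 0 from rfl] at hco
      rw [hco]
      field_simp
    · have hsi := Complex.sin_arg (⟨p u 0 - c 0, p u 1 - c 1⟩ : ℂ)
      rw [hz] at hsi
      rw [show (⟨p u 0 - c 0, p u 1 - c 1⟩ : ℂ).im = p u 1 - c 1 from rfl] at hsi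
      rw [hsi]
      field_simp
  choose θ hθ using hexists
  set A : ZMod (2*n) → ℝ :=
    fun u => θ u - θ 0 - 2*Real.pi * ⌊(θ u - θ 0)/(2*Real.pi)⌋ with hA
  have hzero : A 0 = 0 := by rw [hA]; simp
  have hfract : ∀ u, A u = 2*Real.pi * Int.fract ((θ u - θ 0)/(2*Real.pi)) := by
    intro u
    rw [hA, Int.fract]
    field_simp
  have hrange : ∀ u, 0 ≤ A u ∧ A u < 2*Real.pi := by
    intro u
    rw [hfract u]
    constructor
    · have := Int.fract_nonneg ((θ u - θ 0)/(2*Real.pi))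
      positivity
    · have h1 := Int.fract_lt_one ((θ u - θ 0)/(2*Real.pi))
      nlinarith
  have hcs : ∀ u, p u 0 = c 0 + r * Real.cos (θ 0 + A u) ∧
      p u 1 = c 1 + r * Real.sin (θ 0 + A u) := by
    intro u
    have he : θ 0 + A u = θ u + (-⌊(θ u - θ 0)/(2*Real.pi)⌋ : ℤ) * (2*Real.pi) := by
      rw [hA]
      push_cast
      ring
    constructor
    · rw [he, Real.cos_add_int_mul_two_pi]
      have := (hθ u).1
      linarith
    · rw [he, Real.sin_add_int_mul_two_pi]
      have := (hθ u).2
      linarith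
  clear_value A
  have hdet : ∀ u v w, det2 (p v - p u) (p w - p u) =
      r^2 * (Real.sin (A v - A u) + Real.sin (A w - A v) + Real.sin (A u - A w)) := by
    intro u v w
    simp only [det2, PiLp.sub_apply]
    rw [(hcs u).1, (hcs u).2, (hcs v).1, (hcs v).2, (hcs w).1, (hcs w).2]
    rw [show A v - A u = (θ 0 + A v) - (θ 0 + A u) by ring,
        show A w - A v = (θ 0 + A w) - (θ 0 + A v) by ring,
        show A u - A w = (θ 0 + A u) - (θ 0 + A w) by ring,
        Real.sin_sub, Real.sin_sub, Real.sin_sub]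
    ring
  have hdist : ∀ u v, dist (p u) (p v)^2 = 2*r^2*(1 - Real.cos (A v - A u)) := by
    intro u v
    have h0 : dist (p u) (p v)^2 = (p u 0 - p v 0)^2 + (p u 1 - p v 1)^2 := by
      rw [EuclideanSpace.dist_eq, Real.sq_sqrt (by positivity), Fin.sum_univ_two,
          Real.dist_eq, Real.dist_eq, sq_abs, sq_abs]
    rw [h0, (hcs u).1, (hcs u).2, (hcs v).1, (hcs v).2]
    rw [show A v - A u = (θ 0 + A v) - (θ 0 + A u) by ring, Real.cos_sub]
    nlinarith [Real.sin_sq_add_cos_sq (θ 0 + A u), Real.sin_sq_add_cos_sq (θ 0 + A v)]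
  have hpA : ∀ u v, A u = A v → p u = p v := by
    intro u v h
    apply pt_ext
    · have h1 := (hcs u).1
      have h2 := (hcs v).1
      rw [h1, h2, h]
    · have h1 := (hcs u).2
      have h2 := (hcs v).2
      rw [h1, h2, h]
  have hAne0 : ∀ u : ZMod (2*n), u ≠ 0 → 0 < A u := by
    intro u hu
    rcases lt_or_eq_of_le (hrange u).1 with h | h
    · exact h
    · exfalso
      apply hu
      apply hinj
      apply hpA
      rw [hzero, ← h]
  have hmono : ∀ u v : ZMod (2*n), u.val < v.val → A u < A v := by
    intro u v huv
    have hv0 : v ≠ 0 := by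
      intro h
      rw [h, ZMod.val_zero] at huv
      omega
    by_cases hu0 : u = 0
    · rw [hu0, hzero]
      exact hAne0 v hv0
    · have hposu : 0 < u.val := by
        rcases Nat.eq_zero_or_pos u.val with h | h
        · exact absurd ((ZMod.val_eq_zero _).1 h) hu0
        · exact h
      have h0u : (0 : ZMod (2*n)).val < u.val := by rw [ZMod.val_zero]; omega
      have hd := hccw3 0 u v h0u huv
      rw [hdet 0 u v, hzero, sub_zero, zero_sub, Real.sin_neg] at hd
      have base := sin_triple (A u) (A v - A u)
      rw [show A u + (A v - A u) = A v by ring] at base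
      have pu : 0 < A u := hAne0 u hu0
      have pv : 0 < A v := hAne0 v hv0
      have ru := (hrange u).2
      have rv := (hrange v).2
      have su : 0 < Real.sin (A u/2) :=
        Real.sin_pos_of_pos_of_lt_pi (by linarith) (by linarith)
      have sv : 0 < Real.sin (A v/2) :=
        Real.sin_pos_of_pos_of_lt_pi (by linarith) (by linarith)
      have hS : 0 < Real.sin (A u) + Real.sin (A v - A u) + -Real.sin (A v) := by
        by_contra hSn
        push_neg at hSn
        nlinarith [pow_pos hr 2]
      have smid : 0 < Real.sin ((A v - A u)/2) := by
        by_contra hsm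
        push_neg at hsm
        nlinarith [mul_pos su sv, mul_nonneg (mul_pos su sv).le (neg_nonneg.2 hsm)]
      by_contra hle
      push_neg at hle
      have hnp : Real.sin ((A v - A u)/2) ≤ 0 :=
        Real.sin_nonpos_of_nonpos_of_neg_pi_le (by linarith) (by linarith)
      linarith
  -- conclusion
  have hAik : A i ≠ A (σ i) := a_ne hmono (Ne.symm (hfix i))
  by_cases hG : Garc A i (σ i) ≤ Real.pi
  · left
    exact key hN p σ hr hzero hrange hmono hdet hdist hinv hfix hcross i hmin hG
  · right
    push_neg at hG
    have hrev := g_rev (A := A) hAik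
    have hG2 : Garc A (σ i) i ≤ Real.pi := by linarith
    have hmin2 : ∀ b, dist (p (σ i)) (p (σ (σ i))) ≤ dist (p b) (p (σ b)) := by
      intro b
      rw [hinv i, dist_comm (p (σ i)) (p i)]
      exact hmin b
    have hkey := key hN p σ hr hzero hrange hmono hdet hdist hinv hfix hcross (σ i) hmin2
      (by rw [hinv i]; exact hG2)
    rw [hinv i] at hkey
    exact eq_sub_of_add_eq hkey.symm
end
end

section
/- Let p_0, p_1, …, p_{2n−1} be 2n distinct points on a common circle in counterclockwise order, and let F ⊆ {0,1,…,2n−1} index a set of forbidden boundary edges (i ∈ F means the boundary edge {p_i, p_{i+1}} is forbidden; all other edges are allowed). Then there exists a perfect non-crossing matching of the points containing no forbidden edge if and only if F does not contain n cyclically consecutive indices, i.e., there is no j such that j, j+1, …, j+n−1 (all taken modulo 2n) all belong to F. -/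
noncomputable section

lemma det2_self (u : Pt) : det2 u u = 0 := by simp only [det2]; ring

lemma det2_zero_left (v : Pt) : det2 0 v = 0 := by
  simp [det2]

lemma det2_smul (w u : Pt) (a : ℝ) : det2 w (a • u) = a * det2 w u := by
  simp only [det2, PiLp.smul_apply, smul_eq_mul]; ring

lemma det2_add (w u v : Pt) : det2 w (u + v) = det2 w u + det2 w v := by
  simp only [det2, PiLp.add_apply]; ring

lemma det2_sub2 (w u v : Pt) : det2 w (u - v) = det2 w u - det2 w v := by
  simp only [det2, PiLp.sub_apply]; ring

lemma det2_cyc_s5 (a b c : Pt) : det2 (b - a) (c - a) = det2 (c - b) (a - b) := by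
  simp only [det2, PiLp.sub_apply]; ring

lemma det2_parallel {u v : Pt} (h : det2 u v = 0) (hu : u ≠ 0) : ∃ s : ℝ, v = s • u := by
  simp only [det2] at h
  by_cases h0 : u 0 = 0
  · have h1 : u 1 ≠ 0 := by
      intro h1; apply hu; ext i; fin_cases i <;> simp_all
    refine ⟨v 1 / u 1, ?_⟩
    ext i; fin_cases i <;> simp only [PiLp.smul_apply, smul_eq_mul, Fin.zero_eta, Fin.mk_one]
    · field_simp
      nlinarith [h]
    · field_simp
  · refine ⟨v 0 / u 0, ?_⟩
    ext i; fin_cases i <;> simp only [PiLp.smul_apply, smul_eq_mul, Fin.zero_eta, Fin.mk_one]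
    · field_simp
    · field_simp
      nlinarith [h]

/-- The reflection-based non-crossing matching on offsets `0..2n-1`. -/
def ncmRho (n a t q : ℕ) : ℕ :=
  if q < 2*t then 2*t-1-q else if q < 2*a then 2*(t+a)-1-q else 2*(n+a)-1-q

lemma ncmRho_spec {n a t : ℕ} (h1 : 1 ≤ t) (h2 : t ≤ a) (h3 : a ≤ n)
    {q : ℕ} (hq : q < 2*n) :
    ncmRho n a t q < 2*n ∧ ncmRho n a t (ncmRho n a t q) = q ∧ ncmRho n a t q ≠ q := by
  simp only [ncmRho]; split_ifs <;> omega

lemma ncmRho_adj {n a t : ℕ} (h1 : 1 ≤ t) (h2 : t ≤ a) (h3 : a ≤ n)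
    {q : ℕ} (hq : q < 2*n) (h : ncmRho n a t q = q + 1) :
    q = t-1 ∨ q = t+a-1 ∨ q = n+a-1 := by
  simp only [ncmRho] at h; split_ifs at h <;> omega

lemma ncmRho_wrap {n a t : ℕ} (h1 : 1 ≤ t) (h2 : t ≤ a) (h3 : a ≤ n) (hn : 0 < n)
    (h : ncmRho n a t (2*n - 1) = 0) : t = n := by
  simp only [ncmRho] at h; split_ifs at h <;> omega

lemma ncmRho_nc {n a t : ℕ} (h1 : 1 ≤ t) (h2 : t ≤ a) (h3 : a ≤ n)
    {q1 q2 : ℕ} (hq1 : q1 < 2*n) (hq2 : q2 < 2*n) :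
    ¬(q1 < q2 ∧ q2 < ncmRho n a t q1 ∧ ncmRho n a t q1 < ncmRho n a t q2) := by
  simp only [ncmRho]; split_ifs <;> omega

lemma ncm_mod2 (m k : ℕ) (h : m < 2*k) : m % k = if k ≤ m then m - k else m := by
  split_ifs with h1
  · rw [Nat.mod_eq_sub_mod h1, Nat.mod_eq_of_lt (by omega)]
  · exact Nat.mod_eq_of_lt (by omega)

lemma zmod_oval {N : ℕ} [NeZero N] (x y : ZMod N) :
    (y - x).val = if x.val ≤ y.val then y.val - x.val else y.val + N - x.val := by
  by_cases hx : x = 0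
  · subst hx; simp
  · have hx' : x.val ≠ 0 := fun h => hx ((ZMod.val_eq_zero x).1 h)
    have h1 := ZMod.val_lt x
    have h2 := ZMod.val_lt y
    rw [sub_eq_add_neg, ZMod.val_add, ZMod.neg_val, if_neg hx,
      ncm_mod2 _ _ (by omega)]
    split_ifs <;> omega

lemma zmod_addval {N : ℕ} [NeZero N] (β : ZMod N) {q : ℕ} (h : q < N) :
    ((β + (q : ZMod N)) - β).val = q := by
  rw [add_sub_cancel_left, ZMod.val_cast_of_lt h]

lemma zmod_self_off {N : ℕ} [NeZero N] (β x : ZMod N) :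
    β + (((x - β).val : ℕ) : ZMod N) = x := by
  rw [ZMod.natCast_zmod_val]; ring

lemma zmod_offdiff {N : ℕ} [NeZero N] (β : ZMod N) {a b : ℕ} (ha : a < N) (hb : b < N) :
    ((β + (b : ZMod N)) - (β + (a : ZMod N))).val = if a ≤ b then b - a else b + N - a := by
  rw [show (β + (b : ZMod N)) - (β + (a : ZMod N)) = (b : ZMod N) - (a : ZMod N) by ring,
    zmod_oval, ZMod.val_cast_of_lt ha, ZMod.val_cast_of_lt hb]


lemma zmod_rebase {N : ℕ} [NeZero N] (β x y : ZMod N) :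
    (y - x).val = if (x - β).val ≤ (y - β).val then (y - β).val - (x - β).val
      else (y - β).val + N - (x - β).val := by
  rw [show y - x = (y - β) - (x - β) by ring, zmod_oval]

section Geom
variable {N : ℕ} [NeZero N] {p : ZMod N → Pt}

/-- counterclockwise orientation of any cyclically ordered triple -/
lemma ncm_ccw3 (hccw : OnCircleCCW N p) (i j k : ZMod N)
    (h1 : 0 < (j - i).val) (h2 : (j - i).val < (k - i).val) :
    0 < det2 (p j - p i) (p k - p i) := by
  obtain ⟨-, -, H⟩ := hccw
  have vi := ZMod.val_lt i
  have vj := ZMod.val_lt j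
  have vk := ZMod.val_lt k
  have htri : (i.val < j.val ∧ j.val < k.val) ∨ (k.val < i.val ∧ i.val < j.val) ∨
      (j.val < k.val ∧ k.val < i.val) := by
    rw [zmod_oval] at h1 h2
    rw [zmod_oval] at h2
    split_ifs at h1 h2 <;> omega
  rcases htri with ⟨ha, hb⟩ | ⟨ha, hb⟩ | ⟨ha, hb⟩
  · exact H i j k ha hb
  · have := H k i j ha hb
    rw [det2_cyc_s5, det2_cyc_s5]; exact this
  · have := H j k i ha hb
    rw [det2_cyc_s5]; exact this

/-- chords on cyclically consecutive arcs are disjoint -/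
lemma ncm_quad_disjoint (hccw : OnCircleCCW N p) (v1 v2 v3 v4 : ZMod N)
    (h12 : 0 < (v2 - v1).val) (h23 : (v2 - v1).val < (v3 - v1).val)
    (h34 : (v3 - v1).val < (v4 - v1).val) :
    segment ℝ (p v1) (p v2) ∩ segment ℝ (p v3) (p v4) = ∅ := by
  have f3 : 0 < det2 (p v2 - p v1) (p v3 - p v1) := ncm_ccw3 hccw v1 v2 v3 h12 h23
  have f4 : 0 < det2 (p v2 - p v1) (p v4 - p v1) :=
    ncm_ccw3 hccw v1 v2 v4 h12 (lt_trans h23 h34)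
  rw [Set.eq_empty_iff_forall_notMem]
  rintro x ⟨hx1, hx2⟩
  obtain ⟨a, b, ha, hb, hab, hx⟩ := hx1
  obtain ⟨c, d, hc, hd, hcd, hy⟩ := hx2
  have ha' : a = 1 - b := by linarith
  have hc' : c = 1 - d := by linarith
  subst ha' hc'
  have e1 : det2 (p v2 - p v1) (x - p v1) = 0 := by
    rw [← hx, show (1-b) • p v1 + b • p v2 - p v1 = b • (p v2 - p v1) by module,
      det2_smul, det2_self, mul_zero]
  have e2 : 0 < det2 (p v2 - p v1) (x - p v1) := by
    rw [← hy, show (1-d) • p v3 + d • p v4 - p v1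
        = (1-d) • (p v3 - p v1) + d • (p v4 - p v1) by module,
      det2_add, det2_smul, det2_smul]
    rcases le_or_gt d (1/2) with h | h
    · nlinarith
    · nlinarith
  linarith

/-- interleaved chords intersect -/
lemma ncm_quad_cross (hccw : OnCircleCCW N p) (v1 v2 v3 v4 : ZMod N)
    (h12 : 0 < (v2 - v1).val) (h23 : (v2 - v1).val < (v3 - v1).val)
    (h34 : (v3 - v1).val < (v4 - v1).val)
    (hdisj : segment ℝ (p v1) (p v3) ∩ segment ℝ (p v2) (p v4) = ∅) : False := by
  set q1 := p v1 with hq1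
  set q2 := p v2 with hq2
  set q3 := p v3 with hq3
  set q4 := p v4 with hq4
  have h13 : 0 < (v3 - v1).val := lt_trans h12 h23
  have h14 : (v3 - v1).val < (v4 - v1).val := h34
  have fb : det2 (q3 - q1) (q2 - q1) < 0 := by
    have := ncm_ccw3 hccw v1 v2 v3 h12 h23
    rw [det2_swap] at this; linarith
  have fd : 0 < det2 (q3 - q1) (q4 - q1) := ncm_ccw3 hccw v1 v3 v4 h13 h14
  set τ : ℝ := -det2 (q3 - q1) (q2 - q1) / (det2 (q3 - q1) (q4 - q1) - det2 (q3 - q1) (q2 - q1))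
    with hτdef
  have hden : 0 < det2 (q3 - q1) (q4 - q1) - det2 (q3 - q1) (q2 - q1) := by linarith
  have hτ0 : 0 < τ := div_pos (by linarith) hden
  have hτ1 : τ < 1 := by
    rw [hτdef, div_lt_one hden]; linarith
  set x0 : Pt := (1 - τ) • q2 + τ • q4 with hx0def
  have hx0seg : x0 ∈ segment ℝ q2 q4 := ⟨1 - τ, τ, by linarith, le_of_lt hτ0, by ring, rfl⟩
  have hfx0 : det2 (q3 - q1) (x0 - q1) = 0 := by
    rw [hx0def, show (1-τ) • q2 + τ • q4 - q1 = (1-τ) • (q2 - q1) + τ • (q4 - q1) by module,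
      det2_add, det2_smul, det2_smul, hτdef]
    field_simp
    ring
  have hu : q3 - q1 ≠ 0 := by
    intro h; rw [h, det2_zero_left] at fb; linarith
  obtain ⟨s, hs⟩ := det2_parallel hfx0 hu
  have ga : 0 < det2 (q4 - q2) (q1 - q2) := by
    have := ncm_ccw3 hccw v1 v2 v4 h12 (lt_trans h23 h34)
    rwa [det2_cyc_s5] at this
  have gc : det2 (q4 - q2) (q3 - q2) < 0 := by
    have hb2 := ZMod.val_lt (v2 - v1)
    have hb3 := ZMod.val_lt (v3 - v1)
    have hb4 := ZMod.val_lt (v4 - v1)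
    have h2a : 0 < (v3 - v2).val := by
      rw [zmod_rebase v1]; split_ifs <;> omega
    have h2b : (v3 - v2).val < (v4 - v2).val := by
      have e3 := zmod_rebase v1 v2 v3
      have e4 := zmod_rebase v1 v2 v4
      rw [e3, e4]
      split_ifs <;> omega
    have := ncm_ccw3 hccw v2 v3 v4 h2a h2b
    rw [det2_swap] at this; linarith
  have hgx0 : det2 (q4 - q2) (x0 - q2) = 0 := by
    rw [hx0def, show (1-τ) • q2 + τ • q4 - q2 = τ • (q4 - q2) by module,
      det2_smul, det2_self, mul_zero]
  have key : det2 (q4 - q2) (q3 - q1) = det2 (q4 - q2) (q3 - q2) - det2 (q4 - q2) (q1 - q2) := by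
    rw [show (q3 - q1 : Pt) = (q3 - q2) - (q1 - q2) by module, det2_sub2]
  have hsplit : x0 - q2 = (q1 - q2) + s • (q3 - q1) := by
    rw [← hs]; module
  rw [hsplit, det2_add, det2_smul, key] at hgx0
  set GA := det2 (q4 - q2) (q1 - q2)
  set GC := det2 (q4 - q2) (q3 - q2)
  have hs0 : 0 < s := by
    by_contra h
    push_neg at h
    nlinarith [mul_nonneg (neg_nonneg.2 h) (le_of_lt ga), mul_nonneg (neg_nonneg.2 h) (neg_nonneg.2 (le_of_lt gc))]
  have hs1 : s < 1 := by
    by_contra h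
    push_neg at h
    nlinarith [mul_nonneg (by linarith : (0:ℝ) ≤ s - 1) (by linarith : (0:ℝ) ≤ GA - GC)]
  have hx0seg2 : x0 ∈ segment ℝ q1 q3 := by
    refine ⟨1 - s, s, by linarith, le_of_lt hs0, by ring, ?_⟩
    have hx0q : x0 = q1 + s • (q3 - q1) := by
      have := hs
      rw [sub_eq_iff_eq_add] at this
      rw [this]; abel
    rw [hx0q]; module
  rw [Set.eq_empty_iff_forall_notMem] at hdisj
  exact hdisj x0 ⟨hx0seg2, hx0seg⟩

end Geom

lemma ncm_construct {n : ℕ} (hn : 0 < n) {p : ZMod (2*n) → Pt} (hccw : OnCircleCCW (2*n) p)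
    (F : Set (ZMod (2*n))) (a t : ℕ) (β : ZMod (2*n)) (ht1 : 1 ≤ t) (hta : t ≤ a) (han : a ≤ n)
    (hD1 : β + ((t-1 : ℕ) : ZMod (2*n)) ∉ F)
    (hD2 : β + ((t+a-1 : ℕ) : ZMod (2*n)) ∉ F)
    (hD3 : β + ((n+a-1 : ℕ) : ZMod (2*n)) ∉ F)
    (hWrap : t = n → β - 1 ∉ F) :
    ∃ σ, IsNCM (2*n) p σ ∧ ∀ i ∈ F, σ i ≠ i + 1 := by
  haveI : NeZero (2*n) := ⟨by omega⟩
  set σ : ZMod (2*n) → ZMod (2*n) :=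
    fun x => β + (((ncmRho n a t (x - β).val) : ℕ) : ZMod (2*n)) with hσdef
  have hofflt : ∀ x : ZMod (2*n), (x - β).val < 2*n := fun x => ZMod.val_lt _
  have hspec : ∀ x : ZMod (2*n), ncmRho n a t (x-β).val < 2*n ∧
      ncmRho n a t (ncmRho n a t (x-β).val) = (x-β).val ∧ ncmRho n a t (x-β).val ≠ (x-β).val :=
    fun x => ncmRho_spec ht1 hta han (hofflt x)
  have hσoff : ∀ x : ZMod (2*n), (σ x - β).val = ncmRho n a t (x - β).val := by
    intro x
    rw [hσdef]
    exact zmod_addval β (hspec x).1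
  have hself : ∀ x : ZMod (2*n), x = β + (((x - β).val : ℕ) : ZMod (2*n)) :=
    fun x => (zmod_self_off β x).symm
  have hinv : ∀ x, σ (σ x) = x := by
    intro x
    have : σ (σ x) = β + (((ncmRho n a t (σ x - β).val) : ℕ) : ZMod (2*n)) := rfl
    rw [this, hσoff x, (hspec x).2.1]
    exact (hself x).symm
  have hfpf : ∀ x, σ x ≠ x := by
    intro x h
    have h2 := congrArg (fun z : ZMod (2*n) => (z - β).val) h
    simp only [hσoff x] at h2
    exact (hspec x).2.2 h2
  -- the core geometric disjointness, in offset form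
  have key : ∀ x1 x2 : ℕ, x1 < 2*n → x2 < 2*n → x1 < ncmRho n a t x1 → x2 < ncmRho n a t x2 →
      x1 ≠ x2 → x1 ≠ ncmRho n a t x2 → ncmRho n a t x1 ≠ x2 → ncmRho n a t x1 ≠ ncmRho n a t x2 →
      segment ℝ (p (β + (x1 : ZMod (2*n)))) (p (β + ((ncmRho n a t x1 : ℕ) : ZMod (2*n)))) ∩
      segment ℝ (p (β + (x2 : ZMod (2*n)))) (p (β + ((ncmRho n a t x2 : ℕ) : ZMod (2*n)))) = ∅ := by
    intro x1 x2 hx1 hx2 ho1 ho2 d1 d2 d3 d4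
    have hy1 : ncmRho n a t x1 < 2*n := (ncmRho_spec ht1 hta han hx1).1
    have hy2 : ncmRho n a t x2 < 2*n := (ncmRho_spec ht1 hta han hx2).1
    set y1 := ncmRho n a t x1
    set y2 := ncmRho n a t x2
    have hcases : (y1 < x2) ∨ (y2 < x1) ∨ (x1 < x2 ∧ y2 < y1) ∨ (x2 < x1 ∧ y1 < y2) := by
      have n1 := ncmRho_nc ht1 hta han hx1 hx2
      have n2 := ncmRho_nc ht1 hta han hx2 hx1
      omega
    rcases hcases with h | h | ⟨h, h'⟩ | ⟨h, h'⟩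
    · exact ncm_quad_disjoint hccw _ _ _ _
        (by rw [zmod_offdiff β hx1 hy1]; split_ifs <;> omega)
        (by rw [zmod_offdiff β hx1 hy1, zmod_offdiff β hx1 hx2]; split_ifs <;> omega)
        (by rw [zmod_offdiff β hx1 hx2, zmod_offdiff β hx1 hy2]; split_ifs <;> omega)
    · rw [Set.inter_comm]
      exact ncm_quad_disjoint hccw _ _ _ _
        (by rw [zmod_offdiff β hx2 hy2]; split_ifs <;> omega)
        (by rw [zmod_offdiff β hx2 hy2, zmod_offdiff β hx2 hx1]; split_ifs <;> omega)
        (by rw [zmod_offdiff β hx2 hx1, zmod_offdiff β hx2 hy1]; split_ifs <;> omega)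
    · have res := ncm_quad_disjoint hccw (β + (x2 : ZMod (2*n))) (β + (y2 : ZMod (2*n)))
        (β + (y1 : ZMod (2*n))) (β + (x1 : ZMod (2*n)))
        (by rw [zmod_offdiff β hx2 hy2]; split_ifs <;> omega)
        (by rw [zmod_offdiff β hx2 hy2, zmod_offdiff β hx2 hy1]; split_ifs <;> omega)
        (by rw [zmod_offdiff β hx2 hy1, zmod_offdiff β hx2 hx1]; split_ifs <;> omega)
      rw [show segment ℝ (p (β + ((y1:ℕ) : ZMod (2*n)))) (p (β + ((x1:ℕ) : ZMod (2*n))))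
          = segment ℝ (p (β + ((x1:ℕ) : ZMod (2*n)))) (p (β + ((y1:ℕ) : ZMod (2*n))))
          from segment_symm ℝ _ _] at res
      rw [Set.inter_comm] at res
      exact res
    · have res := ncm_quad_disjoint hccw (β + (x1 : ZMod (2*n))) (β + (y1 : ZMod (2*n)))
        (β + (y2 : ZMod (2*n))) (β + (x2 : ZMod (2*n)))
        (by rw [zmod_offdiff β hx1 hy1]; split_ifs <;> omega)
        (by rw [zmod_offdiff β hx1 hy1, zmod_offdiff β hx1 hy2]; split_ifs <;> omega)
        (by rw [zmod_offdiff β hx1 hy2, zmod_offdiff β hx1 hx2]; split_ifs <;> omega)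
      rw [show segment ℝ (p (β + ((y2:ℕ) : ZMod (2*n)))) (p (β + ((x2:ℕ) : ZMod (2*n))))
          = segment ℝ (p (β + ((x2:ℕ) : ZMod (2*n)))) (p (β + ((y2:ℕ) : ZMod (2*n))))
          from segment_symm ℝ _ _] at res
      exact res
  have hcross : ∀ i j : ZMod (2*n), j ≠ i → j ≠ σ i →
      segment ℝ (p i) (p (σ i)) ∩ segment ℝ (p j) (p (σ j)) = ∅ := by
    intro i j hji hjsi
    set q1 := (i - β).val with hq1d
    set q2 := (j - β).val with hq2d
    set r1 := ncmRho n a t q1 with hr1d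
    set r2 := ncmRho n a t q2 with hr2d
    have hq1 : q1 < 2*n := hofflt i
    have hq2 : q2 < 2*n := hofflt j
    have hr1 : r1 < 2*n := (hspec i).1
    have hr2 : r2 < 2*n := (hspec j).1
    have hrr1 : ncmRho n a t r1 = q1 := (hspec i).2.1
    have hrr2 : ncmRho n a t r2 = q2 := (hspec j).2.1
    have hne1 : q1 ≠ r1 := fun h => (hspec i).2.2 h.symm
    have hne2 : q2 ≠ r2 := fun h => (hspec j).2.2 h.symm
    have hcast : ∀ u v : ℕ, u < 2*n → v < 2*n → (u : ZMod (2*n)) = (v : ZMod (2*n)) → u = v := by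
      intro u v hu hv h
      have := congrArg ZMod.val h
      rwa [ZMod.val_cast_of_lt hu, ZMod.val_cast_of_lt hv] at this
    have hiq : i = β + ((q1:ℕ) : ZMod (2*n)) := hself i
    have hjq : j = β + ((q2:ℕ) : ZMod (2*n)) := hself j
    have hσi : σ i = β + ((r1:ℕ) : ZMod (2*n)) := rfl
    have hσj : σ j = β + ((r2:ℕ) : ZMod (2*n)) := rfl
    have d21 : q2 ≠ q1 := by
      intro h; apply hji; rw [hiq, hjq, h]
    have d2r1 : q2 ≠ r1 := by
      intro h; apply hjsi; rw [hjq, hσi, h]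
    have dr2q1 : r2 ≠ q1 := by
      intro h
      apply d2r1
      rw [← hrr2, h]
    have dr2r1 : r2 ≠ r1 := by
      intro h
      apply d21
      rw [← hrr2, ← hrr1, h]
    rw [hσi, hσj, hiq, hjq]
    rcases lt_or_gt_of_ne hne1 with o1 | o1 <;> rcases lt_or_gt_of_ne hne2 with o2 | o2
    · have := key q1 q2 hq1 hq2 o1 o2 (Ne.symm d21) (Ne.symm dr2q1)
        (fun h => d2r1 h.symm) (fun h => dr2r1 h.symm)
      exact this
    · -- q2 > r2 : use x2 = r2
      have := key q1 r2 hq1 hr2 o1 (by rw [hrr2]; exact o2) (fun h => dr2q1 h.symm)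
        (by rw [hrr2]; exact fun h => d21 h.symm) (fun h => dr2r1 h.symm)
        (by rw [hrr2]; exact fun h => d2r1 h.symm)
      rw [hrr2] at this
      rw [show segment ℝ (p (β + ((q2:ℕ) : ZMod (2*n)))) (p (β + ((r2:ℕ) : ZMod (2*n))))
          = segment ℝ (p (β + ((r2:ℕ) : ZMod (2*n)))) (p (β + ((q2:ℕ) : ZMod (2*n))))
          from segment_symm ℝ _ _]
      exact this
    · have := key r1 q2 hr1 hq2 (by rw [hrr1]; exact o1) o2
        (fun h => d2r1 h.symm) (fun h => dr2r1 h.symm)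
        (by rw [hrr1]; exact (Ne.symm d21)) (by rw [hrr1]; exact (Ne.symm dr2q1))
      rw [hrr1] at this
      rw [show segment ℝ (p (β + ((q1:ℕ) : ZMod (2*n)))) (p (β + ((r1:ℕ) : ZMod (2*n))))
          = segment ℝ (p (β + ((r1:ℕ) : ZMod (2*n)))) (p (β + ((q1:ℕ) : ZMod (2*n))))
          from segment_symm ℝ _ _]
      exact this
    · have := key r1 r2 hr1 hr2 (by rw [hrr1]; exact o1) (by rw [hrr2]; exact o2)
        (fun h => dr2r1 h.symm) (by rw [hrr2]; exact fun h => d2r1 h.symm)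
        (by rw [hrr1]; exact fun h => dr2q1 h.symm)
        (by rw [hrr1, hrr2]; exact fun h => d21 h.symm)
      rw [hrr1, hrr2] at this
      rw [show segment ℝ (p (β + ((q1:ℕ) : ZMod (2*n)))) (p (β + ((r1:ℕ) : ZMod (2*n))))
          = segment ℝ (p (β + ((r1:ℕ) : ZMod (2*n)))) (p (β + ((q1:ℕ) : ZMod (2*n))))
          from segment_symm ℝ _ _,
        show segment ℝ (p (β + ((q2:ℕ) : ZMod (2*n)))) (p (β + ((r2:ℕ) : ZMod (2*n))))
          = segment ℝ (p (β + ((r2:ℕ) : ZMod (2*n)))) (p (β + ((q2:ℕ) : ZMod (2*n))))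
          from segment_symm ℝ _ _]
      exact this
  refine ⟨σ, ⟨hinv, hfpf, hcross⟩, ?_⟩
  intro i hiF h
  set q := (i - β).val with hqd
  have hq : q < 2*n := hofflt i
  have hiq : i = β + ((q:ℕ) : ZMod (2*n)) := hself i
  have heq : ((ncmRho n a t q : ℕ) : ZMod (2*n)) = ((q:ℕ) : ZMod (2*n)) + 1 := by
    have h' : β + ((ncmRho n a t q : ℕ) : ZMod (2*n)) = β + (((q:ℕ) : ZMod (2*n)) + 1) := by
      rw [← add_assoc, ← hiq]
      exact h
    exact add_left_cancel h'
  by_cases hqw : q = 2*n - 1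
  · have hcast : ((q : ℕ) : ZMod (2*n)) + 1 = 0 := by
      rw [hqw]
      rw [show ((2*n - 1 : ℕ) : ZMod (2*n)) + 1 = ((2*n - 1 + 1 : ℕ) : ZMod (2*n)) by push_cast; ring,
        Nat.sub_add_cancel (by omega), ZMod.natCast_self]
    have h0 : ncmRho n a t q = 0 := by
      have := congrArg ZMod.val (heq.trans hcast)
      rwa [ZMod.val_cast_of_lt (ncmRho_spec ht1 hta han hq).1, ZMod.val_zero] at this
    have htn : t = n := ncmRho_wrap ht1 hta han hn (hqw ▸ h0)
    apply hWrap htn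
    have : i = β - 1 := by
      rw [hiq, show ((q:ℕ) : ZMod (2*n)) = -1 from by
        have := hcast
        linear_combination this - (1 : ZMod (2*n)) * 0]
      ring
    rwa [← this]
  · have hq1 : q + 1 < 2*n := by omega
    have hadj : ncmRho n a t q = q + 1 := by
      have : ((ncmRho n a t q : ℕ) : ZMod (2*n)) = ((q + 1 : ℕ) : ZMod (2*n)) := by
        rw [heq]; push_cast; ring
      have := congrArg ZMod.val this
      rwa [ZMod.val_cast_of_lt (ncmRho_spec ht1 hta han hq).1, ZMod.val_cast_of_lt hq1] at this
    rcases ncmRho_adj ht1 hta han hq hadj with h' | h' | h'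
    · exact hD1 (by rw [← h', ← hiq]; exact hiF)
    · exact hD2 (by rw [← h', ← hiq]; exact hiF)
    · exact hD3 (by rw [← h', ← hiq]; exact hiF)


/-- Let `F` index a set of forbidden boundary edges (`i ∈ F` means the
boundary edge `{p i, p (i+1)}` is forbidden). A perfect non-crossing matching avoiding all
forbidden edges exists iff `F` does not contain `n` cyclically consecutive indices. -/
theorem matching_avoiding_forbidden_iff (n : ℕ) (hn : 0 < n) (p : ZMod (2 * n) → Pt)
    (hccw : OnCircleCCW (2 * n) p) (F : Set (ZMod (2 * n))) :
    (∃ σ, IsNCM (2 * n) p σ ∧ ∀ i ∈ F, σ i ≠ i + 1) ↔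
      ¬ ∃ j : ZMod (2 * n), ∀ k : ℕ, k < n → j + (k : ZMod (2 * n)) ∈ F := by
  haveI : NeZero (2 * n) := ⟨by omega⟩
  haveI : Fact (1 < 2 * n) := ⟨by omega⟩
  classical
  constructor
  · rintro ⟨σ, ⟨hinv, hfpf, hdisj⟩, havoid⟩ ⟨j, hrun⟩
    have hσinj : Function.Injective σ := Function.LeftInverse.injective hinv
    have hex : ∃ x : ZMod (2 * n), (x - j).val ≤ n ∧ (σ x - j).val ≤ n := by
      by_contra hc
      push_neg at hc
      set W : Finset (ZMod (2 * n)) := (Finset.range (n + 1)).image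
        (fun k : ℕ => j + (k : ZMod (2 * n))) with hW
      have hmemW : ∀ x : ZMod (2 * n), x ∈ W ↔ (x - j).val ≤ n := by
        intro x
        simp only [hW, Finset.mem_image, Finset.mem_range]
        constructor
        · rintro ⟨k, hk, rfl⟩
          rw [zmod_addval j (show k < 2 * n by omega)]
          omega
        · intro hx
          exact ⟨(x - j).val, by omega, zmod_self_off j x⟩
      have hinjW : Set.InjOn (fun k : ℕ => j + (k : ZMod (2 * n))) (Finset.range (n + 1)) := by
        intro u hu v hv huv
        simp only [Finset.coe_range, Set.mem_Iio] at hu hv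
        have huv' : j + (u : ZMod (2*n)) = j + (v : ZMod (2*n)) := huv
        have h2 : ((j + (u : ZMod (2*n))) - j).val = ((j + (v : ZMod (2*n))) - j).val := by
          rw [huv']
        rwa [zmod_addval j (show u < 2 * n by omega),
          zmod_addval j (show v < 2 * n by omega)] at h2
      have hWcard : W.card = n + 1 := by
        rw [hW, Finset.card_image_of_injOn hinjW, Finset.card_range]
      have himg : W.image σ ⊆ Wᶜ := by
        intro z hz
        simp only [Finset.mem_image] at hz
        obtain ⟨x, hx, rfl⟩ := hz
        rw [Finset.mem_compl]
        intro hzW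
        have h1 := (hmemW x).1 hx
        have h2 := (hmemW (σ x)).1 hzW
        have := hc x h1
        omega
      have h1 : (W.image σ).card = W.card := Finset.card_image_of_injective W hσinj
      have h2 : (W.image σ).card ≤ Wᶜ.card := Finset.card_le_card himg
      have h3 : Wᶜ.card = Fintype.card (ZMod (2 * n)) - W.card := Finset.card_compl W
      rw [ZMod.card] at h3
      omega
    have hgap : ∃ g, ∃ x : ZMod (2 * n), (x - j).val ≤ n ∧ (σ x - j).val ≤ n ∧
        (σ x - j).val = (x - j).val + g ∧ 1 ≤ g := by
      obtain ⟨x, hx1, hx2⟩ := hex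
      have hne : (x - j).val ≠ (σ x - j).val := by
        intro h
        apply hfpf x
        have h2 : σ x = j + (((σ x - j).val : ℕ) : ZMod (2 * n)) := (zmod_self_off j _).symm
        rw [h2, ← h]
        exact zmod_self_off j x
      rcases lt_or_gt_of_ne hne with h | h
      · exact ⟨(σ x - j).val - (x - j).val, x, hx1, hx2, by omega, by omega⟩
      · refine ⟨(x - j).val - (σ x - j).val, σ x, hx2, ?_, ?_, by omega⟩
        · rw [hinv x]; exact hx1
        · rw [hinv x]; omega
    obtain ⟨x, hx1, hx2, hx3, hg1⟩ := Nat.find_spec hgap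
    set g := Nat.find hgap with hgdef
    set u := (x - j).val with hudef
    have hxj : x = j + ((u : ℕ) : ZMod (2 * n)) := (zmod_self_off j x).symm
    by_cases hg2 : g = 1
    · -- adjacent pair inside forbidden run
      have hσx : σ x = x + 1 := by
        have h2 : σ x = j + (((u + 1 : ℕ)) : ZMod (2 * n)) := by
          have := (zmod_self_off j (σ x)).symm
          rwa [hx3, hg2] at this
        rw [h2, hxj]
        push_cast
        ring
      have hxF : x ∈ F := by
        rw [hxj]
        exact hrun u (by omega)
      exact havoid x hxF hσx
    · -- a smaller gap exists: contradiction with minimality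
      have hg2' : 2 ≤ g := by omega
      set y := x + 1 with hydef
      have hyoff : (y - j).val = u + 1 := by
        have h2 : y = j + ((u + 1 : ℕ) : ZMod (2 * n)) := by
          rw [hydef, hxj]; push_cast; ring
        rw [h2, zmod_addval j (show u + 1 < 2 * n by omega)]
      have hyx : y ≠ x := by
        intro h
        have h2 := congrArg (fun z : ZMod (2 * n) => (z - j).val) h
        simp only [hyoff] at h2
        omega
      have hyσx : y ≠ σ x := by
        intro h
        have h2 := congrArg (fun z : ZMod (2 * n) => (z - j).val) h
        simp only [hyoff, hx3] at h2
        omega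
      have hyvx : (y - x).val = 1 := by
        rw [show y - x = 1 by rw [hydef]; ring]
        exact ZMod.val_one (2 * n)
      have hσxvx : (σ x - x).val = g := by
        rw [zmod_rebase j, hx3]
        split_ifs <;> omega
      set h' := (σ y - x).val with hh'def
      have hcr : ¬ (g < h') := by
        intro hlt
        exact ncm_quad_cross hccw x y (σ x) (σ y) (by omega) (by omega)
          (by omega) (hdisj x y hyx hyσx)
      have e1 : σ y = x + ((h' : ℕ) : ZMod (2 * n)) := by
        rw [hh'def]
        exact (zmod_self_off x (σ y)).symm
      have e2 : σ x = x + ((g : ℕ) : ZMod (2 * n)) := by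
        rw [← hσxvx]
        exact (zmod_self_off x (σ x)).symm
      have hne_g : h' ≠ g := by
        intro h
        exact hyx (hσinj (by rw [e1, e2, h]))
      have hne_0 : h' ≠ 0 := by
        intro h
        have h2 : σ y = x := by rw [e1, h, Nat.cast_zero, add_zero]
        apply hyσx
        rw [← h2, hinv y]
      have hne_1 : h' ≠ 1 := by
        intro h
        apply hfpf y
        rw [e1, h, Nat.cast_one, hydef]
      have hw : (σ y - j).val = u + h' := by
        have e := zmod_rebase j x (σ y)
        rw [← hh'def, ← hudef] at e
        have hb := ZMod.val_lt (σ y - j)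
        split_ifs at e <;> omega
      have := Nat.find_min hgap (show h' - 1 < g by omega)
      apply this
      exact ⟨y, by omega, by omega, by omega, by omega⟩
  · intro H
    push_neg at H
    by_cases hanti : ∃ s : ZMod (2 * n), s ∉ F ∧ s + ((n : ℕ) : ZMod (2 * n)) ∉ F
    · -- rainbow matching
      obtain ⟨s, hs1, hs2⟩ := hanti
      apply ncm_construct hn hccw F n n (s + 1) hn le_rfl le_rfl
      · -- β + (n-1) = s + n
        rwa [show s + 1 + ((n - 1 : ℕ) : ZMod (2 * n)) = s + ((n : ℕ) : ZMod (2 * n)) by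
          push_cast [Nat.cast_sub (show 1 ≤ n by omega)]; ring]
      · rwa [show s + 1 + ((n + n - 1 : ℕ) : ZMod (2 * n)) = s by
          push_cast [Nat.cast_sub (show 1 ≤ n + n by omega)]
          rw [show ((n : ZMod (2*n)) + n) = ((2 * n : ℕ) : ZMod (2 * n)) by push_cast; ring,
            ZMod.natCast_self]
          ring]
      · rwa [show s + 1 + ((n + n - 1 : ℕ) : ZMod (2 * n)) = s by
          push_cast [Nat.cast_sub (show 1 ≤ n + n by omega)]
          rw [show ((n : ZMod (2*n)) + n) = ((2 * n : ℕ) : ZMod (2 * n)) by push_cast; ring,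
            ZMod.natCast_self]
          ring]
      · intro _
        rwa [show s + 1 - 1 = s by ring]
    · -- no antipodal free pair
      push_neg at hanti
      have hnext : ∀ x : ZMod (2 * n), x ∉ F →
          ∃ m : ℕ, 1 ≤ m ∧ m ≤ n - 1 ∧ x + ((m : ℕ) : ZMod (2 * n)) ∉ F := by
        intro x hx
        obtain ⟨k, hk, hkF⟩ := H (x + 1)
        refine ⟨k + 1, by omega, ?_, ?_⟩
        · -- k + 1 ≤ n - 1
          by_contra hc
          have hkn : k + 1 = n := by omega
          apply hkF
          have hcast : ((k + 1 : ℕ) : ZMod (2*n)) = ((n : ℕ) : ZMod (2*n)) :=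
            congrArg (fun m : ℕ => (m : ZMod (2*n))) hkn
          rw [show x + 1 + ((k : ℕ) : ZMod (2*n)) = x + ((k + 1 : ℕ) : ZMod (2 * n)) by
            push_cast; ring, hcast]
          exact hanti x hx
        · rwa [show x + ((k + 1 : ℕ) : ZMod (2 * n)) = x + 1 + ((k : ℕ) : ZMod (2*n)) by
            push_cast; ring]
      obtain ⟨k0, hk0, hd1F⟩ := H 0
      set d1 : ZMod (2 * n) := 0 + ((k0 : ℕ) : ZMod (2 * n)) with hd1def
      have hC2ne : ((Finset.range n).filter
          (fun m => 1 ≤ m ∧ (d1 + ((m : ℕ) : ZMod (2 * n))) ∉ F)).Nonempty := by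
        obtain ⟨m, hm1, hm2, hm3⟩ := hnext d1 hd1F
        exact ⟨m, Finset.mem_filter.2 ⟨Finset.mem_range.2 (by omega), hm1, hm3⟩⟩
      set C2 := (Finset.range n).filter
          (fun m => 1 ≤ m ∧ (d1 + ((m : ℕ) : ZMod (2 * n))) ∉ F) with hC2def
      set a := C2.max' hC2ne with hadef
      have haC2 := C2.max'_mem hC2ne
      obtain ⟨har, ha1, hd2F⟩ := Finset.mem_filter.1 haC2
      have han' := Finset.mem_range.1 har
      set d2 : ZMod (2 * n) := d1 + ((a : ℕ) : ZMod (2 * n)) with hd2def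
      obtain ⟨γ, hγ1, hγn, hγF⟩ := hnext d2 hd2F
      have hag : n + 1 ≤ a + γ := by
        rcases Nat.lt_or_ge (a + γ) n with hlt | hge
        · -- a + γ ≤ n - 1 contradicts maximality
          exfalso
          have hmem : a + γ ∈ C2 := by
            rw [hC2def, Finset.mem_filter, Finset.mem_range]
            refine ⟨by omega, by omega, ?_⟩
            rwa [show d1 + ((a + γ : ℕ) : ZMod (2 * n)) = d2 + ((γ : ℕ) : ZMod (2*n)) by
              rw [hd2def]; push_cast; ring]
          have := C2.le_max' _ hmem
          rw [← hadef] at this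
          omega
        · rcases Nat.eq_or_lt_of_le hge with heq | hlt
          · exfalso
            apply hγF
            have hcast : ((n : ℕ) : ZMod (2*n)) = ((a + γ : ℕ) : ZMod (2*n)) :=
              congrArg (fun m : ℕ => (m : ZMod (2*n))) heq
            rw [show d2 + ((γ : ℕ) : ZMod (2*n)) = d1 + ((a + γ : ℕ) : ZMod (2*n)) by
              rw [hd2def]; push_cast; ring, ← hcast]
            exact hanti d1 hd1F
          · omega
      -- second max step
      have hC3ne : ((Finset.range n).filter
          (fun m => 1 ≤ m ∧ (d2 + ((m : ℕ) : ZMod (2 * n))) ∉ F)).Nonempty :=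
        ⟨γ, Finset.mem_filter.2 ⟨Finset.mem_range.2 (by omega), hγ1, hγF⟩⟩
      set C3 := (Finset.range n).filter
          (fun m => 1 ≤ m ∧ (d2 + ((m : ℕ) : ZMod (2 * n))) ∉ F) with hC3def
      set b := C3.max' hC3ne with hbdef
      have hbC3 := C3.max'_mem hC3ne
      obtain ⟨hbr, hb1, hd3F⟩ := Finset.mem_filter.1 hbC3
      have hbn' := Finset.mem_range.1 hbr
      have hbγ : γ ≤ b := by
        have : γ ∈ C3 := Finset.mem_filter.2 ⟨Finset.mem_range.2 (by omega), hγ1, hγF⟩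
        have := C3.le_max' _ this
        rw [← hbdef] at this
        omega
      set d3 : ZMod (2 * n) := d2 + ((b : ℕ) : ZMod (2 * n)) with hd3def
      have hab : n + 1 ≤ a + b := by omega
      set t := n - b with htdef
      have ht1 : 1 ≤ t := by omega
      have hta : t ≤ a := by omega
      have han : a ≤ n := by omega
      set β : ZMod (2 * n) := d1 + 1 - ((t : ℕ) : ZMod (2 * n)) with hβdef
      apply ncm_construct hn hccw F a t β ht1 hta han
      · rwa [show β + ((t - 1 : ℕ) : ZMod (2 * n)) = d1 by
          rw [hβdef]
          push_cast [Nat.cast_sub (show 1 ≤ t by omega)]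
          ring]
      · rwa [show β + ((t + a - 1 : ℕ) : ZMod (2 * n)) = d2 by
          rw [hβdef, hd2def]
          push_cast [Nat.cast_sub (show 1 ≤ t + a by omega)]
          ring]
      · rwa [show β + ((n + a - 1 : ℕ) : ZMod (2 * n)) = d3 by
          rw [hβdef, hd3def, hd2def, htdef]
          push_cast [Nat.cast_sub (show 1 ≤ n + a by omega),
            Nat.cast_sub (show b ≤ n by omega)]
          ring]
      · intro htn
        exfalso
        omega
end
end
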